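/- arXiv:1402.1582 — 5 statements merged into one kernel-verified Lean document; each statement's English description precedes it below -/
import Mathlib

section
/- Let β > 1 be a quadratic unit (β² = pβ + 1 with integer p ≥ 1, or β² = pβ − 1 with integer p ≥ 3), let m ∈ ℕ with m ≥ ⌊β⌋, and let Ω = ( −mβ/(β² − 1), mβ²/(β² − 1) ) in the first case and Ω = [ 0, mβ/(β − 1) ) in the second case. Then, unless m = ⌊β⌋ and β² = pβ + 1, there exist infinitely many y > 0 such that y ∈ Σ_β(Ω) and y ∉ X^m(β). -/
/-- The spectrum `X^m(β)`: sums `∑_{j=0}^n a_j β^j` with digits `a_j ∈ {0,1,…,m}`. -/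
def Xspec (β : ℝ) (m : ℕ) : Set ℝ :=
  {x | ∃ (n : ℕ) (c : ℕ → ℕ), (∀ j ≤ n, c j ≤ m) ∧
    x = ∑ j ∈ Finset.range (n + 1), (c j : ℝ) * β ^ j}

/-- The cut-and-project set `Σ_β(Ω) = { x ∈ ℤ + ℤβ : x′ ∈ Ω }`, where `x′ = a + bβ′`
for `x = a + bβ`. -/
def sigmaCP (β β' : ℝ) (Ω : Set ℝ) : Set ℝ :=
  {x | ∃ a b : ℤ, x = (a : ℝ) + (b : ℝ) * β ∧ (a : ℝ) + (b : ℝ) * β' ∈ Ω}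

namespace CutProject

def XspecN (β : ℝ) (m n : ℕ) : Set ℝ :=
  {x | ∃ c : ℕ → ℕ, (∀ j ≤ n, c j ≤ m) ∧
    x = ∑ j ∈ Finset.range (n + 1), (c j : ℝ) * β ^ j}

lemma mem_Xspec_iff {β : ℝ} {m : ℕ} {x : ℝ} : x ∈ Xspec β m ↔ ∃ n, x ∈ XspecN β m n :=
  Iff.rfl

lemma zero_mem_Xspec (β : ℝ) (m : ℕ) : (0 : ℝ) ∈ Xspec β m := by
  exact ⟨0, fun _ => 0, fun _ _ => Nat.zero_le m, by simp⟩

lemma XspecN_nonneg {β : ℝ} (hβ : 0 ≤ β) {m n : ℕ} {x : ℝ} (hx : x ∈ XspecN β m n) :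
    0 ≤ x := by
  obtain ⟨c, -, rfl⟩ := hx
  exact Finset.sum_nonneg fun j _ => mul_nonneg (Nat.cast_nonneg _) (pow_nonneg hβ j)

lemma Xspec_nonneg {β : ℝ} (hβ : 0 ≤ β) {m : ℕ} {x : ℝ} (hx : x ∈ Xspec β m) : 0 ≤ x := by
  obtain ⟨n, hn⟩ := mem_Xspec_iff.1 hx
  exact XspecN_nonneg hβ hn

lemma Xspec_eq_zero_or_one_le {β : ℝ} (hβ : 1 ≤ β) {m : ℕ} {x : ℝ}
    (hx : x ∈ Xspec β m) : x = 0 ∨ 1 ≤ x := by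
  obtain ⟨n, c, -, rfl⟩ := hx
  by_cases h : ∀ j ∈ Finset.range (n + 1), (c j : ℝ) * β ^ j = 0
  · exact Or.inl (Finset.sum_eq_zero h)
  · push_neg at h
    obtain ⟨j0, hj0, hne⟩ := h
    right
    have hc : 1 ≤ (c j0 : ℝ) := by
      have : c j0 ≠ 0 := by
        intro h0; exact hne (by simp [h0])
      exact_mod_cast Nat.one_le_iff_ne_zero.2 this
    have h1 : (1 : ℝ) ≤ (c j0 : ℝ) * β ^ j0 := by
      have hp : (1 : ℝ) ≤ β ^ j0 := one_le_pow₀ hβ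
      nlinarith
    refine h1.trans (Finset.single_le_sum (f := fun j => (c j : ℝ) * β ^ j) ?_ hj0)
    intro i _
    exact mul_nonneg (Nat.cast_nonneg _) (pow_nonneg (le_trans zero_le_one hβ) i)

lemma XspecN_zero_elim {β : ℝ} {m : ℕ} {x : ℝ} (hx : x ∈ XspecN β m 0) :
    ∃ d : ℕ, d ≤ m ∧ x = d := by
  obtain ⟨c, hc, rfl⟩ := hx
  exact ⟨c 0, hc 0 le_rfl, by simp⟩

lemma XspecN_peel {β : ℝ} {m n : ℕ} {x : ℝ} (hx : x ∈ XspecN β m (n + 1)) :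
    ∃ d : ℕ, d ≤ m ∧ ∃ z ∈ XspecN β m n, x = d + β * z := by
  obtain ⟨c, hc, rfl⟩ := hx
  refine ⟨c 0, hc 0 (Nat.zero_le _), ∑ j ∈ Finset.range (n + 1), (c (j + 1) : ℝ) * β ^ j,
    ⟨fun j => c (j + 1), fun j hj => hc (j + 1) (by omega), rfl⟩, ?_⟩
  have hcong : ∀ j ∈ Finset.range (n + 1),
      (c (j + 1) : ℝ) * β ^ (j + 1) = β * ((c (j + 1) : ℝ) * β ^ j) := fun j _ => by ring
  rw [Finset.sum_range_succ' (fun j => (c j : ℝ) * β ^ j) (n + 1),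
    Finset.sum_congr rfl hcong, ← Finset.mul_sum]
  simp [add_comm]

lemma Xspec_peel {β : ℝ} {m : ℕ} {x : ℝ} (hx : x ∈ Xspec β m) :
    ∃ d : ℕ, d ≤ m ∧ ∃ z ∈ Xspec β m, x = d + β * z := by
  obtain ⟨n, hn⟩ := mem_Xspec_iff.1 hx
  cases n with
  | zero =>
    obtain ⟨d, hd, rfl⟩ := XspecN_zero_elim hn
    exact ⟨d, hd, 0, zero_mem_Xspec β m, by simp⟩
  | succ n =>
    obtain ⟨d, hd, z, hz, hxz⟩ := XspecN_peel hn
    exact ⟨d, hd, z, mem_Xspec_iff.2 ⟨n, hz⟩, hxz⟩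

end CutProject

namespace CutProject

lemma beta_mul_int_ne {β : ℝ} (hirr : Irrational β) {s t : ℤ} (hs : s ≠ 0) :
    (s : ℝ) * β ≠ (t : ℝ) := by
  intro h
  have hsR : (s : ℝ) ≠ 0 := Int.cast_ne_zero.2 hs
  have : β = (((t : ℚ) / (s : ℚ) : ℚ) : ℝ) := by
    push_cast
    field_simp
    linarith [h]
  exact hirr ⟨_, this.symm⟩

lemma int_combo_eq_zero {β : ℝ} (hirr : Irrational β) {a b : ℤ}
    (h : (a : ℝ) + (b : ℝ) * β = 0) : a = 0 ∧ b = 0 := by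
  by_cases hb : b = 0
  · subst hb
    simp at h
    exact ⟨by exact_mod_cast h, rfl⟩
  · exfalso
    exact beta_mul_int_ne hirr hb (t := -a) (by push_cast; linarith)

lemma coords_unique {β : ℝ} (hirr : Irrational β) {a b c d : ℤ}
    (h : (a : ℝ) + (b : ℝ) * β = (c : ℝ) + (d : ℝ) * β) : a = c ∧ b = d := by
  have h0 : ((a - c : ℤ) : ℝ) + ((b - d : ℤ) : ℝ) * β = 0 := by push_cast; linarith
  have := int_combo_eq_zero hirr h0
  omega

lemma beta_irrational {β : ℝ} {p e : ℤ} (hβ : 1 < β)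
    (hcase : (e = 1 ∧ 1 ≤ p) ∨ (e = -1 ∧ 3 ≤ p)) (hq : β ^ 2 = p * β + e) :
    Irrational β := by
  have hβ0 : (0 : ℝ) < β := by linarith
  have hxpos : 0 < 2 * β - p := by
    rcases hcase with ⟨he, hp⟩ | ⟨he, hp⟩
    · subst he
      push_cast at hq
      have hβp : (p : ℝ) < β := by nlinarith [mul_pos hβ0 (sub_pos.2 hβ)]
      linarith
    · subst he
      push_cast at hq
      have hβp : (p : ℝ) - 1 < β := by nlinarith
      have hp' : (3 : ℝ) ≤ (p : ℝ) := by exact_mod_cast hp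
      linarith
  have hx2 : (2 * β - p) ^ 2 = ((p ^ 2 + 4 * e : ℤ) : ℝ) := by push_cast; nlinarith [hq]
  have hirrx : Irrational (2 * β - p) := by
    refine irrational_nrt_of_notint_nrt 2 (p ^ 2 + 4 * e) hx2 ?_ (by norm_num)
    rintro ⟨y, hy⟩
    have hyR : (y : ℝ) ^ 2 = ((p ^ 2 + 4 * e : ℤ) : ℝ) := by rw [← hy]; exact hx2
    have hy2 : y ^ 2 = p ^ 2 + 4 * e := by exact_mod_cast hyR
    have hypos : 0 < y := by
      have : (0 : ℝ) < (y : ℝ) := by rw [← hy]; exact hxpos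
      exact_mod_cast this
    rcases hcase with ⟨he, hp⟩ | ⟨he, hp⟩
    · subst he
      have h1 : p < y := by nlinarith
      have h2 : y < p + 2 := by nlinarith
      have : y = p + 1 := by omega
      subst this
      ring_nf at hy2
      omega
    · subst he
      have h1 : p - 1 < y := by nlinarith
      have h2 : y < p := by nlinarith
      omega
  have h2 : Irrational ((2 * β - (p : ℝ) + (p : ℤ)) / ((2 : ℤ) : ℝ)) := by
    have := (hirrx.add_intCast p).div_intCast (by norm_num : (2 : ℤ) ≠ 0)
    simpa using this
  have heq : (2 * β - (p : ℝ) + (p : ℤ)) / ((2 : ℤ) : ℝ) = β := by push_cast; ring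
  rwa [heq] at h2

end CutProject
namespace CutProject

section Case2

variable {β : ℝ} {p : ℤ} {m : ℕ}

lemma case2_conj_bound (hβ : 1 < β) (hq : β ^ 2 = (p : ℝ) * β - 1) (hirr : Irrational β)
    (hm1 : 1 ≤ m) :
    ∀ n : ℕ, ∀ x ∈ XspecN β m n, ∀ a b : ℤ, x = (a : ℝ) + (b : ℝ) * β →
      0 ≤ (a : ℝ) + (b : ℝ) * ((p : ℝ) - β) ∧
        (a : ℝ) + (b : ℝ) * ((p : ℝ) - β) < (m : ℝ) * β / (β - 1) := by
  have hβ0 : (0 : ℝ) < β := by linarith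
  have hβne : β ≠ 0 := ne_of_gt hβ0
  have hb1 : (0 : ℝ) < β - 1 := by linarith
  have hinv : β * ((p : ℝ) - β) = 1 := by linear_combination -hq
  have h'pos : 0 < (p : ℝ) - β := by nlinarith
  have h'lt1 : (p : ℝ) - β < 1 := by nlinarith
  have hm0 : (1 : ℝ) ≤ (m : ℝ) := by exact_mod_cast hm1
  have hSm : (m : ℝ) + ((p : ℝ) - β) * ((m : ℝ) * β / (β - 1)) = (m : ℝ) * β / (β - 1) := by
    field_simp
    linear_combination (-1 : ℝ) * hq
  intro n
  induction n with
  | zero =>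
    intro x hx a b hab
    obtain ⟨d, hd, hxd⟩ := XspecN_zero_elim hx
    rw [hxd] at hab
    have hco := coords_unique hirr (a := a) (b := b) (c := (d : ℤ)) (d := 0)
      (by push_cast; push_cast at hab; linarith)
    obtain ⟨ha, hb⟩ := hco
    subst ha; subst hb
    push_cast
    constructor
    · positivity
    · have hdm : (d : ℝ) ≤ (m : ℝ) := by exact_mod_cast hd
      have : (m : ℝ) < (m : ℝ) * β / (β - 1) := by
        rw [lt_div_iff₀ hb1]; nlinarith
      simpa using lt_of_le_of_lt hdm this
  | succ n ih =>
    intro x hx a b hab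
    obtain ⟨d, hd, z, hz, hxz⟩ := XspecN_peel hx
    set A : ℤ := b + p * (a - d) with hA
    set B : ℤ := -(a - d) with hB
    have hzco : z = (A : ℝ) + (B : ℝ) * β := by
      have h1 : β * z = ((a : ℝ) - d) + b * β := by rw [hxz] at hab; linarith
      have h2 : β * ((A : ℝ) + (B : ℝ) * β) = ((a : ℝ) - d) + b * β := by
        simp only [hA, hB]
        push_cast
        linear_combination (-((a : ℝ) - (d : ℝ))) * hq
      exact mul_left_cancel₀ hβne (by rw [h1, h2])
    obtain ⟨h0, hS⟩ := ih z hz A B hzco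
    have hconj : (a : ℝ) + (b : ℝ) * ((p : ℝ) - β)
        = (d : ℝ) + ((p : ℝ) - β) * ((A : ℝ) + (B : ℝ) * ((p : ℝ) - β)) := by
      simp only [hA, hB]
      push_cast
      linear_combination ((a : ℝ) - (d : ℝ)) * hq
    rw [hconj]
    constructor
    · have := mul_nonneg h'pos.le h0
      positivity
    · have hdm : (d : ℝ) ≤ (m : ℝ) := by exact_mod_cast hd
      have h1 : ((p : ℝ) - β) * ((A : ℝ) + (B : ℝ) * ((p : ℝ) - β))
          < ((p : ℝ) - β) * ((m : ℝ) * β / (β - 1)) := by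
        exact (mul_lt_mul_iff_right₀ h'pos).2 hS
      linarith [hSm]

end Case2

end CutProject
namespace CutProject

section Case2b

variable {β : ℝ} {p : ℤ} {m : ℕ}

lemma case2_force (hβ : 1 < β) (hq : β ^ 2 = (p : ℝ) * β - 1) (hirr : Irrational β)
    (hm1 : 1 ≤ m) {x : ℝ} (hx : x ∈ Xspec β m) (a b : ℤ) (hco : x = (a : ℝ) + (b : ℝ) * β)
    (h1 : (m : ℝ) * β / (β - 1) - 1 < (a : ℝ) + (b : ℝ) * ((p : ℝ) - β))
    (h2 : (a : ℝ) + (b : ℝ) * ((p : ℝ) - β) < (m : ℝ) * β / (β - 1)) :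
    ∃ w ∈ Xspec β m, x = (m : ℝ) + β * w := by
  have hβ0 : (0 : ℝ) < β := by linarith
  have hβne : β ≠ 0 := ne_of_gt hβ0
  have hb1 : (0 : ℝ) < β - 1 := by linarith
  have h'pos : 0 < (p : ℝ) - β := by nlinarith
  have hSm : (m : ℝ) + ((p : ℝ) - β) * ((m : ℝ) * β / (β - 1)) = (m : ℝ) * β / (β - 1) := by
    field_simp
    linear_combination (-1 : ℝ) * hq
  obtain ⟨d, hd, w, hw, hxw⟩ := Xspec_peel hx
  set A : ℤ := b + p * (a - d) with hA
  set B : ℤ := -(a - d) with hB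
  have hwco : w = (A : ℝ) + (B : ℝ) * β := by
    have h1' : β * w = ((a : ℝ) - d) + b * β := by rw [hxw] at hco; linarith
    have h2' : β * ((A : ℝ) + (B : ℝ) * β) = ((a : ℝ) - d) + b * β := by
      simp only [hA, hB]; push_cast
      linear_combination (-((a : ℝ) - (d : ℝ))) * hq
    exact mul_left_cancel₀ hβne (by rw [h1', h2'])
  obtain ⟨n, hwn⟩ := mem_Xspec_iff.1 hw
  obtain ⟨hw0, hwS⟩ := case2_conj_bound hβ hq hirr hm1 n w hwn A B hwco
  have hconj : (a : ℝ) + (b : ℝ) * ((p : ℝ) - β)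
      = (d : ℝ) + ((p : ℝ) - β) * ((A : ℝ) + (B : ℝ) * ((p : ℝ) - β)) := by
    simp only [hA, hB]; push_cast
    linear_combination ((a : ℝ) - (d : ℝ)) * hq
  have hdlt : (m : ℝ) - 1 < (d : ℝ) := by
    have hlt : ((p : ℝ) - β) * ((A : ℝ) + (B : ℝ) * ((p : ℝ) - β))
        < ((p : ℝ) - β) * ((m : ℝ) * β / (β - 1)) := (mul_lt_mul_iff_right₀ h'pos).2 hwS
    rw [hconj] at h1
    linarith
  have hdm : d = m := by
    have h1n : m < d + 1 := by exact_mod_cast (by push_cast; linarith : (m : ℝ) < (d : ℝ) + 1)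
    omega
  exact ⟨w, hw, by rw [hxw, hdm]⟩

lemma case2_not_mem (hβ : 1 < β) (hq : β ^ 2 = (p : ℝ) * β - 1) (hirr : Irrational β)
    (hm1 : 1 ≤ m) (hmS1 : (m : ℝ) ≤ (m : ℝ) * β / (β - 1) - 1)
    {y : ℝ} (a b : ℤ) (hco : y = (a : ℝ) + (b : ℝ) * β)
    (h1 : (m : ℝ) * β / (β - 1) - 1 < (a : ℝ) + (b : ℝ) * ((p : ℝ) - β))
    (h2 : (a : ℝ) + (b : ℝ) * ((p : ℝ) - β) < (m : ℝ) * β / (β - 1))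
    (hub : y < (m : ℝ) + β) : y ∉ Xspec β m := by
  intro hy
  obtain ⟨w, hw, hxw⟩ := case2_force hβ hq hirr hm1 hy a b hco h1 h2
  rcases Xspec_eq_zero_or_one_le hβ.le hw with h0 | hge
  · rw [h0, mul_zero, add_zero] at hxw
    have hab : (a : ℝ) + (b : ℝ) * β = ((m : ℤ) : ℝ) + ((0 : ℤ) : ℝ) * β := by
      push_cast; rw [← hco, hxw]; ring
    obtain ⟨ha, hb⟩ := coords_unique hirr hab
    rw [ha, hb] at h1
    push_cast at h1
    linarith
  · have hβ0 : (0 : ℝ) < β := by linarith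
    have : (m : ℝ) + β ≤ y := by
      rw [hxw]
      nlinarith
    linarith

end Case2b

end CutProject
namespace CutProject

/-- integer coordinates of `x^j * (x - 1)` in `ℤ[x]` for `x` satisfying `x² = p x - 1`. -/
def pairSeq (p : ℤ) : ℕ → ℤ × ℤ
  | 0 => (-1, 1)
  | (j + 1) => (-(pairSeq p j).2, (pairSeq p j).1 + p * (pairSeq p j).2)

lemma pairSeq_val {p : ℤ} {x : ℝ} (hx : x ^ 2 = (p : ℝ) * x - 1) :
    ∀ j : ℕ, ((pairSeq p j).1 : ℝ) + ((pairSeq p j).2 : ℝ) * x = x ^ j * (x - 1) := by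
  intro j
  induction j with
  | zero => simp [pairSeq]; ring
  | succ j ih =>
    show ((-(pairSeq p j).2 : ℤ) : ℝ) + (((pairSeq p j).1 + p * (pairSeq p j).2 : ℤ) : ℝ) * x
        = x ^ (j + 1) * (x - 1)
    have : x ^ (j + 1) * (x - 1) = x * (x ^ j * (x - 1)) := by ring
    rw [this, ← ih]
    push_cast
    linear_combination (-((pairSeq p j).2 : ℝ)) * hx

end CutProject
namespace CutProject

section Case2c

variable {β : ℝ} {p : ℤ} {m : ℕ}

lemma case2_base (hβ : 1 < β) (hp : 3 ≤ p) (hq : β ^ 2 = (p : ℝ) * β - 1)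
    (hirr : Irrational β) (hm' : (p : ℤ) - 1 ≤ (m : ℤ)) :
    ∃ a b : ℤ, 0 < (a : ℝ) + (b : ℝ) * β ∧ (a : ℝ) + (b : ℝ) * β < (m : ℝ) + β ∧
      (m : ℝ) * β / (β - 1) - 1 < (a : ℝ) + (b : ℝ) * ((p : ℝ) - β) ∧
      (a : ℝ) + (b : ℝ) * ((p : ℝ) - β) < (m : ℝ) * β / (β - 1) := by
  have hβ0 : (0 : ℝ) < β := by linarith
  have hβne : β ≠ 0 := ne_of_gt hβ0
  have hb1 : (0 : ℝ) < β - 1 := by linarith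
  have hinv : β * ((p : ℝ) - β) = 1 := by linear_combination -hq
  have h'pos : 0 < (p : ℝ) - β := by nlinarith [hinv, hβ0]
  have h'lt1 : (p : ℝ) - β < 1 := by nlinarith [hinv]
  have hβp : β < (p : ℝ) := by linarith
  have hpR : (3 : ℝ) ≤ (p : ℝ) := by exact_mod_cast hp
  have hmpR : (p : ℝ) - 1 ≤ (m : ℝ) := by exact_mod_cast hm'
  have hm1R : (1 : ℝ) ≤ (m : ℝ) := by linarith
  by_cases hdvd : (p - 2) ∣ (m : ℤ)
  · -- degenerate branch
    obtain ⟨q, hqm⟩ := hdvd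
    have hq0 : 0 < q := by nlinarith
    have hmR : (m : ℝ) = ((p : ℝ) - 2) * (q : ℝ) := by exact_mod_cast hqm
    have h'q : ((p : ℝ) - β) ^ 2 = (p : ℝ) * ((p : ℝ) - β) - 1 := by linear_combination hq
    have hS'q : (m : ℝ) * β / (β - 1) = (q : ℝ) * (β - 1) := by
      rw [div_eq_iff (ne_of_gt hb1), hmR]
      linear_combination (-(q : ℝ)) * hq
    have hA_eq : (m : ℝ) / (β - 1) = (m : ℝ) * β / (β - 1) - m := by field_simp; ring
    have hApos : 0 < (m : ℝ) / (β - 1) := by positivity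
    have hex : ∃ j : ℕ, (m : ℝ) / (β - 1) < β ^ j * (β - 1) := by
      obtain ⟨j₀, hj₀⟩ := pow_unbounded_of_one_lt ((m : ℝ) / (β - 1) / (β - 1)) hβ
      exact ⟨j₀, by rwa [div_lt_iff₀ hb1] at hj₀⟩
    obtain ⟨jj, hjsp, hjub⟩ : ∃ j : ℕ, (m : ℝ) / (β - 1) < β ^ j * (β - 1) ∧
        β ^ j * (β - 1) ≤ (m : ℝ) / (β - 1) + m := by
      classical
      refine ⟨Nat.find hex, Nat.find_spec hex, ?_⟩
      rcases Nat.eq_zero_or_pos (Nat.find hex) with h0 | hplus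
      · rw [h0, pow_zero, one_mul]
        linarith
      · have hmin := Nat.find_min hex (m := Nat.find hex - 1) (by omega)
        push_neg at hmin
        have hsplit : β ^ (Nat.find hex) = β * β ^ (Nat.find hex - 1) := by
          rw [← pow_succ']
          congr 1
          omega
        have hbA : β * ((m : ℝ) / (β - 1)) = (m : ℝ) / (β - 1) + m := by field_simp; ring
        have hstep : β * (β ^ (Nat.find hex - 1) * (β - 1)) ≤ β * ((m : ℝ) / (β - 1)) :=
          mul_le_mul_of_nonneg_left hmin hβ0.le
        rw [hsplit]
        calc β * β ^ (Nat.find hex - 1) * (β - 1)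
            = β * (β ^ (Nat.find hex - 1) * (β - 1)) := by ring
          _ ≤ β * ((m : ℝ) / (β - 1)) := hstep
          _ = (m : ℝ) / (β - 1) + m := hbA
    have hval : (((m : ℤ) + q + (pairSeq p jj).1 : ℤ) : ℝ)
        + (((pairSeq p jj).2 - q : ℤ) : ℝ) * β
        = β ^ jj * (β - 1) + ((m : ℝ) + q - q * β) := by
      push_cast
      linear_combination (pairSeq_val hq jj)
    have hconj : (((m : ℤ) + q + (pairSeq p jj).1 : ℤ) : ℝ)
        + (((pairSeq p jj).2 - q : ℤ) : ℝ) * ((p : ℝ) - β)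
        = ((p : ℝ) - β) ^ jj * (((p : ℝ) - β) - 1) + ((m : ℝ) + q - q * ((p : ℝ) - β)) := by
      push_cast
      linear_combination (pairSeq_val h'q jj)
    have he : (m : ℝ) + q - q * β = -((m : ℝ) / (β - 1)) := by
      rw [hA_eq, hS'q]; ring
    have hconjS : (m : ℝ) + q - q * ((p : ℝ) - β) = (m : ℝ) * β / (β - 1) := by
      rw [hS'q]; linear_combination hmR
    have hpow_pos : 0 < ((p : ℝ) - β) ^ jj := pow_pos h'pos _
    have hpow_le : ((p : ℝ) - β) ^ jj ≤ 1 := pow_le_one₀ h'pos.le h'lt1.le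
    have ht1 : ((p : ℝ) - β) ^ jj * (((p : ℝ) - β) - 1) < 0 :=
      mul_neg_of_pos_of_neg hpow_pos (by linarith)
    have ht2 : -1 < ((p : ℝ) - β) ^ jj * (((p : ℝ) - β) - 1) := by nlinarith
    refine ⟨(m : ℤ) + q + (pairSeq p jj).1, (pairSeq p jj).2 - q, ?_, ?_, ?_, ?_⟩
    · rw [hval, he]; linarith
    · rw [hval, he]; linarith
    · rw [hconj, hconjS]; linarith
    · rw [hconj, hconjS]; linarith
  · -- non-degenerate branch
    set Sp : ℝ := (m : ℝ) * β / (β - 1) with hSp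
    have hD : 0 < 2 * β - (p : ℝ) := by linarith
    set b₀ : ℤ := ⌈(1 - Sp) / (2 * β - (p : ℝ))⌉ with hb₀
    set a₀ : ℤ := ⌈Sp - 1 - (b₀ : ℝ) * ((p : ℝ) - β)⌉ with ha₀
    have hble : (1 - Sp) / (2 * β - (p : ℝ)) ≤ (b₀ : ℝ) := Int.le_ceil _
    have hbD1 : 1 - Sp ≤ (b₀ : ℝ) * (2 * β - (p : ℝ)) := by
      rw [div_le_iff₀ hD] at hble; linarith
    have hblt : (b₀ : ℝ) < (1 - Sp) / (2 * β - (p : ℝ)) + 1 := Int.ceil_lt_add_one _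
    have hbD2 : (b₀ : ℝ) * (2 * β - (p : ℝ)) < 1 - Sp + (2 * β - (p : ℝ)) := by
      have h2 : (b₀ : ℝ) * (2 * β - (p : ℝ))
          < ((1 - Sp) / (2 * β - (p : ℝ)) + 1) * (2 * β - (p : ℝ)) :=
        mul_lt_mul_of_pos_right hblt hD
      have h3 : ((1 - Sp) / (2 * β - (p : ℝ)) + 1) * (2 * β - (p : ℝ))
          = 1 - Sp + (2 * β - (p : ℝ)) := by field_simp
      linarith
    have ha_ub : (a₀ : ℝ) < Sp - (b₀ : ℝ) * ((p : ℝ) - β) := by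
      have := Int.ceil_lt_add_one (Sp - 1 - (b₀ : ℝ) * ((p : ℝ) - β))
      rw [← ha₀] at this
      linarith
    have ha_lb : Sp - 1 - (b₀ : ℝ) * ((p : ℝ) - β) < (a₀ : ℝ) := by
      have hle : Sp - 1 - (b₀ : ℝ) * ((p : ℝ) - β) ≤ (a₀ : ℝ) := Int.le_ceil _
      rcases lt_or_eq_of_le hle with h | heq
      · exact h
      · exfalso
        have hSpb : Sp * (β - 1) = (m : ℝ) * β := by rw [hSp]; field_simp
        have e2 : Sp = (a₀ : ℝ) + 1 + (b₀ : ℝ) * ((p : ℝ) - β) := by linarith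
        have e3 : ((a₀ : ℝ) + 1 + (b₀ : ℝ) * ((p : ℝ) - β)) * (β - 1) = (m : ℝ) * β := by
          rw [← e2]; exact hSpb
        have key : ((a₀ + 1 + b₀ - (m : ℤ) : ℤ) : ℝ) * β = ((a₀ + 1 + b₀ * p - b₀ : ℤ) : ℝ) := by
          push_cast
          linear_combination e3 + (b₀ : ℝ) * hq
        rcases eq_or_ne (a₀ + 1 + b₀ - (m : ℤ)) 0 with hs0 | hs0
        · have ht0 : (a₀ + 1 + b₀ * p - b₀ : ℤ) = 0 := by
            have : ((a₀ + 1 + b₀ * p - b₀ : ℤ) : ℝ) = 0 := by rw [← key, hs0]; simp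
            exact_mod_cast this
          exact hdvd ⟨-b₀, by linear_combination ht0 - hs0⟩
        · exact beta_mul_int_ne hirr hs0 key
    refine ⟨a₀, b₀, ?_, ?_, ?_, ?_⟩
    · nlinarith
    · have h1 : (a₀ : ℝ) + (b₀ : ℝ) * β < Sp + (b₀ : ℝ) * (2 * β - (p : ℝ)) := by nlinarith
      have h2 : Sp + (b₀ : ℝ) * (2 * β - (p : ℝ)) < 1 + 2 * β - (p : ℝ) := by linarith
      have h3 : 1 + 2 * β - (p : ℝ) ≤ (m : ℝ) + β := by linarith
      linarith
    · linarith
    · linarith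

end Case2c

end CutProject
namespace CutProject

section Case2d

variable {β : ℝ} {p : ℤ} {m : ℕ}

lemma case2_infinite (hβ : 1 < β) (hp : 3 ≤ p) (hq : β ^ 2 = (p : ℝ) * β - 1)
    (hm' : (p : ℤ) - 1 ≤ (m : ℤ)) :
    {y : ℝ | 0 < y ∧ y ∈ sigmaCP β ((p : ℝ) - β) (Set.Ico 0 ((m : ℝ) * β / (β - 1)))
      ∧ y ∉ Xspec β m}.Infinite := by
  have hβ0 : (0 : ℝ) < β := by linarith
  have hβne : β ≠ 0 := ne_of_gt hβ0
  have hb1 : (0 : ℝ) < β - 1 := by linarith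
  have hinv : β * ((p : ℝ) - β) = 1 := by linear_combination -hq
  have h'pos : 0 < (p : ℝ) - β := by nlinarith [hinv, hβ0]
  have h'lt1 : (p : ℝ) - β < 1 := by nlinarith [hinv]
  have hβp : β < (p : ℝ) := by linarith
  have hpR : (3 : ℝ) ≤ (p : ℝ) := by exact_mod_cast hp
  have hmpR : (p : ℝ) - 1 ≤ (m : ℝ) := by exact_mod_cast hm'
  have hm1R : (1 : ℝ) ≤ (m : ℝ) := by linarith
  have hm1 : 1 ≤ m := by exact_mod_cast hm1R
  have hirr : Irrational β :=
    beta_irrational (p := p) (e := -1) hβ (Or.inr ⟨rfl, hp⟩) (by push_cast; linarith [hq])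
  have h'q : ((p : ℝ) - β) ^ 2 = (p : ℝ) * ((p : ℝ) - β) - 1 := by linear_combination hq
  have hSm : (m : ℝ) + ((p : ℝ) - β) * ((m : ℝ) * β / (β - 1)) = (m : ℝ) * β / (β - 1) := by
    field_simp
    linear_combination (-1 : ℝ) * hq
  have hAS : (m : ℝ) / (β - 1) = (m : ℝ) * β / (β - 1) - m := by field_simp; ring
  have hmS1 : (m : ℝ) ≤ (m : ℝ) * β / (β - 1) - 1 := by
    have h1 : (1 : ℝ) ≤ (m : ℝ) / (β - 1) := by
      rw [le_div_iff₀ hb1]; linarith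
    linarith [hAS]
  obtain ⟨a₀, b₀, hpos0, hub0, hw1, hw2⟩ := case2_base hβ hp hq hirr hm'
  -- the iterated sequence of integer coordinate pairs
  set g : ℕ → ℤ × ℤ := fun k => Nat.rec (a₀, b₀)
    (fun _ pr => ((m : ℤ) - pr.2, pr.1 + p * pr.2)) k with hg
  have hg0 : g 0 = (a₀, b₀) := rfl
  have hgs : ∀ k, g (k + 1) = ((m : ℤ) - (g k).2, (g k).1 + p * (g k).2) := fun k => rfl
  set val : ℕ → ℝ := fun k => ((g k).1 : ℝ) + ((g k).2 : ℝ) * β with hvaldef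
  set cj : ℕ → ℝ := fun k => ((g k).1 : ℝ) + ((g k).2 : ℝ) * ((p : ℝ) - β) with hcjdef
  have hval_succ : ∀ k, val (k + 1) = β * val k + m := by
    intro k
    show (((m : ℤ) - (g k).2 : ℤ) : ℝ) + (((g k).1 + p * (g k).2 : ℤ) : ℝ) * β
      = β * (((g k).1 : ℝ) + ((g k).2 : ℝ) * β) + m
    push_cast
    linear_combination (-((g k).2 : ℝ)) * hq
  have hcj_succ : ∀ k, cj (k + 1) = ((p : ℝ) - β) * cj k + m := by
    intro k
    show (((m : ℤ) - (g k).2 : ℤ) : ℝ) + (((g k).1 + p * (g k).2 : ℤ) : ℝ) * ((p : ℝ) - β)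
      = ((p : ℝ) - β) * (((g k).1 : ℝ) + ((g k).2 : ℝ) * ((p : ℝ) - β)) + m
    push_cast
    linear_combination (-((g k).2 : ℝ)) * h'q
  have hInv : ∀ k, 0 < val k ∧ ((m : ℝ) * β / (β - 1) - 1 < cj k ∧
      cj k < (m : ℝ) * β / (β - 1)) ∧ val k ∉ Xspec β m := by
    intro k
    induction k with
    | zero =>
      refine ⟨hpos0, ⟨hw1, hw2⟩, ?_⟩
      exact case2_not_mem hβ hq hirr hm1 hmS1 a₀ b₀ rfl hw1 hw2 hub0
    | succ k ih =>
      obtain ⟨hposk, ⟨hwk1, hwk2⟩, hnk⟩ := ih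
      have hpos' : 0 < val (k + 1) := by
        rw [hval_succ k]; positivity
      have hcj1 : (m : ℝ) * β / (β - 1) - 1 < cj (k + 1) := by
        rw [hcj_succ k]
        have h1 : ((p : ℝ) - β) * ((m : ℝ) * β / (β - 1) - 1) < ((p : ℝ) - β) * cj k :=
          (mul_lt_mul_iff_right₀ h'pos).2 hwk1
        nlinarith [hSm, h'lt1, h'pos]
      have hcj2 : cj (k + 1) < (m : ℝ) * β / (β - 1) := by
        rw [hcj_succ k]
        have h1 : ((p : ℝ) - β) * cj k < ((p : ℝ) - β) * ((m : ℝ) * β / (β - 1)) :=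
          (mul_lt_mul_iff_right₀ h'pos).2 hwk2
        linarith [hSm]
      refine ⟨hpos', ⟨hcj1, hcj2⟩, ?_⟩
      intro hmem
      obtain ⟨w, hw, hxw⟩ := case2_force hβ hq hirr hm1 hmem (g (k+1)).1 (g (k+1)).2
        rfl hcj1 hcj2
      have hweq : w = val k := by
        have h1 : (m : ℝ) + β * w = (m : ℝ) + β * val k := by
          rw [← hxw, hval_succ k]; ring
        have := add_left_cancel h1
        exact mul_left_cancel₀ hβne this
      rw [hweq] at hw
      exact hnk hw
  have hmono : StrictMono val := by
    apply strictMono_nat_of_lt_succ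
    intro k
    have := (hInv k).1
    rw [hval_succ k]
    nlinarith
  apply Set.infinite_of_injective_forall_mem (f := val) hmono.injective
  intro k
  obtain ⟨h1, ⟨h2, h3⟩, h4⟩ := hInv k
  refine ⟨h1, ⟨(g k).1, (g k).2, rfl, ?_⟩, h4⟩
  constructor
  · have : (0 : ℝ) ≤ (m : ℝ) * β / (β - 1) - 1 := by linarith
    linarith
  · exact h3

end Case2d

end CutProject
namespace CutProject

section Case1

variable {β : ℝ} {p : ℤ} {m : ℕ}

lemma case1_conj_bound (hβ : 1 < β) (hq : β ^ 2 = (p : ℝ) * β + 1) (hirr : Irrational β)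
    (hp1 : 1 ≤ p) (hm1 : 1 ≤ m) :
    ∀ n : ℕ, ∀ x ∈ XspecN β m n, ∀ a b : ℤ, x = (a : ℝ) + (b : ℝ) * β →
      -((m : ℝ) / p) < (a : ℝ) + (b : ℝ) * ((p : ℝ) - β) ∧
        (a : ℝ) + (b : ℝ) * ((p : ℝ) - β) < (m : ℝ) * β / p := by
  have hβ0 : (0 : ℝ) < β := by linarith
  have hβne : β ≠ 0 := ne_of_gt hβ0
  have hpR : (1 : ℝ) ≤ (p : ℝ) := by exact_mod_cast hp1
  have hp0 : (0 : ℝ) < (p : ℝ) := by linarith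
  have hm0 : (1 : ℝ) ≤ (m : ℝ) := by exact_mod_cast hm1
  have hinv : β * ((p : ℝ) - β) = -1 := by linear_combination -hq
  have h'neg : (p : ℝ) - β < 0 := by nlinarith [hinv, hβ0]
  have h'gt : -1 < (p : ℝ) - β := by nlinarith [hinv]
  have hβp : (p : ℝ) < β := by linarith
  have hPS : ((p : ℝ) - β) * ((m : ℝ) * β / p) = -((m : ℝ) / p) := by
    have h1 : ((p : ℝ) - β) * ((m : ℝ) * β / p) = ((m : ℝ) / p) * (β * ((p : ℝ) - β)) := by
      ring
    rw [h1, hinv]; ring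
  have hS2 : (m : ℝ) * β / p = (m : ℝ) + ((m : ℝ) / p) * (β - p) := by field_simp; ring
  intro n
  induction n with
  | zero =>
    intro x hx a b hab
    obtain ⟨d, hd, hxd⟩ := XspecN_zero_elim hx
    rw [hxd] at hab
    obtain ⟨ha, hb⟩ := coords_unique hirr (a := a) (b := b) (c := (d : ℤ)) (d := 0)
      (by push_cast; linarith)
    subst ha; subst hb
    push_cast
    have hd0 : (0 : ℝ) ≤ (d : ℝ) := Nat.cast_nonneg d
    have hdm : (d : ℝ) ≤ (m : ℝ) := by exact_mod_cast hd
    constructor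
    · have : 0 < (m : ℝ) / p := by positivity
      nlinarith
    · have : (m : ℝ) < (m : ℝ) * β / p := by
        rw [lt_div_iff₀ hp0]; nlinarith
      nlinarith
  | succ n ih =>
    intro x hx a b hab
    obtain ⟨d, hd, z, hz, hxz⟩ := XspecN_peel hx
    set A : ℤ := b - p * (a - d) with hA
    set B : ℤ := a - d with hB
    have hzco : z = (A : ℝ) + (B : ℝ) * β := by
      have h1 : β * z = ((a : ℝ) - d) + b * β := by rw [hxz] at hab; linarith
      have h2 : β * ((A : ℝ) + (B : ℝ) * β) = ((a : ℝ) - d) + b * β := by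
        simp only [hA, hB]; push_cast
        linear_combination ((a : ℝ) - (d : ℝ)) * hq
      exact mul_left_cancel₀ hβne (by rw [h1, h2])
    obtain ⟨hzL, hzS⟩ := ih z hz A B hzco
    have hconj : (a : ℝ) + (b : ℝ) * ((p : ℝ) - β)
        = (d : ℝ) + ((p : ℝ) - β) * ((A : ℝ) + (B : ℝ) * ((p : ℝ) - β)) := by
      simp only [hA, hB]; push_cast
      linear_combination ((d : ℝ) - (a : ℝ)) * hq
    rw [hconj]
    have hd0 : (0 : ℝ) ≤ (d : ℝ) := Nat.cast_nonneg d
    have hdm : (d : ℝ) ≤ (m : ℝ) := by exact_mod_cast hd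
    constructor
    · have h1 : ((p : ℝ) - β) * ((m : ℝ) * β / p)
          < ((p : ℝ) - β) * ((A : ℝ) + (B : ℝ) * ((p : ℝ) - β)) :=
        mul_lt_mul_of_neg_left hzS h'neg
      rw [hPS] at h1
      linarith
    · have h1 : ((p : ℝ) - β) * ((A : ℝ) + (B : ℝ) * ((p : ℝ) - β))
          < ((p : ℝ) - β) * (-((m : ℝ) / p)) :=
        mul_lt_mul_of_neg_left hzL h'neg
      have h2 : ((p : ℝ) - β) * (-((m : ℝ) / p)) = ((m : ℝ) / p) * (β - p) := by ring
      rw [h2] at h1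
      linarith [hS2]

lemma case1_force_m (hβ : 1 < β) (hq : β ^ 2 = (p : ℝ) * β + 1) (hirr : Irrational β)
    (hp1 : 1 ≤ p) (hm1 : 1 ≤ m) {x : ℝ} (hx : x ∈ Xspec β m)
    (a b : ℤ) (hco : x = (a : ℝ) + (b : ℝ) * β)
    (h1 : (m : ℝ) * β / p - 1 < (a : ℝ) + (b : ℝ) * ((p : ℝ) - β))
    (h2 : (a : ℝ) + (b : ℝ) * ((p : ℝ) - β) < (m : ℝ) * β / p) :
    ∃ w ∈ Xspec β m, x = (m : ℝ) + β * w := by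
  have hβ0 : (0 : ℝ) < β := by linarith
  have hβne : β ≠ 0 := ne_of_gt hβ0
  have hpR : (1 : ℝ) ≤ (p : ℝ) := by exact_mod_cast hp1
  have hp0 : (0 : ℝ) < (p : ℝ) := by linarith
  have hinv : β * ((p : ℝ) - β) = -1 := by linear_combination -hq
  have h'neg : (p : ℝ) - β < 0 := by nlinarith [hinv, hβ0]
  have hS2 : (m : ℝ) * β / p = (m : ℝ) + ((m : ℝ) / p) * (β - p) := by field_simp; ring
  obtain ⟨d, hd, w, hw, hxw⟩ := Xspec_peel hx
  set A : ℤ := b - p * (a - d) with hA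
  set B : ℤ := a - d with hB
  have hwco : w = (A : ℝ) + (B : ℝ) * β := by
    have h1' : β * w = ((a : ℝ) - d) + b * β := by rw [hxw] at hco; linarith
    have h2' : β * ((A : ℝ) + (B : ℝ) * β) = ((a : ℝ) - d) + b * β := by
      simp only [hA, hB]; push_cast
      linear_combination ((a : ℝ) - (d : ℝ)) * hq
    exact mul_left_cancel₀ hβne (by rw [h1', h2'])
  obtain ⟨n, hwn⟩ := mem_Xspec_iff.1 hw
  obtain ⟨hwL, hwS⟩ := case1_conj_bound hβ hq hirr hp1 hm1 n w hwn A B hwco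
  have hconj : (a : ℝ) + (b : ℝ) * ((p : ℝ) - β)
      = (d : ℝ) + ((p : ℝ) - β) * ((A : ℝ) + (B : ℝ) * ((p : ℝ) - β)) := by
    simp only [hA, hB]; push_cast
    linear_combination ((d : ℝ) - (a : ℝ)) * hq
  have hdgt : (m : ℝ) - 1 < (d : ℝ) := by
    have hmul : ((p : ℝ) - β) * ((A : ℝ) + (B : ℝ) * ((p : ℝ) - β))
        < ((p : ℝ) - β) * (-((m : ℝ) / p)) := mul_lt_mul_of_neg_left hwL h'neg
    have h2' : ((p : ℝ) - β) * (-((m : ℝ) / p)) = ((m : ℝ) / p) * (β - p) := by ring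
    rw [hconj] at h1
    nlinarith [hS2]
  have hdm : d = m := by
    have h1n : m < d + 1 := by exact_mod_cast (by push_cast; linarith : (m : ℝ) < (d : ℝ) + 1)
    omega
  exact ⟨w, hw, by rw [hxw, hdm]⟩

lemma case1_force_0 (hβ : 1 < β) (hq : β ^ 2 = (p : ℝ) * β + 1) (hirr : Irrational β)
    (hp1 : 1 ≤ p) (hm1 : 1 ≤ m) {x : ℝ} (hx : x ∈ Xspec β m)
    (a b : ℤ) (hco : x = (a : ℝ) + (b : ℝ) * β)
    (h1 : -((m : ℝ) / p) < (a : ℝ) + (b : ℝ) * ((p : ℝ) - β))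
    (h2 : (a : ℝ) + (b : ℝ) * ((p : ℝ) - β) < -((m : ℝ) / p) + 1) :
    ∃ w ∈ Xspec β m, x = β * w := by
  have hβ0 : (0 : ℝ) < β := by linarith
  have hβne : β ≠ 0 := ne_of_gt hβ0
  have hpR : (1 : ℝ) ≤ (p : ℝ) := by exact_mod_cast hp1
  have hp0 : (0 : ℝ) < (p : ℝ) := by linarith
  have hinv : β * ((p : ℝ) - β) = -1 := by linear_combination -hq
  have h'neg : (p : ℝ) - β < 0 := by nlinarith [hinv, hβ0]
  have hPS : ((p : ℝ) - β) * ((m : ℝ) * β / p) = -((m : ℝ) / p) := by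
    have h1' : ((p : ℝ) - β) * ((m : ℝ) * β / p) = ((m : ℝ) / p) * (β * ((p : ℝ) - β)) := by
      ring
    rw [h1', hinv]; ring
  obtain ⟨d, hd, w, hw, hxw⟩ := Xspec_peel hx
  set A : ℤ := b - p * (a - d) with hA
  set B : ℤ := a - d with hB
  have hwco : w = (A : ℝ) + (B : ℝ) * β := by
    have h1' : β * w = ((a : ℝ) - d) + b * β := by rw [hxw] at hco; linarith
    have h2' : β * ((A : ℝ) + (B : ℝ) * β) = ((a : ℝ) - d) + b * β := by
      simp only [hA, hB]; push_cast
      linear_combination ((a : ℝ) - (d : ℝ)) * hq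
    exact mul_left_cancel₀ hβne (by rw [h1', h2'])
  obtain ⟨n, hwn⟩ := mem_Xspec_iff.1 hw
  obtain ⟨hwL, hwS⟩ := case1_conj_bound hβ hq hirr hp1 hm1 n w hwn A B hwco
  have hconj : (a : ℝ) + (b : ℝ) * ((p : ℝ) - β)
      = (d : ℝ) + ((p : ℝ) - β) * ((A : ℝ) + (B : ℝ) * ((p : ℝ) - β)) := by
    simp only [hA, hB]; push_cast
    linear_combination ((d : ℝ) - (a : ℝ)) * hq
  have hdlt : (d : ℝ) < 1 := by
    have hmul : ((p : ℝ) - β) * ((m : ℝ) * β / p)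
        < ((p : ℝ) - β) * ((A : ℝ) + (B : ℝ) * ((p : ℝ) - β)) :=
      mul_lt_mul_of_neg_left hwS h'neg
    rw [hPS] at hmul
    rw [hconj] at h2
    linarith
  have hd0 : d = 0 := by
    have : (d : ℝ) < 1 := hdlt
    have : d < 1 := by exact_mod_cast this
    omega
  refine ⟨w, hw, ?_⟩
  rw [hxw, hd0]
  push_cast
  ring

end Case1

end CutProject
namespace CutProject

section Case1b

variable {β : ℝ} {p : ℤ} {m : ℕ}

set_option maxHeartbeats 1000000 in
lemma case1_lower (hβ : 1 < β) (hq : β ^ 2 = (p : ℝ) * β + 1) (hirr : Irrational β)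
    (hp1 : 1 ≤ p) (hm1 : 1 ≤ m) {x : ℝ} (hx : x ∈ Xspec β m)
    (a b : ℤ) (hco : x = (a : ℝ) + (b : ℝ) * β)
    (h1 : -((m : ℝ) / p) < (a : ℝ) + (b : ℝ) * ((p : ℝ) - β))
    (h2 : (a : ℝ) + (b : ℝ) * ((p : ℝ) - β) < -((m : ℝ) / p) + 1) :
    ((m : ℝ) - p) * β ≤ x := by
  have hβ0 : (0 : ℝ) < β := by linarith
  have hβne : β ≠ 0 := ne_of_gt hβ0
  have hpR : (1 : ℝ) ≤ (p : ℝ) := by exact_mod_cast hp1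
  have hp0 : (0 : ℝ) < (p : ℝ) := by linarith
  have hinv : β * ((p : ℝ) - β) = -1 := by linear_combination -hq
  have h'neg : (p : ℝ) - β < 0 := by nlinarith [hinv, hβ0]
  have h'gt : -1 < (p : ℝ) - β := by nlinarith [hinv]
  have hβp : (p : ℝ) < β := by linarith
  have hβp1 : β < (p : ℝ) + 1 := by linarith
  have hS2 : (m : ℝ) * β / p = (m : ℝ) + ((m : ℝ) / p) * (β - p) := by field_simp; ring
  obtain ⟨w, hw, hxw⟩ := case1_force_0 hβ hq hirr hp1 hm1 hx a b hco h1 h2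
  -- coordinates of w
  have hwco : w = ((b - p * a : ℤ) : ℝ) + ((a : ℤ) : ℝ) * β := by
    have h1' : β * w = (a : ℝ) + b * β := by rw [hxw] at hco; linarith
    have h2' : β * (((b - p * a : ℤ) : ℝ) + ((a : ℤ) : ℝ) * β) = (a : ℝ) + b * β := by
      push_cast
      linear_combination ((a : ℝ)) * hq
    exact mul_left_cancel₀ hβne (by rw [h1', h2'])
  have hconjw : (a : ℝ) + (b : ℝ) * ((p : ℝ) - β)
      = ((p : ℝ) - β) * (((b - p * a : ℤ) : ℝ) + ((a : ℤ) : ℝ) * ((p : ℝ) - β)) := by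
    push_cast
    linear_combination (-(a : ℝ)) * hq
  -- conjugate of w is -β * x'
  have hwS : (m : ℝ) * β / p - β
      < ((b - p * a : ℤ) : ℝ) + ((a : ℤ) : ℝ) * ((p : ℝ) - β) := by
    have hone : -β * ((p : ℝ) - β) = 1 := by linear_combination hq
    have hkey : ((b - p * a : ℤ) : ℝ) + ((a : ℤ) : ℝ) * ((p : ℝ) - β)
        = -β * ((a : ℝ) + (b : ℝ) * ((p : ℝ) - β)) := by
      rw [hconjw]
      have e : -β * (((p : ℝ) - β) * (((b - p * a : ℤ) : ℝ) + ((a : ℤ) : ℝ) * ((p : ℝ) - β)))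
          = (-β * ((p : ℝ) - β)) * (((b - p * a : ℤ) : ℝ) + ((a : ℤ) : ℝ) * ((p : ℝ) - β)) := by
        ring
      rw [e, hone, one_mul]
    rw [hkey]
    have hmul := mul_lt_mul_of_neg_left h2 (show -β < 0 by linarith)
    have e2 : -β * (-((m : ℝ) / p) + 1) = β * ((m : ℝ) / p) - β := by ring
    have e3 : β * ((m : ℝ) / p) = (m : ℝ) * β / p := by ring
    linarith
  -- peel w
  obtain ⟨d₁, hd₁, v, hv, hwv⟩ := Xspec_peel hw
  set A₁ : ℤ := (a : ℤ) - p * ((b - p * a) - d₁) with hA₁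
  set B₁ : ℤ := (b - p * a) - d₁ with hB₁
  have hvco : v = (A₁ : ℝ) + (B₁ : ℝ) * β := by
    have h1' : β * v = (((b - p * a : ℤ) : ℝ) - d₁) + ((a : ℤ) : ℝ) * β := by
      rw [hwv] at hwco; linarith
    have h2' : β * ((A₁ : ℝ) + (B₁ : ℝ) * β)
        = (((b - p * a : ℤ) : ℝ) - d₁) + ((a : ℤ) : ℝ) * β := by
      simp only [hA₁, hB₁]; push_cast
      linear_combination (((b : ℝ) - p * a) - (d₁ : ℝ)) * hq
    exact mul_left_cancel₀ hβne (by rw [h1', h2'])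
  obtain ⟨n, hvn⟩ := mem_Xspec_iff.1 hv
  obtain ⟨hvL, hvS⟩ := case1_conj_bound hβ hq hirr hp1 hm1 n v hvn A₁ B₁ hvco
  have hconjv : ((b - p * a : ℤ) : ℝ) + ((a : ℤ) : ℝ) * ((p : ℝ) - β)
      = (d₁ : ℝ) + ((p : ℝ) - β) * ((A₁ : ℝ) + (B₁ : ℝ) * ((p : ℝ) - β)) := by
    simp only [hA₁, hB₁]; push_cast
    linear_combination ((d₁ : ℝ) - ((b : ℝ) - p * a)) * hq
  have hd₁gt : (m : ℝ) - (p : ℝ) - 1 < (d₁ : ℝ) := by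
    have hmul : ((p : ℝ) - β) * ((A₁ : ℝ) + (B₁ : ℝ) * ((p : ℝ) - β))
        < ((p : ℝ) - β) * (-((m : ℝ) / p)) := mul_lt_mul_of_neg_left hvL h'neg
    have h2' : ((p : ℝ) - β) * (-((m : ℝ) / p)) = ((m : ℝ) / p) * (β - p) := by ring
    rw [hconjv] at hwS
    nlinarith [hS2]
  have hcZ : (m : ℤ) - p - 1 < (d₁ : ℤ) := by exact_mod_cast hd₁gt
  have hcZ2 : (m : ℤ) - p ≤ (d₁ : ℤ) := by omega
  have hd₁ge : (m : ℝ) - (p : ℝ) ≤ (d₁ : ℝ) := by exact_mod_cast hcZ2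
  have hv0 : 0 ≤ v := Xspec_nonneg hβ0.le hv
  rw [hxw, hwv]
  nlinarith [hd₁ge, hv0, hβ0]

end Case1b

end CutProject
namespace CutProject

section Case1c

variable {β : ℝ} {p : ℤ} {m : ℕ}

set_option maxHeartbeats 1000000 in
lemma case1_base (hβ : 1 < β) (hq : β ^ 2 = (p : ℝ) * β + 1) (hirr : Irrational β)
    (hp1 : 1 ≤ p) (hm' : (p : ℤ) + 1 ≤ (m : ℤ)) :
    ∃ a b : ℤ, 0 < (a : ℝ) + (b : ℝ) * β ∧ (a : ℝ) + (b : ℝ) * β < ((m : ℝ) - p) * β ∧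
      -((m : ℝ) / p) < (a : ℝ) + (b : ℝ) * ((p : ℝ) - β) ∧
      (a : ℝ) + (b : ℝ) * ((p : ℝ) - β) < -((m : ℝ) / p) + 1 := by
  have hβ0 : (0 : ℝ) < β := by linarith
  have hβne : β ≠ 0 := ne_of_gt hβ0
  have hpR : (1 : ℝ) ≤ (p : ℝ) := by exact_mod_cast hp1
  have hp0 : (0 : ℝ) < (p : ℝ) := by linarith
  have hpne : (p : ℝ) ≠ 0 := ne_of_gt hp0
  have hinv : β * ((p : ℝ) - β) = -1 := by linear_combination -hq
  have h'neg : (p : ℝ) - β < 0 := by nlinarith [hinv, hβ0]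
  have h'gt : -1 < (p : ℝ) - β := by nlinarith [hinv]
  have hβp : (p : ℝ) < β := by linarith
  have hβp1 : β < (p : ℝ) + 1 := by linarith
  have hmR : (p : ℝ) + 1 ≤ (m : ℝ) := by exact_mod_cast hm'
  have hD : 0 < 2 * β - (p : ℝ) := by linarith
  have hDne : 2 * β - (p : ℝ) ≠ 0 := ne_of_gt hD
  have hm0R : (0 : ℝ) < (m : ℝ) := by linarith
  have hr1pos : 0 < (m : ℝ) / p / (2 * β - p) := div_pos (div_pos hm0R hp0) hD
  set b₀ : ℤ := ⌈(m : ℝ) / p / (2 * β - p)⌉ with hb₀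
  have hb₀1 : 1 ≤ b₀ := by
    have : 0 < b₀ := Int.lt_ceil.2 (by exact_mod_cast hr1pos)
    omega
  have hb₀R : (1 : ℝ) ≤ (b₀ : ℝ) := by exact_mod_cast hb₀1
  set a₀ : ℤ := ⌈(b₀ : ℝ) * (β - p) - (m : ℝ) / p⌉ with ha₀
  have ha_ub : (a₀ : ℝ) < (b₀ : ℝ) * (β - p) - (m : ℝ) / p + 1 :=
    Int.ceil_lt_add_one _
  have ha_lb : (b₀ : ℝ) * (β - p) - (m : ℝ) / p < (a₀ : ℝ) := by
    rcases lt_or_eq_of_le (Int.le_ceil ((b₀ : ℝ) * (β - p) - (m : ℝ) / p)) with h | heq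
    · exact h
    · exfalso
      have heq' : (a₀ : ℝ) * p = (b₀ : ℝ) * (β - p) * p - m := by
        rw [← heq]; field_simp
      have key : ((b₀ * p : ℤ) : ℝ) * β = ((a₀ * p + b₀ * p ^ 2 + (m : ℤ) : ℤ) : ℝ) := by
        push_cast
        linear_combination -heq'
      exact beta_mul_int_ne hirr
        (ne_of_gt (mul_pos (by omega) (by omega))) key
  have hble : (m : ℝ) / p / (2 * β - p) ≤ (b₀ : ℝ) := Int.le_ceil _
  have hbD1 : (m : ℝ) / p ≤ (b₀ : ℝ) * (2 * β - p) := by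
    rw [div_le_iff₀ hD] at hble; linarith
  have hblt : (b₀ : ℝ) < (m : ℝ) / p / (2 * β - p) + 1 := Int.ceil_lt_add_one _
  have hbD2 : (b₀ : ℝ) * (2 * β - p) < (m : ℝ) / p + (2 * β - p) := by
    have h2 : (b₀ : ℝ) * (2 * β - p) < ((m : ℝ) / p / (2 * β - p) + 1) * (2 * β - p) :=
      mul_lt_mul_of_pos_right hblt hD
    have h3 : ((m : ℝ) / p / (2 * β - p) + 1) * (2 * β - p) = (m : ℝ) / p + (2 * β - p) := by
      field_simp
    linarith
  refine ⟨a₀, b₀, ?_, ?_, ?_, ?_⟩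
  · nlinarith
  · -- upper bound on the value
    have hval : (a₀ : ℝ) + (b₀ : ℝ) * β < (b₀ : ℝ) * (2 * β - p) - (m : ℝ) / p + 1 := by
      nlinarith
    rcases eq_or_lt_of_le hm' with hmeq | hmlt
    · -- m = p + 1
      have hmRe : (m : ℝ) = (p : ℝ) + 1 := by exact_mod_cast hmeq.symm
      have hb₀e : b₀ = 1 := by
        have hr1le : (m : ℝ) / p / (2 * β - p) ≤ 1 := by
          rw [div_le_one hD, div_le_iff₀ hp0]
          rcases eq_or_lt_of_le hpR with hpe | hpg
          · -- p = 1
            have hβ32 : (3 : ℝ) / 2 < β := by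
              by_contra hcon
              push_neg at hcon
              nlinarith [mul_nonneg (by linarith : (0:ℝ) ≤ 3/2 - β) (by linarith : (0:ℝ) ≤ β + 1/2), hq, hpe]
            nlinarith [hmRe, hpe]
          · -- p ≥ 2
            have hp2 : (2 : ℝ) ≤ (p : ℝ) := by
              have : (1 : ℤ) < p := by exact_mod_cast hpg
              exact_mod_cast this
            nlinarith [hmRe, hβp]
        have : b₀ ≤ 1 := Int.ceil_le.2 (by exact_mod_cast hr1le)
        omega
      have hβle : β ≤ (p : ℝ) + 1 / p := by
        by_contra hcon
        push_neg at hcon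
        have h1 : 0 < β - (p : ℝ) - 1 / p := by linarith
        have h2 : 0 < (p : ℝ) * (β - (p : ℝ) - 1 / p) := mul_pos hp0 h1
        have h3 : (1 / (p : ℝ)) * p = 1 := by field_simp
        nlinarith [hinv, h2, h3, mul_le_mul_of_nonneg_right hβp.le (sub_pos.2 hβp).le]
      have hmp : (m : ℝ) / p = 1 + 1 / p := by rw [hmRe]; field_simp
      have hmP : ((m : ℝ) - p) = 1 := by rw [hmRe]; ring
      rw [hmP, one_mul, hb₀e]
      rw [hb₀e] at hval
      push_cast at hval ⊢
      linarith [hval, hβle, hmp]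
    · -- m ≥ p + 2
      have hm2R : (p : ℝ) + 2 ≤ (m : ℝ) := by
        have : (p : ℤ) + 2 ≤ (m : ℤ) := by omega
        exact_mod_cast this
      have h1 : (a₀ : ℝ) + (b₀ : ℝ) * β < 2 * β - (p : ℝ) + 1 := by nlinarith
      have h2 : 2 * β - (p : ℝ) + 1 ≤ 2 * β := by linarith
      have h3 : 2 * β ≤ ((m : ℝ) - p) * β := by nlinarith
      linarith
  · linarith
  · linarith

lemma case1_not_mem (hβ : 1 < β) (hq : β ^ 2 = (p : ℝ) * β + 1) (hirr : Irrational β)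
    (hp1 : 1 ≤ p) (hm1 : 1 ≤ m) {y : ℝ} (a b : ℤ) (hco : y = (a : ℝ) + (b : ℝ) * β)
    (h1 : -((m : ℝ) / p) < (a : ℝ) + (b : ℝ) * ((p : ℝ) - β))
    (h2 : (a : ℝ) + (b : ℝ) * ((p : ℝ) - β) < -((m : ℝ) / p) + 1)
    (hub : y < ((m : ℝ) - p) * β) : y ∉ Xspec β m := by
  intro hy
  have := case1_lower hβ hq hirr hp1 hm1 hy a b hco h1 h2
  linarith

end Case1c

end CutProject
namespace CutProject

section Case1d

variable {β : ℝ} {p : ℤ} {m : ℕ}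

set_option maxHeartbeats 1000000 in
lemma case1_infinite (hβ : 1 < β) (hp : 1 ≤ p) (hq : β ^ 2 = (p : ℝ) * β + 1)
    (hm' : (p : ℤ) + 1 ≤ (m : ℤ)) :
    {y : ℝ | 0 < y ∧ y ∈ sigmaCP β ((p : ℝ) - β)
      (Set.Ioo (-((m : ℝ) * β) / (β ^ 2 - 1)) ((m : ℝ) * β ^ 2 / (β ^ 2 - 1)))
      ∧ y ∉ Xspec β m}.Infinite := by
  have hβ0 : (0 : ℝ) < β := by linarith
  have hβne : β ≠ 0 := ne_of_gt hβ0
  have hpR : (1 : ℝ) ≤ (p : ℝ) := by exact_mod_cast hp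
  have hp0 : (0 : ℝ) < (p : ℝ) := by linarith
  have hpne : (p : ℝ) ≠ 0 := ne_of_gt hp0
  have hinv : β * ((p : ℝ) - β) = -1 := by linear_combination -hq
  have h'neg : (p : ℝ) - β < 0 := by nlinarith [hinv, hβ0]
  have h'gt : -1 < (p : ℝ) - β := by nlinarith [hinv]
  have hβp : (p : ℝ) < β := by linarith
  have hβp1 : β < (p : ℝ) + 1 := by linarith
  have hmR : (p : ℝ) + 1 ≤ (m : ℝ) := by exact_mod_cast hm'
  have hm1 : 1 ≤ m := by
    have : (1 : ℤ) ≤ (m : ℤ) := by omega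
    exact_mod_cast this
  have hm1R : (1 : ℝ) ≤ (m : ℝ) := by exact_mod_cast hm1
  have hirr : Irrational β :=
    beta_irrational (p := p) (e := 1) hβ (Or.inl ⟨rfl, hp⟩) (by push_cast; linarith [hq])
  have hPS : ((p : ℝ) - β) * ((m : ℝ) * β / p) = -((m : ℝ) / p) := by
    have h1 : ((p : ℝ) - β) * ((m : ℝ) * β / p) = ((m : ℝ) / p) * (β * ((p : ℝ) - β)) := by
      ring
    rw [h1, hinv]; ring
  have hS2 : (m : ℝ) * β / p = (m : ℝ) + ((m : ℝ) / p) * (β - p) := by field_simp; ring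
  -- identification of the window endpoints
  have hb2 : β ^ 2 - 1 = (p : ℝ) * β := by linear_combination hq
  have hΩL : -((m : ℝ) * β) / (β ^ 2 - 1) = -((m : ℝ) / p) := by
    rw [hb2]
    field_simp
  have hΩS : (m : ℝ) * β ^ 2 / (β ^ 2 - 1) = (m : ℝ) * β / p := by
    rw [hb2]
    rw [div_eq_div_iff (by positivity) hpne]
    ring
  obtain ⟨a₀, b₀, hpos0, hub0, hw1, hw2⟩ := case1_base hβ hq hirr hp hm'
  set g : ℕ → ℤ × ℤ := fun k => Nat.rec (a₀, b₀)
    (fun _ pr => (pr.1 + p * pr.2, (m : ℤ) + pr.2 + p * (pr.1 + p * pr.2))) k with hg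
  set val : ℕ → ℝ := fun k => ((g k).1 : ℝ) + ((g k).2 : ℝ) * β with hvaldef
  set cj : ℕ → ℝ := fun k => ((g k).1 : ℝ) + ((g k).2 : ℝ) * ((p : ℝ) - β) with hcjdef
  -- one combined step: y ↦ β * (β * y + m)
  have hval_succ : ∀ k, val (k + 1) = β * (β * val k + m) := by
    intro k
    show (((g k).1 + p * (g k).2 : ℤ) : ℝ)
        + (((m : ℤ) + (g k).2 + p * ((g k).1 + p * (g k).2) : ℤ) : ℝ) * β
      = β * (β * (((g k).1 : ℝ) + ((g k).2 : ℝ) * β) + m)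
    push_cast
    linear_combination (-((g k).1 : ℝ) - ((g k).2 : ℝ) * (p : ℝ) - ((g k).2 : ℝ) * β) * hq
  have hcj_succ : ∀ k, cj (k + 1) = ((p : ℝ) - β) * (((p : ℝ) - β) * cj k + m) := by
    intro k
    show (((g k).1 + p * (g k).2 : ℤ) : ℝ)
        + (((m : ℤ) + (g k).2 + p * ((g k).1 + p * (g k).2) : ℤ) : ℝ) * ((p : ℝ) - β)
      = ((p : ℝ) - β) * (((p : ℝ) - β)
          * (((g k).1 : ℝ) + ((g k).2 : ℝ) * ((p : ℝ) - β)) + m)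
    push_cast
    linear_combination (-(((g k).1 : ℝ) + ((g k).2 : ℝ) * (p : ℝ)
      + ((g k).2 : ℝ) * ((p : ℝ) - β))) * hq
  -- intermediate step identities
  have hvz : ∀ k, (((m : ℤ) + (g k).2 : ℤ) : ℝ) + (((g k).1 + p * (g k).2 : ℤ) : ℝ) * β
      = β * val k + m := by
    intro k
    show _ = β * (((g k).1 : ℝ) + ((g k).2 : ℝ) * β) + (m : ℝ)
    push_cast
    linear_combination (-((g k).2 : ℝ)) * hq
  have hcz : ∀ k, (((m : ℤ) + (g k).2 : ℤ) : ℝ)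
      + (((g k).1 + p * (g k).2 : ℤ) : ℝ) * ((p : ℝ) - β)
      = ((p : ℝ) - β) * cj k + m := by
    intro k
    show _ = ((p : ℝ) - β) * (((g k).1 : ℝ) + ((g k).2 : ℝ) * ((p : ℝ) - β)) + (m : ℝ)
    push_cast
    linear_combination (-((g k).2 : ℝ)) * hq
  have hInv : ∀ k, 0 < val k ∧ (-((m : ℝ) / p) < cj k ∧ cj k < -((m : ℝ) / p) + β)
      ∧ val k ∉ Xspec β m := by
    intro k
    induction k with
    | zero =>
      refine ⟨hpos0, ⟨hw1, ?_⟩,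
        case1_not_mem hβ hq hirr hp hm1 a₀ b₀ rfl hw1 hw2 hub0⟩
      have e0 : cj 0 = (a₀ : ℝ) + (b₀ : ℝ) * ((p : ℝ) - β) := rfl
      rw [e0]
      linarith
    | succ k ih =>
      obtain ⟨hposk, ⟨hwk1, hwk2⟩, hnk⟩ := ih
      -- the intermediate point z = β y + m
      have hzpos : 0 < β * val k + m := by positivity
      have hcz1 : (m : ℝ) * β / p - 1 < ((p : ℝ) - β) * cj k + m := by
        have hmul := mul_lt_mul_of_neg_left hwk2 h'neg
        have e1 : ((p : ℝ) - β) * (-((m : ℝ) / p) + β)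
            = ((m : ℝ) / p) * (β - p) + (β * ((p : ℝ) - β)) := by ring
        rw [e1, hinv] at hmul
        linarith [hS2]
      have hcz2 : ((p : ℝ) - β) * cj k + m < (m : ℝ) * β / p := by
        have hmul := mul_lt_mul_of_neg_left hwk1 h'neg
        have e1 : ((p : ℝ) - β) * (-((m : ℝ) / p)) = ((m : ℝ) / p) * (β - p) := by ring
        rw [e1] at hmul
        linarith [hS2]
      have hznot : (β * val k + m) ∉ Xspec β m := by
        intro hmem
        obtain ⟨w, hw, hzw⟩ := case1_force_m hβ hq hirr hp hm1 hmem
          ((m : ℤ) + (g k).2) ((g k).1 + p * (g k).2)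
          (by rw [hvz k]) (by rw [hcz k]; exact hcz1) (by rw [hcz k]; exact hcz2)
        have hweq : w = val k := by
          have h1 : (m : ℝ) + β * w = (m : ℝ) + β * val k := by rw [← hzw]; ring
          exact mul_left_cancel₀ hβne (add_left_cancel h1)
        rw [hweq] at hw
        exact hnk hw
      have hval' : val (k + 1) = β * (β * val k + m) := hval_succ k
      have hcj' : cj (k + 1) = ((p : ℝ) - β) * (((p : ℝ) - β) * cj k + m) := hcj_succ k
      have hcjk1 : -((m : ℝ) / p) < cj (k + 1) := by
        rw [hcj']
        have hmul := mul_lt_mul_of_neg_left hcz2 h'neg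
        rw [hPS] at hmul
        linarith
      have hcjk2 : cj (k + 1) < -((m : ℝ) / p) + (β - p) := by
        rw [hcj']
        have hmul := mul_lt_mul_of_neg_left hcz1 h'neg
        have e1 : ((p : ℝ) - β) * ((m : ℝ) * β / p - 1)
            = ((p : ℝ) - β) * ((m : ℝ) * β / p) - ((p : ℝ) - β) := by ring
        rw [e1, hPS] at hmul
        linarith
      have hpos' : 0 < val (k + 1) := by rw [hval']; positivity
      have hnot' : val (k + 1) ∉ Xspec β m := by
        intro hmem
        obtain ⟨v, hv, hwv⟩ := case1_force_0 hβ hq hirr hp hm1 hmem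
          (g (k + 1)).1 (g (k + 1)).2 rfl hcjk1 (by linarith)
        have hveq : v = β * val k + m := by
          apply mul_left_cancel₀ hβne
          rw [← hwv, hval']
        rw [hveq] at hv
        exact hznot hv
      exact ⟨hpos', ⟨hcjk1, by linarith⟩, hnot'⟩
  have hmono : StrictMono val := by
    apply strictMono_nat_of_lt_succ
    intro k
    have h1 := (hInv k).1
    rw [hval_succ k]
    have hb21 : 0 < β ^ 2 - 1 := by nlinarith
    nlinarith [mul_pos hb21 h1, mul_nonneg hβ0.le (by positivity : (0:ℝ) ≤ (m : ℝ))]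
  apply Set.infinite_of_injective_forall_mem (f := val) hmono.injective
  intro k
  obtain ⟨h1, ⟨h2, h3⟩, h4⟩ := hInv k
  refine ⟨h1, ⟨(g k).1, (g k).2, rfl, ?_, ?_⟩, h4⟩
  · rw [hΩL]; exact h2
  · rw [hΩS]
    have hLS : -((m : ℝ) / p) + β ≤ (m : ℝ) * β / p := by
      have h1' : β ≤ ((m : ℝ) * β + m) / p := by
        rw [le_div_iff₀ hp0]; nlinarith
      have h2' : ((m : ℝ) * β + m) / p = (m : ℝ) * β / p + (m : ℝ) / p := add_div _ _ _
      linarith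
    linarith

end Case1d

end CutProject


/-- Proposition: unless `m = ⌊β⌋` and `β² = pβ + 1`, there are infinitely many `y > 0` with
`y ∈ Σ_β(Ω)` and `y ∉ X^m(β)`. -/
theorem cutProject_not_spectrum_infinite (β : ℝ) (p : ℤ) (m : ℕ) (Ω : Set ℝ)
    (hβ : 1 < β)
    (hcase :
      (1 ≤ p ∧ β ^ 2 = p * β + 1 ∧
        Ω = Set.Ioo (-((m : ℝ) * β) / (β ^ 2 - 1)) ((m : ℝ) * β ^ 2 / (β ^ 2 - 1))) ∨
      (3 ≤ p ∧ β ^ 2 = p * β - 1 ∧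
        Ω = Set.Ico (0 : ℝ) ((m : ℝ) * β / (β - 1))))
    (hm : ⌊β⌋ ≤ (m : ℤ))
    (hexc : ¬((m : ℤ) = ⌊β⌋ ∧ β ^ 2 = p * β + 1)) :
    {y : ℝ | 0 < y ∧ y ∈ sigmaCP β ((p : ℝ) - β) Ω ∧ y ∉ Xspec β m}.Infinite := by
  have hβ0 : (0 : ℝ) < β := by linarith
  rcases hcase with ⟨hp, hq, hΩ⟩ | ⟨hp, hq, hΩ⟩
  · -- case β² = pβ + 1
    have hpR : (1 : ℝ) ≤ (p : ℝ) := by exact_mod_cast hp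
    have hβp : (p : ℝ) < β := by nlinarith
    have hβp1 : β < (p : ℝ) + 1 := by nlinarith
    have hfl : ⌊β⌋ = p := Int.floor_eq_iff.2 ⟨hβp.le, by push_cast; linarith⟩
    have hne : (m : ℤ) ≠ p := by
      intro h
      exact hexc ⟨by rw [hfl]; exact h, hq⟩
    have hm1 : (p : ℤ) + 1 ≤ (m : ℤ) := by
      rw [hfl] at hm
      omega
    rw [hΩ]
    exact CutProject.case1_infinite hβ hp hq hm1
  · -- case β² = pβ - 1
    have hpR : (3 : ℝ) ≤ (p : ℝ) := by exact_mod_cast hp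
    have hβp : β < (p : ℝ) := by nlinarith
    have hβp1 : (p : ℝ) - 1 < β := by nlinarith
    have hfl : ⌊β⌋ = p - 1 := Int.floor_eq_iff.2 ⟨by push_cast; linarith, by push_cast; linarith⟩
    have hm1 : (p : ℤ) - 1 ≤ (m : ℤ) := by rw [hfl] at hm; omega
    rw [hΩ]
    exact CutProject.case2_infinite hβ hp hq hm1
end

section
/- Let β > 1 be the root of x² − px + 1 with integer p ≥ 3, and let m ∈ ℕ with m ≥ ⌊β⌋ = p − 1. Then every y ∈ X^m(β) can be written as y = ∑_{k=0}^{n−1} r_k β^k with digits r_k ∈ {0,1,…,m} of the following form: there exists j with 0 ≤ j ≤ n such that r_k = m for all k < j; if j < n then r_j ∈ {0,1,…,m−1}; r_k ∈ {0,1,…,p−1} for all k > j; and for every i with j < i ≤ n−1 the finite digit word r_i r_{i−1} ⋯ r_{j+1} (read from most significant digit) is lexicographically strictly smaller than the infinite word (p−1)(p−2)(p−2)(p−2)⋯. -/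
namespace SpecRep

open Finset

variable {β : ℝ} {q m : ℕ}

lemma beta_facts (hb : 1 < β) (hq : 3 ≤ q) (he : β ^ 2 = (q:ℝ) * β - 1) :
    0 < β ∧ (q:ℝ) - 1 < β ∧ β < q ∧ 2 < β := by
  have hb0 : (0:ℝ) < β := by linarith
  have h1 : β * ((q:ℝ) - β) = 1 := by nlinarith [he]
  have hlt : β < q := by nlinarith
  have hq3 : (3:ℝ) ≤ q := by exact_mod_cast hq
  have hgt : (q:ℝ) - 1 < β := by nlinarith
  exact ⟨hb0, hgt, hlt, by linarith⟩

lemma qpow (he : β ^ 2 = (q:ℝ) * β - 1) (k : ℕ) :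
    (q:ℝ) * β ^ (k+1) = β ^ (k+2) + β ^ k := by
  have : β ^ (k+2) = β ^ k * β ^ 2 := by ring
  rw [this, he]; ring

lemma seg (he : β ^ 2 = (q:ℝ) * β - 1) (e r : ℕ) :
    ((q:ℝ) - 1) * β ^ (e+1+r) + ((q:ℝ) - 2) * ∑ t ∈ Finset.Ico (e+1) (e+1+r), β ^ t
      = β ^ (e+r+2) + β ^ e - β ^ (e+1) := by
  induction r with
  | zero => simp [qpow he e]; linarith [qpow he e]
  | succ r ih =>
      have hsplit : ∑ t ∈ Finset.Ico (e+1) (e+1+(r+1)), β ^ t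
          = (∑ t ∈ Finset.Ico (e+1) (e+1+r), β ^ t) + β ^ (e+1+r) := by
        rw [show e+1+(r+1) = (e+1+r) + 1 from by omega,
          Finset.sum_Ico_succ_top (by omega)]
      rw [hsplit, show e+1+(r+1) = e+1+r+1 from by omega,
        show e+(r+1)+2 = e+1+r+2 from by omega]
      rw [show e+r+2 = e+1+r+1 from by omega] at ih
      have h1 := qpow he (e+1+r)
      linarith [ih, h1]

lemma pat (he : β ^ 2 = (q:ℝ) * β - 1) (e s : ℕ) (hs : e + 2 ≤ s) :
    ((q:ℝ) - 1) * β ^ (e+1) + ((q:ℝ) - 2) * ∑ t ∈ Finset.Ico (e+2) s, β ^ t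
      + ((q:ℝ) - 1) * β ^ s = β ^ (s+1) + β ^ e := by
  obtain ⟨r, rfl⟩ : ∃ r, s = e + 2 + r := ⟨s - (e+2), by omega⟩
  have h := seg he e (r+1)
  rw [show e+1+(r+1) = e+2+r from by omega, show e+(r+1)+2 = e+2+r+1 from by omega] at h
  have hsplit : ∑ t ∈ Finset.Ico (e+1) (e+2+r), β ^ t
      = β ^ (e+1) + ∑ t ∈ Finset.Ico (e+2) (e+2+r), β ^ t := by
    rw [Finset.sum_eq_sum_Ico_succ_bot (by omega)]
  rw [hsplit] at h
  linarith [h]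

lemma idlem (he : β ^ 2 = (q:ℝ) * β - 1) (j d : ℕ) :
    ((q:ℝ) - 1) * ∑ k ∈ Finset.Ico (j+1) (j+2+d), β ^ k + β ^ (j+1)
      = β ^ (j+2+d) + β ^ j + ∑ k ∈ Finset.Ico (j+1) (j+1+d), β ^ k := by
  induction d with
  | zero =>
      rw [show j+2+0 = (j+1)+1 from by omega]
      rw [Finset.sum_Ico_succ_top (by omega)]
      simp
      linarith [qpow he j]
  | succ d ih =>
      have h1 : ∑ k ∈ Finset.Ico (j+1) (j+2+(d+1)), β ^ k
          = (∑ k ∈ Finset.Ico (j+1) (j+2+d), β ^ k) + β ^ (j+2+d) := by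
        rw [show j+2+(d+1) = (j+2+d)+1 from by omega,
          Finset.sum_Ico_succ_top (by omega)]
      have h2 : ∑ k ∈ Finset.Ico (j+1) (j+1+(d+1)), β ^ k
          = (∑ k ∈ Finset.Ico (j+1) (j+1+d), β ^ k) + β ^ (j+1+d) := by
        rw [show j+1+(d+1) = (j+1+d)+1 from by omega,
          Finset.sum_Ico_succ_top (by omega)]
      rw [h1, h2, show j+2+(d+1) = j+1+d+2 from by omega,
        show j+2+d = j+1+d+1 from by omega]
      rw [show j+2+d = j+1+d+1 from by omega] at ih
      have h3 := qpow he (j+1+d)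
      linarith [ih, h3]

/-- W3: bound for "clean" words (letters ≤ q-1, no forbidden pattern inside) -/
lemma w3 (hb : 1 < β) (hq : 3 ≤ q) (he : β ^ 2 = (q:ℝ) * β - 1) (c : ℕ → ℕ) :
    ∀ b a, a ≤ b →
    (∀ k, a+1 ≤ k → k ≤ b → c k ≤ q - 1) →
    (∀ x s, a+1 ≤ x → x < s → s ≤ b → c x = q - 1 → c s = q - 1 →
        ¬(∀ t, x < t → t < s → c t = q - 2)) →
    ∑ k ∈ Finset.Icc (a+1) b, (c k : ℝ) * β ^ k ≤ β ^ (b+1) + β ^ a - β ^ (a+1) := by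
  intro b
  induction b using Nat.strong_induction_on with
  | _ b IH =>
  intro a hab hdig hcl
  obtain ⟨hb0, hq1b, hbq, hb2⟩ := beta_facts hb hq he
  rcases eq_or_lt_of_le hab with rfl | hlt
  · rw [Finset.Icc_eq_empty (by omega)]
    have hpa : (0:ℝ) < β ^ a := pow_pos (by linarith) a
    simp only [Finset.sum_empty]
    linarith
  · obtain ⟨b', rfl⟩ : ∃ b', b = b' + 1 := ⟨b - 1, by omega⟩
    have hab1 : a + 1 ≤ b' + 1 := hlt
    have htop : ∑ k ∈ Finset.Icc (a+1) (b'+1), (c k:ℝ) * β ^ k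
        = (∑ k ∈ Finset.Icc (a+1) b', (c k:ℝ) * β ^ k) + (c (b'+1):ℝ) * β ^ (b'+1) :=
      Finset.sum_Icc_succ_top (by omega) _
    have hq2 : ((q-2:ℕ):ℝ) = (q:ℝ) - 2 := by
      have h2 : 2 ≤ q := by omega
      push_cast [h2]; ring
    have hq1c : ((q-1:ℕ):ℝ) = (q:ℝ) - 1 := by
      have h2 : 1 ≤ q := by omega
      push_cast [h2]; ring
    by_cases hcb : c (b'+1) = q - 1
    · by_cases hall : ∀ t, a+1 ≤ t → t ≤ b' → c t = q - 2
      · -- run to bottom: exact value via seg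
        obtain ⟨r, hr⟩ : ∃ r, b' + 1 = a + 1 + r := ⟨b' - a, by omega⟩
        have hmid : ∑ k ∈ Finset.Icc (a+1) b', (c k:ℝ) * β ^ k
            = ((q:ℝ)-2) * ∑ k ∈ Finset.Ico (a+1) (b'+1), β ^ k := by
          rw [Finset.mul_sum, ← Finset.Ico_add_one_right_eq_Icc]
          refine Finset.sum_congr rfl ?_
          intro k hk
          rw [Finset.mem_Ico] at hk
          rw [hall k hk.1 (by omega), hq2]
        have hseg := seg he a r
        rw [← hr] at hseg
        rw [show a + r + 2 = b' + 2 from by omega] at hseg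
        rw [htop, hmid, hcb, hq1c]
        linarith [hseg]
      · -- stopper
        push_neg at hall
        obtain ⟨t0, ht1, ht2, ht3⟩ := hall
        set P : ℕ → Prop := fun t => a+1 ≤ t ∧ c t ≠ q - 2 with hP
        have hPt0 : P t0 := ⟨ht1, ht3⟩
        set e := Nat.findGreatest P b' with hedef
        have hPe : P e := Nat.findGreatest_spec ht2 hPt0
        have heb : e ≤ b' := Nat.findGreatest_le b'
        have hgreat : ∀ k, e < k → k ≤ b' → c k = q - 2 := by
          intro k hk1 hk2
          by_contra hne
          exact Nat.findGreatest_is_greatest hk1 hk2 ⟨by omega, hne⟩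
        have hae : a + 1 ≤ e := hPe.1
        have hce1 : c e ≠ q - 1 := by
          intro hceq
          exact hcl e (b'+1) hae (by omega) (le_refl _) hceq hcb
            (fun t h1 h2 => hgreat t h1 (by omega))
        have hce3 : c e ≤ q - 3 := by
          have := hdig e hae (by omega)
          have h2 := hPe.2
          omega
        clear_value e
        -- decompose
        obtain ⟨e0, rfl⟩ : ∃ e0, e = a + 1 + e0 := ⟨e - (a+1), by omega⟩
        have hsplit1 : ∑ k ∈ Finset.Icc (a+1) (b'+1), (c k:ℝ) * β ^ k
            = (∑ k ∈ Finset.Ico (a+1) (a+1+e0), (c k:ℝ) * β ^ k)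
              + ∑ k ∈ Finset.Ico (a+1+e0) (b'+2), (c k:ℝ) * β ^ k := by
          rw [← Finset.Ico_add_one_right_eq_Icc, show b'+1+1 = b'+2 from rfl]
          rw [Finset.sum_Ico_consecutive _ (by omega) (by omega)]
        have hsplit2 : ∑ k ∈ Finset.Ico (a+1+e0) (b'+2), (c k:ℝ) * β ^ k
            = (c (a+1+e0):ℝ) * β ^ (a+1+e0)
              + ∑ k ∈ Finset.Ico (a+1+e0+1) (b'+2), (c k:ℝ) * β ^ k := by
          rw [Finset.sum_eq_sum_Ico_succ_bot (by omega)]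
        have hsplit3 : ∑ k ∈ Finset.Ico (a+1+e0+1) (b'+2), (c k:ℝ) * β ^ k
            = (∑ k ∈ Finset.Ico (a+1+e0+1) (b'+1), (c k:ℝ) * β ^ k)
              + (c (b'+1):ℝ) * β ^ (b'+1) := by
          rw [show b'+2 = (b'+1)+1 from rfl, Finset.sum_Ico_succ_top (by omega)]
        have hmid : ∑ k ∈ Finset.Ico (a+1+e0+1) (b'+1), (c k:ℝ) * β ^ k
            = ((q:ℝ)-2) * ∑ k ∈ Finset.Ico (a+1+e0+1) (b'+1), β ^ k := by
          rw [Finset.mul_sum]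
          refine Finset.sum_congr rfl ?_
          intro k hk
          rw [Finset.mem_Ico] at hk
          rw [hgreat k (by omega) (by omega), hq2]
        obtain ⟨r, hr⟩ : ∃ r, b' + 1 = (a+1+e0) + 1 + r := ⟨b' - (a+1+e0), by omega⟩
        have hseg := seg he (a+1+e0) r
        rw [← hr] at hseg
        rw [show a+1+e0 + r + 2 = b' + 2 from by omega] at hseg
        -- IH on the sub-word below the stopper
        have hIH := IH (a + e0) (by omega) a (by omega)
          (fun k h1 h2 => hdig k h1 (by omega))
          (fun x s h1 h2 h3 => hcl x s h1 h2 (by omega))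
        have hIcc : ∑ k ∈ Finset.Ico (a+1) (a+1+e0), (c k:ℝ) * β ^ k
            = ∑ k ∈ Finset.Icc (a+1) (a+e0), (c k:ℝ) * β ^ k := by
          rw [← Finset.Ico_add_one_right_eq_Icc, show a+e0+1 = a+1+e0 from by omega]
        -- bounds
        have hceb : (c (a+1+e0):ℝ) * β ^ (a+1+e0) ≤ ((q:ℝ)-3) * β ^ (a+1+e0) := by
          apply mul_le_mul_of_nonneg_right _ (by positivity)
          have h3 : ((q-3:ℕ):ℝ) = (q:ℝ) - 3 := by
            have h2 : 3 ≤ q := hq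
            push_cast [h2]; ring
          calc (c (a+1+e0):ℝ) ≤ ((q-3:ℕ):ℝ) := by exact_mod_cast hce3
          _ = _ := h3
        have hfin : ((q:ℝ)-1) * β ^ (a+1+e0) ≤ β ^ (a+1+e0+1) := by
          calc ((q:ℝ)-1) * β ^ (a+1+e0) ≤ β * β ^ (a+1+e0) :=
            mul_le_mul_of_nonneg_right (le_of_lt hq1b) (by positivity)
          _ = β ^ (a+1+e0+1) := by ring
        rw [hsplit1, hsplit2, hsplit3, hmid, hIcc, hcb, hq1c]
        have hIH' := hIH
        rw [show a + e0 + 1 = a+1+e0 from by omega] at hIH'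
        linarith [hseg, hIH', hceb, hfin]
    · -- top letter ≤ q-2
      have h1 : c (b'+1) ≤ q - 2 := by
        have := hdig (b'+1) (by omega) le_rfl; omega
      have hIH := IH b' (by omega) a (by omega)
        (fun k hk1 hk2 => hdig k hk1 (by omega))
        (fun x s h1 h2 h3 => hcl x s h1 h2 (by omega))
      have hcast : (c (b'+1):ℝ) ≤ (q:ℝ) - 2 := by
        calc (c (b'+1):ℝ) ≤ ((q-2:ℕ):ℝ) := by exact_mod_cast h1
        _ = _ := hq2
      have hpow : (c (b'+1):ℝ) * β ^ (b'+1) ≤ ((q:ℝ)-2) * β ^ (b'+1) :=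
        mul_le_mul_of_nonneg_right hcast (by positivity)
      have hq1 : ((q:ℝ)-1) * β ^ (b'+1) ≤ β ^ (b'+2) := by
        calc ((q:ℝ)-1) * β ^ (b'+1) ≤ β * β ^ (b'+1) :=
          mul_le_mul_of_nonneg_right (le_of_lt hq1b) (by positivity)
        _ = β ^ (b'+2) := by ring
      rw [htop]
      have hbpos : (0:ℝ) < β ^ (b'+1) := by positivity
      linarith [hIH, hpow, hq1]


noncomputable section

def Pc (β : ℝ) (c : ℕ → ℕ) (i : ℕ) : ℝ := ∑ k ∈ Finset.range i, (c k : ℝ) * β ^ k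

def Sg (β : ℝ) (i : ℕ) : ℝ := ∑ k ∈ Finset.range i, β ^ k

def Kinv (β : ℝ) (m : ℕ) (c : ℕ → ℕ) : Prop :=
  ∀ i : ℕ, β * Pc β c (i+1) + β ^ i ≤ (m : ℝ) * β * Sg β (i+1) + β ^ (i+1)

lemma Pc_succ (β : ℝ) (c : ℕ → ℕ) (i : ℕ) :
    Pc β c (i+1) = Pc β c i + (c i : ℝ) * β ^ i := Finset.sum_range_succ _ _

lemma Sg_succ (β : ℝ) (i : ℕ) : Sg β (i+1) = Sg β i + β ^ i := Finset.sum_range_succ _ _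

lemma Pc_congr {β : ℝ} {c c' : ℕ → ℕ} {i : ℕ} (h : ∀ k, k < i → c k = c' k) :
    Pc β c i = Pc β c' i := by
  refine Finset.sum_congr rfl ?_
  intro k hk
  rw [h k (Finset.mem_range.mp hk)]

lemma Pc_mono {β : ℝ} (hb0 : 0 < β) (c : ℕ → ℕ) {i i' : ℕ} (h : i ≤ i') :
    Pc β c i ≤ Pc β c i' := by
  apply Finset.sum_le_sum_of_subset_of_nonneg (Finset.range_subset_range.mpr h)
  intro k _ _
  positivity

lemma Pc_split {β : ℝ} (c : ℕ → ℕ) {j x : ℕ} (h : j ≤ x) :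
    Pc β c x = Pc β c j + ∑ k ∈ Finset.Ico j x, (c k : ℝ) * β ^ k := by
  unfold Pc
  rw [Finset.range_eq_Ico, Finset.range_eq_Ico]
  exact (Finset.sum_Ico_consecutive (fun k => (c k : ℝ) * β ^ k) (Nat.zero_le j) h).symm

lemma Sg_split {β : ℝ} {j x : ℕ} (h : j ≤ x) :
    Sg β x = Sg β j + ∑ k ∈ Finset.Ico j x, β ^ k := by
  unfold Sg
  rw [Finset.range_eq_Ico, Finset.range_eq_Ico]
  exact (Finset.sum_Ico_consecutive (fun k => β ^ k) (Nat.zero_le j) h).symm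

lemma Pc_run {β : ℝ} {c : ℕ → ℕ} {m j : ℕ} (hrun : ∀ k, k < j → c k = m) :
    Pc β c j = (m : ℝ) * Sg β j := by
  unfold Pc Sg
  rw [Finset.mul_sum]
  refine Finset.sum_congr rfl ?_
  intro k hk
  rw [hrun k (Finset.mem_range.mp hk)]

/-- From the invariant: the first non-m digit is < m (so ≤ m-1). -/
lemma slot_le {β : ℝ} {q m : ℕ} (hb : 1 < β) (hq : 3 ≤ q) (he : β ^ 2 = (q:ℝ) * β - 1)
    {c : ℕ → ℕ} (hK : Kinv β m c) {j : ℕ} (hrun : ∀ k, k < j → c k = m) :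
    c j ≤ m := by
  obtain ⟨hb0, _, _, _⟩ := beta_facts hb hq he
  have hK1 := hK j
  rw [Pc_succ, Pc_run hrun, Sg_succ] at hK1
  have hp1 : (0:ℝ) < β ^ j := by positivity
  have hp2 : (0:ℝ) < β ^ (j+1) := by positivity
  have hpow : β * β ^ j = β ^ (j+1) := by ring
  have hlt : (c j : ℝ) * β ^ (j+1) < ((m:ℝ) + 1) * β ^ (j+1) := by nlinarith [hK1]
  have : (c j : ℝ) < (m:ℝ) + 1 := by
    have := lt_of_mul_lt_mul_right hlt hp2.le
    exact this
  have : c j < m + 1 := by exact_mod_cast this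
  omega

/-- The key obligation: pushing +1 at position x-1 preserves the invariant,
    when x is the lowest violation site. -/
lemma oblig {β : ℝ} {q m : ℕ} (hb : 1 < β) (hq : 3 ≤ q) (he : β ^ 2 = (q:ℝ) * β - 1)
    (hmq : q - 1 ≤ m) {c : ℕ → ℕ} {j x : ℕ}
    (hjx : j + 1 ≤ x)
    (hrun : ∀ k, k < j → c k = m)
    (hslot : c j + 1 ≤ m)
    (hword : ∀ k, j+1 ≤ k → k < x → c k ≤ q - 1)
    (hcl : ∀ y s, j+1 ≤ y → y < s → s < x → c y = q-1 → c s = q-1 →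
        ¬(∀ t, y < t → t < s → c t = q-2)) :
    β * Pc β c x + β ^ (x-1) ≤ (m:ℝ) * β * Sg β x := by
  obtain ⟨hb0, hq1b, hbq, hb2⟩ := beta_facts hb hq he
  have hm1 : ((q:ℝ) - 1) ≤ (m:ℝ) := by
    have h1 : ((q-1:ℕ):ℝ) ≤ (m:ℝ) := by exact_mod_cast hmq
    have h2 : ((q-1:ℕ):ℝ) = (q:ℝ) - 1 := by
      have : 1 ≤ q := by omega
      push_cast [this]; ring
    linarith [h1, h2.symm.le]
  have hslotR : (c j : ℝ) ≤ (m:ℝ) - 1 := by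
    have : (c j:ℝ) + 1 ≤ (m:ℝ) := by exact_mod_cast hslot
    linarith
  obtain ⟨d, rfl⟩ : ∃ d, x = j + 1 + d := ⟨x - (j+1), by omega⟩
  rcases Nat.eq_zero_or_pos d with rfl | hd
  · -- x = j+1
    rw [show j+1+0 = j+1 from rfl, show j+1-1 = j from by omega]
    rw [Pc_succ, Pc_run hrun, Sg_succ]
    have h1 : (c j:ℝ) * β ^ (j+1) ≤ ((m:ℝ)-1) * β ^ (j+1) :=
      mul_le_mul_of_nonneg_right hslotR (by positivity)
    have h2 : β ^ j ≤ β ^ (j+1) := by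
      have h3 : β ^ (j+1) = β ^ j * β := by ring
      nlinarith [pow_pos hb0 j]
    have e1 : β * ((m:ℝ) * Sg β j + (c j:ℝ) * β ^ j)
        = (m:ℝ) * β * Sg β j + (c j:ℝ) * β ^ (j+1) := by ring
    have e2 : (m:ℝ) * β * (Sg β j + β ^ j)
        = (m:ℝ) * β * Sg β j + (m:ℝ) * β ^ (j+1) := by ring
    linarith [h1, h2, e1.le, e1.ge, e2.le, e2.ge]
  · -- x ≥ j+2
    obtain ⟨d0, rfl⟩ : ∃ d0, d = d0 + 1 := ⟨d - 1, by omega⟩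
    have hx2 : j + 1 + (d0+1) = j + 2 + d0 := by omega
    rw [hx2]
    -- word bound from w3
    have hW := w3 hb hq he c (j+1+d0) j (by omega)
      (fun k h1 h2 => hword k h1 (by omega))
      (fun y s h1 h2 h3 => hcl y s h1 h2 (by omega))
    have hIccIco : Finset.Icc (j+1) (j+1+d0) = Finset.Ico (j+1) (j+2+d0) := by
      rw [← Finset.Ico_add_one_right_eq_Icc, show j+1+d0+1 = j+2+d0 from by omega]
    rw [hIccIco] at hW
    -- decompose Pc and Sg
    have hPs : Pc β c (j+2+d0)
        = (m:ℝ) * Sg β j + (c j:ℝ) * β ^ j + ∑ k ∈ Finset.Ico (j+1) (j+2+d0), (c k:ℝ) * β ^ k := by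
      rw [Pc_split c (show j+1 ≤ j+2+d0 from by omega), Pc_succ, Pc_run hrun]
    have hSs : Sg β (j+2+d0)
        = Sg β j + β ^ j + ∑ k ∈ Finset.Ico (j+1) (j+2+d0), β ^ k := by
      rw [Sg_split (show j+1 ≤ j+2+d0 from by omega), Sg_succ]
    have hid := idlem he j d0
    -- mβ ∑ ≥ (q-1)β ∑
    have hsum_nonneg : (0:ℝ) ≤ ∑ k ∈ Finset.Ico (j+1) (j+2+d0), β ^ k :=
      Finset.sum_nonneg (fun k _ => by positivity)
    have hmsum : ((q:ℝ)-1) * ∑ k ∈ Finset.Ico (j+1) (j+2+d0), β ^ k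
        ≤ (m:ℝ) * ∑ k ∈ Finset.Ico (j+1) (j+2+d0), β ^ k :=
      mul_le_mul_of_nonneg_right hm1 hsum_nonneg
    -- β^(x-1) ≤ β^(j+1) + β * ∑'
    have hlast : β ^ (j+2+d0-1) ≤ β ^ (j+1) + β * ∑ k ∈ Finset.Ico (j+1) (j+1+d0), β ^ k := by
      rcases Nat.eq_zero_or_pos d0 with rfl | hd0
      · rw [show j+2+0-1 = j+1 from by omega]
        have : (0:ℝ) ≤ β * ∑ k ∈ Finset.Ico (j+1) (j+1+0), β ^ k := by
          apply mul_nonneg (le_of_lt hb0)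
          exact Finset.sum_nonneg (fun k _ => by positivity)
        linarith
      · have hmem : j + d0 ∈ Finset.Ico (j+1) (j+1+d0) := by
          rw [Finset.mem_Ico]; omega
        have hle : β ^ (j+d0) ≤ ∑ k ∈ Finset.Ico (j+1) (j+1+d0), β ^ k :=
          Finset.single_le_sum (fun k _ => by positivity) hmem
        have h2 : β ^ (j+2+d0-1) = β * β ^ (j+d0) := by
          rw [show j+2+d0-1 = (j+d0)+1 from by omega]; ring
        have h3 : β * β ^ (j+d0) ≤ β * ∑ k ∈ Finset.Ico (j+1) (j+1+d0), β ^ k :=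
          mul_le_mul_of_nonneg_left hle (le_of_lt hb0)
        have h4 : (0:ℝ) < β ^ (j+1) := by positivity
        linarith [h2.le, h3]
    -- put it together
    have hWmul : β * ∑ k ∈ Finset.Ico (j+1) (j+2+d0), (c k:ℝ) * β ^ k
        ≤ β * (β ^ (j+2+d0) + β ^ j - β ^ (j+1)) := by
      apply mul_le_mul_of_nonneg_left _ (le_of_lt hb0)
      rw [show j+1+d0+1 = j+2+d0 from by omega] at hW
      exact hW
    have hA1 : β * ((c j:ℝ) * β ^ j) ≤ ((m:ℝ) - 1) * β ^ (j+1) := by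
      have h1 : (c j:ℝ) * β ^ (j+1) ≤ ((m:ℝ)-1) * β ^ (j+1) :=
        mul_le_mul_of_nonneg_right hslotR (by positivity)
      have h2 : β * ((c j:ℝ) * β ^ j) = (c j:ℝ) * β ^ (j+1) := by ring
      linarith
    have hA2 : β * ∑ k ∈ Finset.Ico (j+1) (j+2+d0), (c k:ℝ) * β ^ k
        ≤ β ^ (j+2+d0+1) + β ^ (j+1) - β ^ (j+2) := by
      have h2 : β * (β ^ (j+2+d0) + β ^ j - β ^ (j+1))
          = β ^ (j+2+d0+1) + β ^ (j+1) - β ^ (j+2) := by ring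
      linarith [hWmul]
    have hid2 : β * (((q:ℝ)-1) * ∑ k ∈ Finset.Ico (j+1) (j+2+d0), β ^ k)
        = β ^ (j+2+d0+1) + β ^ (j+1) - β ^ (j+2)
          + β * ∑ k ∈ Finset.Ico (j+1) (j+1+d0), β ^ k := by
      linear_combination β * hid
    have h5 : β * (((q:ℝ)-1) * ∑ k ∈ Finset.Ico (j+1) (j+2+d0), β ^ k)
        ≤ β * (m:ℝ) * ∑ k ∈ Finset.Ico (j+1) (j+2+d0), β ^ k := by
      have h6 := mul_le_mul_of_nonneg_left hmsum (le_of_lt hb0)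
      have he2 : β * ((m:ℝ) * ∑ k ∈ Finset.Ico (j+1) (j+2+d0), β ^ k)
          = β * (m:ℝ) * ∑ k ∈ Finset.Ico (j+1) (j+2+d0), β ^ k := by ring
      linarith
    have hfin : β ^ (j+2+d0-1) + β ^ (j+2+d0+1)
        ≤ β ^ (j+2) + β * (m:ℝ) * ∑ k ∈ Finset.Ico (j+1) (j+2+d0), β ^ k := by
      linarith [hid2, hlast, h5]
    rw [hPs, hSs]
    have hexp : (m:ℝ) * β * (Sg β j + β ^ j + ∑ k ∈ Finset.Ico (j+1) (j+2+d0), β ^ k)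
        = (m:ℝ) * β * Sg β j + (m:ℝ) * β ^ (j+1)
          + β * (m:ℝ) * ∑ k ∈ Finset.Ico (j+1) (j+2+d0), β ^ k := by ring
    have hexp2 : β * ((m:ℝ) * Sg β j + (c j:ℝ) * β ^ j
          + ∑ k ∈ Finset.Ico (j+1) (j+2+d0), (c k:ℝ) * β ^ k)
        = (m:ℝ) * β * Sg β j + β * ((c j:ℝ) * β ^ j)
          + β * ∑ k ∈ Finset.Ico (j+1) (j+2+d0), (c k:ℝ) * β ^ k := by ring
    rw [hexp2, hexp]
    linarith [hA1, hA2, hfin]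

lemma sum_split_nat (f : ℕ → ℕ) {j n : ℕ} (h : j ≤ n) :
    ∑ k ∈ Finset.range n, f k = ∑ k ∈ Finset.range j, f k + ∑ k ∈ Finset.Ico j n, f k := by
  rw [Finset.range_eq_Ico, Finset.range_eq_Ico]
  exact (Finset.sum_Ico_consecutive f (Nat.zero_le j) h).symm

/-- The A-rewrite step: carry at position x₀+1. -/
lemma A_step (hb : 1 < β) (hq : 3 ≤ q) (he : β ^ 2 = (q:ℝ) * β - 1)
    (c c' : ℕ → ℕ) (x₀ : ℕ) (hcx : q ≤ c (x₀+1))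
    (h0 : c' x₀ = c x₀ + 1) (h1 : c' (x₀+1) = c (x₀+1) - q) (h2 : c' (x₀+2) = c (x₀+2) + 1)
    (hother : ∀ k, k ≠ x₀ → k ≠ x₀+1 → k ≠ x₀+2 → c' k = c k)
    (hK : Kinv β m c)
    (hO : β * Pc β c (x₀+1) + β ^ x₀ ≤ (m:ℝ) * β * Sg β (x₀+1)) :
    Kinv β m c' ∧ (∀ n, x₀+3 ≤ n → Pc β c' n = Pc β c n) ∧
      (∀ n, x₀+3 ≤ n → (∑ k ∈ Finset.range n, c' k) + q = (∑ k ∈ Finset.range n, c k) + 2) := by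
  obtain ⟨hb0, hq1b, hbq, hb2⟩ := beta_facts hb hq he
  have hlow : ∀ i, i ≤ x₀ → Pc β c' i = Pc β c i := by
    intro i hi
    exact Pc_congr (fun k hk => hother k (by omega) (by omega) (by omega))
  have hmid1 : Pc β c' (x₀+1) = Pc β c (x₀+1) + β ^ x₀ := by
    rw [Pc_succ, Pc_succ, hlow x₀ le_rfl, h0]
    push_cast
    ring
  have hmid2 : Pc β c' (x₀+2) = Pc β c (x₀+2) - β ^ (x₀+2) := by
    rw [Pc_succ β c' (x₀+1), Pc_succ β c (x₀+1), hmid1, h1]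
    rw [Nat.cast_sub hcx]
    have := qpow he x₀
    ring_nf
    ring_nf at this
    linarith [this]
  have hhigh : ∀ d, Pc β c' (x₀+3+d) = Pc β c (x₀+3+d) := by
    intro d
    induction d with
    | zero =>
        rw [show x₀+3+0 = (x₀+2)+1 from rfl, Pc_succ β c' (x₀+2), Pc_succ β c (x₀+2),
          hmid2, h2]
        push_cast
        ring
    | succ d ih =>
        rw [show x₀+3+(d+1) = (x₀+3+d)+1 from rfl, Pc_succ β c' (x₀+3+d), Pc_succ β c (x₀+3+d),
          ih, hother (x₀+3+d) (by omega) (by omega) (by omega)]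
  refine ⟨?_, ?_, ?_⟩
  · intro i
    rcases lt_trichotomy i x₀ with h | heq | h
    · have := hK i
      rwa [hlow (i+1) (by omega)]
    · rw [heq, hmid1]
      have e1 : β * (Pc β c (x₀+1) + β ^ x₀) = β * Pc β c (x₀+1) + β ^ (x₀+1) := by ring
      have hp : (0:ℝ) < β ^ (x₀+1) := by positivity
      linarith [hO, e1.le, e1.ge]
    · rcases eq_or_lt_of_le (show x₀+1 ≤ i from h) with heq | h'
      · rw [← heq, show x₀+1+1 = x₀+2 from rfl, hmid2]
        have hK1 := hK (x₀+1)
        have e1 : β * (Pc β c (x₀+2) - β ^ (x₀+2)) = β * Pc β c (x₀+2) - β * β ^ (x₀+2) := by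
          ring
        have hp : (0:ℝ) < β * β ^ (x₀+2) := by positivity
        linarith [hK1, e1.le, e1.ge]
      · obtain ⟨d, rfl⟩ : ∃ d, i = x₀+2+d := ⟨i - (x₀+2), by omega⟩
        have hK1 := hK (x₀+2+d)
        rw [show x₀+2+d+1 = x₀+3+d from by omega] at hK1
        rwa [show x₀+2+d+1 = x₀+3+d from by omega, hhigh d]
  · intro n hn
    obtain ⟨d, rfl⟩ : ∃ d, n = x₀+3+d := ⟨n - (x₀+3), by omega⟩
    exact hhigh d
  · intro n hn
    obtain ⟨d, rfl⟩ : ∃ d, n = x₀+3+d := ⟨n - (x₀+3), by omega⟩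
    induction d with
    | zero =>
        rw [show x₀+3+0 = ((x₀+1)+1)+1 from rfl]
        rw [Finset.sum_range_succ, Finset.sum_range_succ, Finset.sum_range_succ,
          Finset.sum_range_succ, Finset.sum_range_succ, Finset.sum_range_succ]
        have hcongr : ∑ k ∈ Finset.range x₀, c' k = ∑ k ∈ Finset.range x₀, c k :=
          Finset.sum_congr rfl (fun k hk => hother k
            (by simp at hk; omega) (by simp at hk; omega) (by simp at hk; omega))
        rw [hcongr, h0, h1, h2]
        omega
    | succ d ih =>
        rw [show x₀+3+(d+1) = (x₀+3+d)+1 from rfl, Finset.sum_range_succ, Finset.sum_range_succ,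
          hother (x₀+3+d) (by omega) (by omega) (by omega)]
        omega

/-- The B-rewrite step: removing a forbidden pattern on [x₀+1, s]. -/
lemma B_step (hb : 1 < β) (hq : 3 ≤ q) (he : β ^ 2 = (q:ℝ) * β - 1)
    (c c' : ℕ → ℕ) (x₀ s : ℕ) (hs : x₀ + 2 ≤ s)
    (hpx : c (x₀+1) = q - 1) (hps : c s = q - 1)
    (hmidp : ∀ t, x₀+1 < t → t < s → c t = q - 2)
    (h0 : c' x₀ = c x₀ + 1) (htop : c' (s+1) = c (s+1) + 1)
    (hz : ∀ k, x₀+1 ≤ k → k ≤ s → c' k = 0)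
    (hother : ∀ k, k ≠ x₀ → k ≠ s+1 → (k < x₀ ∨ s+1 < k) → c' k = c k)
    (hK : Kinv β m c)
    (hO : β * Pc β c (x₀+1) + β ^ x₀ ≤ (m:ℝ) * β * Sg β (x₀+1)) :
    Kinv β m c' ∧ (∀ n, s+2 ≤ n → Pc β c' n = Pc β c n) ∧
      (∀ n, s+2 ≤ n →
        (∑ k ∈ Finset.range n, c' k) + (q-1) + (q-1) ≤ (∑ k ∈ Finset.range n, c k) + 2) := by
  obtain ⟨hb0, hq1b, hbq, hb2⟩ := beta_facts hb hq he
  have hlow : ∀ i, i ≤ x₀ → Pc β c' i = Pc β c i := by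
    intro i hi
    exact Pc_congr (fun k hk => hother k (by omega) (by omega) (by omega))
  have hmid1 : Pc β c' (x₀+1) = Pc β c (x₀+1) + β ^ x₀ := by
    rw [Pc_succ, Pc_succ, hlow x₀ le_rfl, h0]
    push_cast
    ring
  have hzero : ∀ d, x₀+1+d ≤ s+1 → Pc β c' (x₀+1+d) = Pc β c (x₀+1) + β ^ x₀ := by
    intro d
    induction d with
    | zero => intro _; exact hmid1
    | succ d ih =>
        intro hd
        rw [show x₀+1+(d+1) = (x₀+1+d)+1 from rfl, Pc_succ, ih (by omega),
          hz (x₀+1+d) (by omega) (by omega)]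
        push_cast
        ring
  -- the pattern sum value
  have hpatsum : ∑ k ∈ Finset.Ico (x₀+1) (s+1), (c k : ℝ) * β ^ k = β ^ (s+1) + β ^ x₀ := by
    rw [Finset.sum_eq_sum_Ico_succ_bot (by omega : x₀+1 < s+1)]
    rw [show s+1 = s+1 from rfl, Finset.sum_Ico_succ_top (by omega : x₀+2 ≤ s)]
    have hmids : ∑ k ∈ Finset.Ico (x₀+2) s, (c k : ℝ) * β ^ k
        = ((q:ℝ)-2) * ∑ k ∈ Finset.Ico (x₀+2) s, β ^ k := by
      rw [Finset.mul_sum]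
      refine Finset.sum_congr rfl ?_
      intro k hk
      rw [Finset.mem_Ico] at hk
      rw [hmidp k (by omega) (by omega)]
      have h2 : ((q-2:ℕ):ℝ) = (q:ℝ)-2 := by
        have : 2 ≤ q := by omega
        push_cast [this]; ring
      rw [h2]
    have hq1c : ((q-1:ℕ):ℝ) = (q:ℝ) - 1 := by
      have : 1 ≤ q := by omega
      push_cast [this]; ring
    rw [hmids, hpx, hps, hq1c]
    have := pat he x₀ s hs
    linarith [this]
  have hhigh : ∀ d, Pc β c' (s+2+d) = Pc β c (s+2+d) := by
    intro d
    induction d with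
    | zero =>
        have hz1 := hzero (s-x₀) (by omega)
        rw [show x₀+1+(s-x₀) = s+1 from by omega] at hz1
        rw [show s+2+0 = (s+1)+1 from rfl, Pc_succ β c' (s+1), Pc_succ β c (s+1), hz1, htop]
        have hPs : Pc β c (s+1) = Pc β c (x₀+1) + ∑ k ∈ Finset.Ico (x₀+1) (s+1), (c k:ℝ) * β ^ k :=
          Pc_split c (by omega)
        rw [hPs, hpatsum]
        push_cast
        ring
    | succ d ih =>
        rw [show s+2+(d+1) = (s+2+d)+1 from rfl, Pc_succ β c' (s+2+d), Pc_succ β c (s+2+d),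
          ih, hother (s+2+d) (by omega) (by omega) (by omega)]
  refine ⟨?_, ?_, ?_⟩
  · intro i
    rcases lt_trichotomy i x₀ with h | heq | h
    · have := hK i
      rwa [hlow (i+1) (by omega)]
    · rw [heq, hmid1]
      have e1 : β * (Pc β c (x₀+1) + β ^ x₀) = β * Pc β c (x₀+1) + β ^ (x₀+1) := by ring
      have hp : (0:ℝ) < β ^ (x₀+1) := by positivity
      linarith [hO, e1.le, e1.ge]
    · rcases le_or_gt (i+1) (s+1) with h' | h'
      · -- x₀+1 ≤ i+1 ≤ s+1 : zero zone
        obtain ⟨d, hd⟩ : ∃ d, i+1 = x₀+1+d := ⟨i+1-(x₀+1), by omega⟩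
        rw [hd, hzero d (by omega)]
        -- Pc c (x₀+1) + β^x₀ ≤ Pc c (i+1)
        have hmono : Pc β c (x₀+2) ≤ Pc β c (i+1) := Pc_mono hb0 c (by omega)
        have hPx2 : Pc β c (x₀+2) = Pc β c (x₀+1) + (c (x₀+1):ℝ) * β ^ (x₀+1) := Pc_succ _ _ _
        have hcx1 : (c (x₀+1):ℝ) = (q:ℝ) - 1 := by
          rw [hpx]
          have : 1 ≤ q := by omega
          push_cast [this]; ring
        have hble : β ^ x₀ ≤ ((q:ℝ)-1) * β ^ (x₀+1) := by
          have g1 : β ^ x₀ ≤ β ^ (x₀+1) := by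
            have h3 : β ^ (x₀+1) = β ^ x₀ * β := by ring
            nlinarith [pow_pos hb0 x₀]
          nlinarith [pow_pos hb0 (x₀+1)]
        have hle : Pc β c (x₀+1) + β ^ x₀ ≤ Pc β c (i+1) := by
          rw [hPx2, hcx1] at hmono
          linarith
        have := hK i
        have hb' : β * (Pc β c (x₀+1) + β ^ x₀) ≤ β * Pc β c (i+1) :=
          mul_le_mul_of_nonneg_left hle (le_of_lt hb0)
        rw [← hd] at *
        linarith [this, hb']
      · obtain ⟨d, hd⟩ : ∃ d, i+1 = s+2+d := ⟨i+1-(s+2), by omega⟩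
        have := hK i
        rw [hd, hhigh d]
        rw [hd] at this
        exact this
  · intro n hn
    obtain ⟨d, rfl⟩ : ∃ d, n = s+2+d := ⟨n - (s+2), by omega⟩
    exact hhigh d
  · intro n hn
    obtain ⟨d, rfl⟩ : ∃ d, n = s+2+d := ⟨n - (s+2), by omega⟩
    induction d with
    | zero =>
        rw [show s+2+0 = (s+1)+1 from rfl]
        rw [Finset.sum_range_succ c' (s+1), Finset.sum_range_succ c (s+1)]
        rw [sum_split_nat c' (show x₀+1 ≤ s+1 from by omega),
          sum_split_nat c (show x₀+1 ≤ s+1 from by omega)]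
        rw [Finset.sum_range_succ c' x₀, Finset.sum_range_succ c x₀]
        have hcongr : ∑ k ∈ Finset.range x₀, c' k = ∑ k ∈ Finset.range x₀, c k :=
          Finset.sum_congr rfl (fun k hk => hother k
            (by simp at hk; omega) (by simp at hk; omega) (by simp at hk; omega))
        have hz2 : ∑ k ∈ Finset.Ico (x₀+1) (s+1), c' k = 0 := by
          apply Finset.sum_eq_zero
          intro k hk
          rw [Finset.mem_Ico] at hk
          exact hz k hk.1 (by omega)
        have hge : c (x₀+1) + c s ≤ ∑ k ∈ Finset.Ico (x₀+1) (s+1), c k := by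
          have hsub : ({x₀+1, s} : Finset ℕ) ⊆ Finset.Ico (x₀+1) (s+1) := by
            intro k hk
            simp at hk
            rcases hk with rfl | rfl <;> (rw [Finset.mem_Ico]; omega)
          have hpair : ∑ k ∈ ({x₀+1, s} : Finset ℕ), c k = c (x₀+1) + c s := by
            rw [Finset.sum_pair (by omega : x₀+1 ≠ s)]
          rw [← hpair]
          exact Finset.sum_le_sum_of_subset hsub
        rw [hcongr, hz2, h0, htop]
        rw [hpx, hps] at hge
        omega
    | succ d ih =>
        rw [show s+2+(d+1) = (s+2+d)+1 from rfl, Finset.sum_range_succ, Finset.sum_range_succ,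
          hother (s+2+d) (by omega) (by omega) (by omega)]
        omega

lemma Pc_ext {β : ℝ} {c : ℕ → ℕ} {n n' : ℕ} (hsupp : ∀ k, n ≤ k → c k = 0) (h : n ≤ n') :
    Pc β c n' = Pc β c n := by
  rw [Pc_split c h]
  have hz : ∑ k ∈ Finset.Ico n n', (c k:ℝ) * β ^ k = 0 := by
    apply Finset.sum_eq_zero
    intro k hk
    rw [Finset.mem_Ico] at hk
    rw [hsupp k hk.1]
    simp
  rw [hz, add_zero]

lemma sum_ext_nat {c : ℕ → ℕ} {n n' : ℕ} (hsupp : ∀ k, n ≤ k → c k = 0) (h : n ≤ n') :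
    ∑ k ∈ Finset.range n', c k = ∑ k ∈ Finset.range n, c k := by
  rw [sum_split_nat c h]
  have hz : ∑ k ∈ Finset.Ico n n', c k = 0 := by
    apply Finset.sum_eq_zero
    intro k hk
    rw [Finset.mem_Ico] at hk
    exact hsupp k hk.1
  rw [hz, add_zero]

def Good (β : ℝ) (q m : ℕ) (y : ℝ) : Prop :=
  ∃ (n : ℕ) (r : ℕ → ℤ),
    y = ∑ k ∈ Finset.range n, (r k : ℝ) * β ^ k ∧
    (∀ k < n, 0 ≤ r k ∧ r k ≤ (m : ℤ)) ∧
    ∃ j ≤ n,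
      (∀ k < j, r k = (m : ℤ)) ∧
      (j < n → r j ≤ (m : ℤ) - 1) ∧
      (∀ k, j < k → k < n → r k ≤ (q : ℤ) - 1) ∧
      (∀ i, j < i → i < n →
        (∀ s < i - j, r (i - s) = (if s = 0 then (q:ℤ) - 1 else (q:ℤ) - 2)) ∨
        (∃ s < i - j, (∀ t < s, r (i - t) = (if t = 0 then (q:ℤ) - 1 else (q:ℤ) - 2)) ∧
          r (i - s) < (if s = 0 then (q:ℤ) - 1 else (q:ℤ) - 2)))

lemma terminal_good (hb : 1 < β) (hq : 3 ≤ q) (he : β ^ 2 = (q:ℝ) * β - 1)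
    (hmq : q - 1 ≤ m) (c : ℕ → ℕ) (n j : ℕ)
    (hjn : j ≤ n)
    (hrun : ∀ k, k < j → c k = m)
    (hjne : c j ≠ m)
    (hK : Kinv β m c)
    (hnA : ∀ x, j < x → c x ≤ q - 1)
    (hnB : ∀ x s, j < x → x < s → c x = q-1 → c s = q-1 →
        ¬(∀ t, x < t → t < s → c t = q-2)) :
    Good β q m (Pc β c n) := by
  have hm2 : 2 ≤ m := by omega
  have hslot : c j + 1 ≤ m := by
    have := slot_le hb hq he hK hrun
    omega
  refine ⟨n, fun k => (c k : ℤ), ?_, ?_, j, hjn, ?_, ?_, ?_, ?_⟩ <;> beta_reduce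
  · unfold Pc
    push_cast
    rfl
  · intro k hk
    beta_reduce
    refine ⟨Int.natCast_nonneg _, ?_⟩
    have hle : c k ≤ m := by
      rcases lt_trichotomy k j with h | h | h
      · rw [hrun k h]
      · subst h; omega
      · have := hnA k h; omega
    exact_mod_cast hle
  · intro k hk
    beta_reduce
    have := hrun k hk
    exact_mod_cast this
  · intro _
    beta_reduce
    have h2 : (c j : ℤ) + 1 ≤ (m:ℤ) := by exact_mod_cast hslot
    omega
  · intro k hk1 hk2
    beta_reduce
    have := hnA k hk1
    have h2 : (c k : ℤ) ≤ ((q-1:ℕ):ℤ) := by exact_mod_cast this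
    have h3 : ((q-1:ℕ):ℤ) = (q:ℤ) - 1 := by
      have : 1 ≤ q := by omega
      push_cast [this]; ring
    omega
  · intro i hji hin
    beta_reduce
    by_cases hfull : ∀ s, s < i - j → c (i - s) = (if s = 0 then q-1 else q-2)
    · left
      intro s hs
      beta_reduce
      have h1 := hfull s hs
      split_ifs with h0 <;> split_ifs at h1 <;> omega
    · right
      push_neg at hfull
      have hex2 : ∃ s, s < i - j ∧ c (i - s) ≠ (if s = 0 then q-1 else q-2) := by
        obtain ⟨s, hs1, hs2⟩ := hfull
        exact ⟨s, hs1, hs2⟩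
      classical
      obtain ⟨s₀, hs1, hs2, hmin⟩ : ∃ s₀, s₀ < i - j ∧
          c (i - s₀) ≠ (if s₀ = 0 then q-1 else q-2) ∧
          ∀ t, t < s₀ → c (i - t) = (if t = 0 then q-1 else q-2) := by
        refine ⟨Nat.find hex2, (Nat.find_spec hex2).1, (Nat.find_spec hex2).2, ?_⟩
        intro t ht
        have h2 := Nat.find_min hex2 ht
        have hfs := (Nat.find_spec hex2).1
        by_contra hne
        exact h2 ⟨by omega, hne⟩
      refine ⟨s₀, hs1, ?_, ?_⟩
      · intro t ht
        beta_reduce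
        have h3 := hmin t ht
        split_ifs with h0 <;> split_ifs at h3 <;> omega
      · beta_reduce
        have hup : c (i - s₀) ≤ q - 1 := hnA (i - s₀) (by omega)
        have hne2 := hs2
        by_cases h0 : s₀ = 0
        · rw [if_pos h0]
          rw [if_pos h0] at hne2
          omega
        · rw [if_neg h0]
          rw [if_neg h0] at hne2
          by_cases htop2 : c (i - s₀) = q - 1
          · exfalso
            refine hnB (i - s₀) i (by omega) (by omega) htop2 ?_ ?_
            · have h4 := hmin 0 (by omega)
              rw [if_pos rfl] at h4
              simpa using h4
            · intro t ht1 ht2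
              have h5 := hmin (i - t) (by omega)
              rw [if_neg (by omega)] at h5
              rw [show i - (i - t) = t from by omega] at h5
              exact h5
          · omega

lemma main (hb : 1 < β) (hq : 3 ≤ q) (he : β ^ 2 = (q:ℝ) * β - 1) (hmq : q - 1 ≤ m) :
    ∀ N c n, (∀ k, n ≤ k → c k = 0) → (∑ k ∈ Finset.range n, c k ≤ N) → Kinv β m c →
    Good β q m (Pc β c n) := by
  intro N
  induction N using Nat.strong_induction_on with
  | _ N IH =>
  intro c n hsupp hsum hK
  classical
  have hm2 : 2 ≤ m := by omega
  have hexj : ∃ k, c k ≠ m := ⟨n, by rw [hsupp n le_rfl]; omega⟩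
  obtain ⟨j, hjne, hrun, hjn⟩ : ∃ j, c j ≠ m ∧ (∀ k, k < j → c k = m) ∧ j ≤ n := by
    refine ⟨Nat.find hexj, Nat.find_spec hexj, ?_, ?_⟩
    · intro k hk
      have := Nat.find_min hexj hk
      simpa using this
    · exact Nat.find_min' hexj (by rw [hsupp n le_rfl]; omega)
  by_cases hex : ∃ x, (j < x ∧ q ≤ c x) ∨
      (j < x ∧ c x = q - 1 ∧ ∃ s, x < s ∧ c s = q-1 ∧ ∀ t, x < t → t < s → c t = q-2)
  · -- a site exists; take the least one
    obtain ⟨x, hxsite, hxmin⟩ : ∃ x, ((j < x ∧ q ≤ c x) ∨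
        (j < x ∧ c x = q - 1 ∧ ∃ s, x < s ∧ c s = q-1 ∧ ∀ t, x < t → t < s → c t = q-2)) ∧
        ∀ y, y < x → ¬((j < y ∧ q ≤ c y) ∨
          (j < y ∧ c y = q - 1 ∧ ∃ s, y < s ∧ c s = q-1 ∧ ∀ t, y < t → t < s → c t = q-2)) :=
      ⟨Nat.find hex, Nat.find_spec hex, fun y hy => Nat.find_min hex hy⟩
    clear hex hexj
    have hxj : j < x := by rcases hxsite with ⟨h,_⟩|⟨h,_⟩ <;> exact h
    have hword : ∀ k, j+1 ≤ k → k < x → c k ≤ q - 1 := by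
      intro k h1 h2
      by_contra h
      exact hxmin k h2 (Or.inl ⟨by omega, by omega⟩)
    have hcl : ∀ y s, j+1 ≤ y → y < s → s < x → c y = q-1 → c s = q-1 →
        ¬(∀ t, y < t → t < s → c t = q-2) := by
      intro y s h1 h2 h3 h4 h5 h6
      exact hxmin y (by omega) (Or.inr ⟨by omega, h4, s, h2, h5, h6⟩)
    have hslot : c j + 1 ≤ m := by
      have := slot_le hb hq he hK hrun
      omega
    have hO := oblig hb hq he hmq (show j+1 ≤ x from hxj) hrun hslot hword hcl
    obtain ⟨x₀, rfl⟩ : ∃ x₀, x = x₀ + 1 := ⟨x - 1, by omega⟩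
    rw [show x₀+1-1 = x₀ from by omega] at hO
    rcases hxsite with ⟨hxj', hA⟩ | ⟨hxj', hq1, s, hs1, hs2, hs3⟩
    · -- A step
      set c' : ℕ → ℕ := fun k => if k = x₀ then c x₀ + 1 else if k = x₀+1 then c (x₀+1) - q
        else if k = x₀+2 then c (x₀+2) + 1 else c k with hc'def
      have h0 : c' x₀ = c x₀ + 1 := by
        rw [hc'def]
        dsimp only
        rw [if_pos rfl]
      have h1 : c' (x₀+1) = c (x₀+1) - q := by
        rw [hc'def]
        dsimp only
        rw [if_neg (by omega), if_pos rfl]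
      have h2 : c' (x₀+2) = c (x₀+2) + 1 := by
        rw [hc'def]
        dsimp only
        rw [if_neg (by omega), if_neg (by omega), if_pos rfl]
      have hother : ∀ k, k ≠ x₀ → k ≠ x₀+1 → k ≠ x₀+2 → c' k = c k := by
        intro k k0 k1 k2
        rw [hc'def]
        dsimp only
        rw [if_neg k0, if_neg k1, if_neg k2]
      obtain ⟨hK', hval, hsum'⟩ := A_step hb hq he c c' x₀ hA h0 h1 h2 hother hK hO
      have hn1 : n ≤ max n (x₀+3) := le_max_left _ _
      have hn2 : x₀+3 ≤ max n (x₀+3) := le_max_right _ _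
      have hsupp' : ∀ k, max n (x₀+3) ≤ k → c' k = 0 := by
        intro k hk
        rw [hother k (by omega) (by omega) (by omega)]
        exact hsupp k (by omega)
      have hvn : Pc β c' (max n (x₀+3)) = Pc β c n := by
        rw [hval _ hn2, Pc_ext hsupp hn1]
      have e1 := hsum' _ hn2
      have e2 := sum_ext_nat hsupp hn1
      have hsle : ∑ k ∈ Finset.range (max n (x₀+3)), c' k ≤ N - 1 := by omega
      have hNpos : N - 1 < N := by omega
      have hgood := IH (N-1) hNpos c' (max n (x₀+3)) hsupp' hsle hK'
      rwa [hvn] at hgood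
    · -- B step
      have hs : x₀ + 2 ≤ s := by omega
      set c' : ℕ → ℕ := fun k => if k = x₀ then c x₀ + 1 else if k = s+1 then c (s+1) + 1
        else if x₀+1 ≤ k ∧ k ≤ s then 0 else c k with hc'def
      have h0 : c' x₀ = c x₀ + 1 := by
        rw [hc'def]
        dsimp only
        rw [if_pos rfl]
      have htop : c' (s+1) = c (s+1) + 1 := by
        rw [hc'def]
        dsimp only
        rw [if_neg (by omega), if_pos rfl]
      have hz : ∀ k, x₀+1 ≤ k → k ≤ s → c' k = 0 := by
        intro k hk1 hk2
        rw [hc'def]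
        dsimp only
        rw [if_neg (by omega), if_neg (by omega), if_pos ⟨hk1, hk2⟩]
      have hother : ∀ k, k ≠ x₀ → k ≠ s+1 → (k < x₀ ∨ s+1 < k) → c' k = c k := by
        intro k k0 k1 k2
        rw [hc'def]
        dsimp only
        rw [if_neg k0, if_neg k1, if_neg (by omega)]
      obtain ⟨hK', hval, hsum'⟩ := B_step hb hq he c c' x₀ s hs hq1 hs2 hs3 h0 htop hz hother hK hO
      have hn1 : n ≤ max n (s+2) := le_max_left _ _
      have hn2 : s+2 ≤ max n (s+2) := le_max_right _ _
      have hsupp' : ∀ k, max n (s+2) ≤ k → c' k = 0 := by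
        intro k hk
        rw [hother k (by omega) (by omega) (by omega)]
        exact hsupp k (by omega)
      have hvn : Pc β c' (max n (s+2)) = Pc β c n := by
        rw [hval _ hn2, Pc_ext hsupp hn1]
      have e1 := hsum' _ hn2
      have e2 := sum_ext_nat hsupp hn1
      have hsle : ∑ k ∈ Finset.range (max n (s+2)), c' k ≤ N - 1 := by omega
      have hNpos : N - 1 < N := by omega
      have hgood := IH (N-1) hNpos c' (max n (s+2)) hsupp' hsle hK'
      rwa [hvn] at hgood
  · -- terminal
    have hnA : ∀ x, j < x → c x ≤ q - 1 := by
      intro x hx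
      by_contra h
      exact hex ⟨x, Or.inl ⟨hx, by omega⟩⟩
    have hnB : ∀ x s, j < x → x < s → c x = q-1 → c s = q-1 →
        ¬(∀ t, x < t → t < s → c t = q-2) := by
      intro x s h1 h2 h3 h4 h5
      exact hex ⟨x, Or.inr ⟨h1, h3, s, h2, h4, h5⟩⟩
    exact terminal_good hb hq he hmq c n j hjn hrun hjne hK hnA hnB

end

end SpecRep

open SpecRep in
/-- Lemma (case `β² = pβ - 1`, `p ≥ 3`, `m ≥ ⌊β⌋ = p - 1`): every `y ∈ X^m(β)` has a
representation `y = ∑_{k<n} r_k β^k` of the form `u c m^j` where `c ∈ {0,…,m-1}`,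
`u` has digits in `{0,…,p-1}`, and every suffix of `u` (read most-significant-first) is
lexicographically strictly smaller than `(p-1)(p-2)(p-2)⋯`. -/
theorem spectrum_representation_minus_case (β : ℝ) (p : ℤ)
    (hβ : 1 < β) (hp : 3 ≤ p) (heq : β ^ 2 = p * β - 1)
    (m : ℕ) (hm : ⌊β⌋ ≤ (m : ℤ)) :
    ∀ y ∈ Xspec β m, ∃ (n : ℕ) (r : ℕ → ℤ),
      y = ∑ k ∈ Finset.range n, (r k : ℝ) * β ^ k ∧
      (∀ k < n, 0 ≤ r k ∧ r k ≤ (m : ℤ)) ∧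
      ∃ j ≤ n,
        (∀ k < j, r k = (m : ℤ)) ∧
        (j < n → r j ≤ (m : ℤ) - 1) ∧
        (∀ k, j < k → k < n → r k ≤ p - 1) ∧
        (∀ i, j < i → i < n →
          (∀ s < i - j, r (i - s) = (if s = 0 then p - 1 else p - 2)) ∨
          (∃ s < i - j, (∀ t < s, r (i - t) = (if t = 0 then p - 1 else p - 2)) ∧
            r (i - s) < (if s = 0 then p - 1 else p - 2))) := by
  intro y hy
  obtain ⟨n₀, c₀, hc₀, hyv⟩ := hy
  set q : ℕ := p.toNat with hqdef
  have hqp : (q:ℤ) = p := Int.toNat_of_nonneg (by omega)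
  have hq : 3 ≤ q := by omega
  have he : β ^ 2 = (q:ℝ) * β - 1 := by
    have h2 : ((q:ℕ):ℝ) = (p:ℝ) := by exact_mod_cast congrArg (fun z : ℤ => (z:ℝ)) hqp
    rw [h2]
    exact_mod_cast heq
  obtain ⟨hb0, hq1b, hbq, hb2⟩ := beta_facts hβ hq he
  have hfloor : ⌊β⌋ = (q:ℤ) - 1 := by
    rw [Int.floor_eq_iff]
    constructor
    · push_cast
      linarith
    · push_cast
      linarith
  have hmq : q - 1 ≤ m := by
    rw [hfloor] at hm
    omega
  set c : ℕ → ℕ := fun k => if k ≤ n₀ then c₀ k else 0 with hcdef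
  have hsupp : ∀ k, n₀+1 ≤ k → c k = 0 := by
    intro k hk
    rw [hcdef]
    dsimp only
    rw [if_neg (by omega)]
  have hcb : ∀ k, c k ≤ m := by
    intro k
    rw [hcdef]
    dsimp only
    split_ifs with h
    · exact hc₀ k h
    · omega
  have hK : Kinv β m c := by
    intro i
    have hP : Pc β c (i+1) ≤ (m:ℝ) * Sg β (i+1) := by
      unfold Pc Sg
      rw [Finset.mul_sum]
      apply Finset.sum_le_sum
      intro k _
      have hck : (c k:ℝ) ≤ (m:ℝ) := by exact_mod_cast hcb k
      exact mul_le_mul_of_nonneg_right hck (by positivity)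
    have h2 : β * Pc β c (i+1) ≤ β * ((m:ℝ) * Sg β (i+1)) :=
      mul_le_mul_of_nonneg_left hP (by linarith)
    have h3 : β ^ i ≤ β ^ (i+1) := by
      have h4 : β ^ (i+1) = β ^ i * β := by ring
      nlinarith [pow_pos hb0 i]
    have e : β * ((m:ℝ) * Sg β (i+1)) = (m:ℝ) * β * Sg β (i+1) := by ring
    linarith
  have hyP : y = Pc β c (n₀+1) := by
    rw [hyv]
    unfold Pc
    apply Finset.sum_congr rfl
    intro k hk
    rw [hcdef]
    dsimp only
    rw [if_pos (by simp at hk; omega)]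
  have hgood := main hβ hq he hmq (∑ k ∈ Finset.range (n₀+1), c k) c (n₀+1) hsupp le_rfl hK
  rw [← hyP] at hgood
  obtain ⟨n, r, h1, h2, j, hj, h3, h4, h5, h6⟩ := hgood
  refine ⟨n, r, h1, h2, j, hj, h3, h4, ?_, ?_⟩
  · intro k hk1 hk2
    have := h5 k hk1 hk2
    rwa [hqp] at this
  · intro i hi1 hi2
    have := h6 i hi1 hi2
    rwa [hqp] at this
end

section
/- Let β > 1 be the root of x² − px + 1 with integer p ≥ 3, let m ∈ ℕ with m ≥ ⌊β⌋ = p − 1, and for k ≥ 1 set y_k = −β^k + m ∑_{i=0}^{k−1} β^i. Then y_k ∈ Σ_β(Ω) with Ω = [ 0, mβ/(β − 1) ), but y_k ∉ X^m(β). -/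
def rep (p : ℤ) : ℕ → ℤ × ℤ
  | 0 => (1, 0)
  | n + 1 => (-(rep p n).2, (rep p n).1 + p * (rep p n).2)

lemma rep_spec (p : ℤ) (γ : ℝ) (hγ : γ ^ 2 = (p : ℝ) * γ - 1) (j : ℕ) :
    γ ^ j = ((rep p j).1 : ℝ) + ((rep p j).2 : ℝ) * γ := by
  induction j with
  | zero => simp [rep]
  | succ n ih =>
    rw [pow_succ, ih]
    show _ = ((rep p (n+1)).1 : ℝ) + ((rep p (n+1)).2 : ℝ) * γ
    simp only [rep]
    push_cast
    linear_combination ((rep p n).2 : ℝ) * hγ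

lemma sum_rep (p : ℤ) (γ : ℝ) (hγ : γ ^ 2 = (p : ℝ) * γ - 1) (S : Finset ℕ) (w : ℕ → ℤ) :
    ∑ j ∈ S, (w j : ℝ) * γ ^ j
      = ((∑ j ∈ S, w j * (rep p j).1 : ℤ) : ℝ)
        + ((∑ j ∈ S, w j * (rep p j).2 : ℤ) : ℝ) * γ := by
  push_cast
  rw [Finset.sum_mul, ← Finset.sum_add_distrib]
  refine Finset.sum_congr rfl fun j _ => ?_
  rw [rep_spec p γ hγ j]
  ring

lemma irr_beta (β : ℝ) (p : ℤ) (hβ : 1 < β) (heq : β ^ 2 = (p:ℝ) * β - 1) :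
    Irrational β := by
  rintro ⟨q, hq⟩
  have hq2 : q ^ 2 - (p : ℚ) * q + 1 = 0 := by
    have h0 : ((q ^ 2 - (p : ℚ) * q + 1 : ℚ) : ℝ) = 0 := by
      push_cast
      rw [hq]
      linarith [heq]
    exact_mod_cast h0
  have hdenQ : ((q.den : ℚ)) ≠ 0 := Nat.cast_ne_zero.mpr q.den_nz
  have hqd : (q.num : ℚ) = q * (q.den : ℚ) := by
    exact (div_eq_iff hdenQ).mp (Rat.num_div_den q)
  have hZQ : (q.num : ℚ) ^ 2 - (p : ℚ) * q.num * q.den + (q.den : ℚ) ^ 2 = 0 := by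
    linear_combination ((q.den : ℚ)) ^ 2 * hq2 + ((q.num : ℚ) + q * q.den - (p:ℚ) * q.den) * hqd
  have hZ : q.num ^ 2 - p * q.num * (q.den : ℤ) + (q.den : ℤ) ^ 2 = 0 := by exact_mod_cast hZQ
  have hdvd : (q.den : ℤ) ∣ q.num ^ 2 := ⟨p * q.num - (q.den : ℤ), by linear_combination hZ⟩
  have hden1 : q.den = 1 := by
    have hcop : Nat.Coprime q.den q.num.natAbs := (q.reduced).symm
    have h2 : q.den ∣ q.num.natAbs ^ 2 := by
      have := Int.natAbs_dvd_natAbs.mpr hdvd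
      simpa [Int.natAbs_pow] using this
    exact Nat.Coprime.eq_one_of_dvd (hcop.pow_right 2) h2
  have hqnum : (q : ℝ) = (q.num : ℝ) := by
    rw [← Rat.num_div_den q, hden1]
    push_cast
    simp
  have h2 : (1 : ℤ) < q.num := by
    have : (1:ℝ) < (q.num : ℝ) := by rw [← hqnum, hq]; exact hβ
    exact_mod_cast this
  have hz : q.num ^ 2 - p * q.num + 1 = 0 := by
    have h := hZ
    rw [hden1] at h
    push_cast at h
    linarith
  have hdvd1 : q.num ∣ 1 := ⟨p - q.num, by linear_combination hz⟩
  have := Int.le_of_dvd one_pos hdvd1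
  omega

set_option maxHeartbeats 1600000 in
/-- Corollary (case `β² = pβ - 1`, `p ≥ 3`, `m ≥ ⌊β⌋`): for `k ≥ 1`, the numbers
`y_k = -β^k + m ∑_{i<k} β^i` lie in `Σ_β([0, mβ/(β-1)))` but not in `X^m(β)`. -/
theorem cutProject_point_not_in_spectrum_minus (β : ℝ) (p : ℤ)
    (hβ : 1 < β) (hp : 3 ≤ p) (heq : β ^ 2 = p * β - 1)
    (m : ℕ) (hm : ⌊β⌋ ≤ (m : ℤ)) (k : ℕ) (hk : 1 ≤ k) :
    (-β ^ k + (m : ℝ) * ∑ i ∈ Finset.range k, β ^ i) ∈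
        sigmaCP β ((p : ℝ) - β) (Set.Ico (0 : ℝ) ((m : ℝ) * β / (β - 1))) ∧
    (-β ^ k + (m : ℝ) * ∑ i ∈ Finset.range k, β ^ i) ∉ Xspec β m := by
  set β' : ℝ := (p : ℝ) - β with hβ'def
  have hβ0 : (0:ℝ) < β := by linarith
  have hββ' : β * β' = 1 := by rw [hβ'def]; linear_combination (-1 : ℝ) * heq
  have h1d : β' = 1 / β := eq_one_div_of_mul_eq_one_left (by rw [mul_comm]; exact hββ')
  have hβ'pos : 0 < β' := by rw [h1d]; exact one_div_pos.mpr hβ0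
  have hβ'lt : β' < 1 := by rw [h1d]; exact (div_lt_one hβ0).mpr hβ
  have hβ'eq : β' ^ 2 = (p:ℝ) * β' - 1 := by rw [hβ'def]; linear_combination heq
  have hm1 : 1 ≤ m := by
    have h1 : (1:ℤ) ≤ ⌊β⌋ := by
      rw [Int.le_floor]; push_cast; linarith
    omega
  have hm1' : (1:ℝ) ≤ (m:ℝ) := by exact_mod_cast hm1
  have hIrr : Irrational β := irr_beta β p hβ heq
  have hIndep : ∀ a b c d : ℤ, (a:ℝ) + (b:ℝ) * β = (c:ℝ) + (d:ℝ) * β → a = c ∧ b = d := by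
    intro a b c d h
    by_cases hbd : b = d
    · subst hbd
      refine ⟨?_, rfl⟩
      have : (a:ℝ) = (c:ℝ) := by linarith
      exact_mod_cast this
    · exfalso
      apply hIrr
      have hne : ((d:ℝ) - (b:ℝ)) ≠ 0 := by
        have : ((d - b : ℤ):ℝ) ≠ 0 := by
          exact_mod_cast sub_ne_zero.mpr (Ne.symm hbd)
        push_cast at this
        exact this
      refine ⟨((a - c : ℤ) : ℚ) / ((d - b : ℤ) : ℚ), ?_⟩
      push_cast
      field_simp
      linarith
  -- the key representation of y in the basis (1, γ)
  have key : ∀ γ : ℝ, γ ^ 2 = (p:ℝ) * γ - 1 →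
      -γ ^ k + (m:ℝ) * ∑ i ∈ Finset.range k, γ ^ i
        = (((m:ℤ) * ∑ i ∈ Finset.range k, (rep p i).1 - (rep p k).1 : ℤ) : ℝ)
          + (((m:ℤ) * ∑ i ∈ Finset.range k, (rep p i).2 - (rep p k).2 : ℤ) : ℝ) * γ := by
    intro γ hγ
    have h1 := sum_rep p γ hγ (Finset.range k) (fun _ => (m:ℤ))
    rw [rep_spec p γ hγ k]
    push_cast [← Finset.mul_sum] at h1 ⊢
    linear_combination h1
  constructor
  · refine ⟨_, _, key β heq, ?_⟩
    rw [Set.mem_Ico, ← key β' hβ'eq]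
    have hGnn : 0 ≤ ∑ i ∈ Finset.range k, β' ^ i :=
      Finset.sum_nonneg fun i _ => by positivity
    constructor
    · have hterm : β' ^ (k-1) ≤ ∑ i ∈ Finset.range k, β' ^ i :=
        Finset.single_le_sum (f := fun i => β' ^ i) (fun i _ => by positivity)
          (Finset.mem_range.mpr (by omega))
      have hpk : β' ^ k ≤ β' ^ (k-1) := by
        have h1 : β' ^ k = β' ^ (k-1) * β' := by
          rw [← pow_succ]; congr 1; omega
        nlinarith [pow_pos hβ'pos (k-1)]
      nlinarith [hterm, hpk, hGnn, hm1']
    · have hG := geom_sum_mul β' k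
      have hβ1 : (0:ℝ) < β - 1 := by linarith
      rw [lt_div_iff₀ hβ1]
      have e1 : (∑ i ∈ Finset.range k, β' ^ i) * (β - 1) = β * (1 - β' ^ k) := by
        linear_combination (-β) * hG + (∑ i ∈ Finset.range k, β' ^ i) * hββ'
      have e2 : (m:ℝ) * ((∑ i ∈ Finset.range k, β' ^ i) * (β - 1))
          = (m:ℝ) * (β * (1 - β' ^ k)) := by rw [e1]
      nlinarith [e2, mul_pos (pow_pos hβ'pos k) hβ1,
        mul_nonneg (mul_nonneg (Nat.cast_nonneg m : (0:ℝ) ≤ (m:ℝ)) hβ0.le) (pow_pos hβ'pos k).le]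
  · rintro ⟨n, c, hc, hEq⟩
    set M := max n (k - 1) with hM
    set S := Finset.range (M + 1) with hS
    set ct : ℕ → ℕ := fun j => if j ≤ n then c j else 0 with hct
    have hctm : ∀ j, (ct j : ℝ) ≤ (m:ℝ) := by
      intro j
      have : ct j ≤ m := by
        simp only [hct]
        split
        · exact hc j ‹_›
        · exact Nat.zero_le m
      exact_mod_cast this
    have hEq' : -β ^ k + (m:ℝ) * ∑ i ∈ Finset.range k, β ^ i
        = ∑ j ∈ S, (ct j : ℝ) * β ^ j := by
      rw [hEq]
      have hsub : Finset.range (n+1) ⊆ S := by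
        rw [hS]; apply Finset.range_subset_range.mpr; omega
      have h1 : ∑ j ∈ Finset.range (n+1), (c j:ℝ) * β ^ j
          = ∑ j ∈ Finset.range (n+1), (ct j:ℝ) * β ^ j :=
        Finset.sum_congr rfl fun j hj => by
          have hj' : j ≤ n := Nat.lt_succ_iff.mp (Finset.mem_range.mp hj)
          simp [hct, hj']
      rw [h1]
      exact Finset.sum_subset hsub fun x _ hx => by
        have hx' : ¬ x ≤ n := fun h => hx (Finset.mem_range.mpr (Nat.lt_succ_iff.mpr h))
        simp [hct, hx']
    have keyR : ∀ γ : ℝ, γ ^ 2 = (p:ℝ) * γ - 1 → ∑ j ∈ S, (ct j : ℝ) * γ ^ j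
        = ((∑ j ∈ S, (ct j : ℤ) * (rep p j).1 : ℤ):ℝ)
          + ((∑ j ∈ S, (ct j:ℤ) * (rep p j).2 : ℤ):ℝ) * γ := by
      intro γ hγ
      have h := sum_rep p γ hγ S (fun j => (ct j : ℤ))
      push_cast at h ⊢
      linear_combination h
    have hcoord := hIndep _ _ _ _ ((key β heq).symm.trans (hEq'.trans (keyR β heq)))
    have hEq2 : -β' ^ k + (m:ℝ) * ∑ i ∈ Finset.range k, β' ^ i
        = ∑ j ∈ S, (ct j : ℝ) * β' ^ j := by
      rw [key β' hβ'eq, keyR β' hβ'eq, hcoord.1, hcoord.2]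
    -- subtract the two conjugate equations (after cross-multiplying)
    have e1 : ∑ i ∈ Finset.range k, (β^i * β'^k - β'^i * β^k)
        = (∑ i ∈ Finset.range k, β^i) * β'^k - (∑ i ∈ Finset.range k, β'^i) * β^k := by
      rw [Finset.sum_sub_distrib, Finset.sum_mul, Finset.sum_mul]
    have e2 : ∑ j ∈ S, (ct j:ℝ) * (β^j * β'^k - β'^j * β^k)
        = (∑ j ∈ S, (ct j:ℝ) * β^j) * β'^k - (∑ j ∈ S, (ct j:ℝ) * β'^j) * β^k := by
      rw [Finset.sum_mul, Finset.sum_mul, ← Finset.sum_sub_distrib]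
      exact Finset.sum_congr rfl fun j _ => by ring
    have hsub2 : (m:ℝ) * ∑ i ∈ Finset.range k, (β^i * β'^k - β'^i * β^k)
        = ∑ j ∈ S, (ct j:ℝ) * (β^j * β'^k - β'^j * β^k) := by
      rw [e1, e2, ← hEq', ← hEq2]
      ring
    have hkM : k ≤ M + 1 := by omega
    have hsplit : ∀ f : ℕ → ℝ, ∑ j ∈ S, f j
        = ∑ j ∈ Finset.range k, f j + ∑ j ∈ Finset.Ico k (M+1), f j := by
      intro f
      rw [hS, Finset.range_eq_Ico, Finset.range_eq_Ico]
      exact (Finset.sum_Ico_consecutive f (Nat.zero_le k) hkM).symm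
    have hTneg : ∀ j ∈ Finset.range k, β^j * β'^k - β'^j * β^k < 0 := by
      intro j hj
      have hjk : j < k := Finset.mem_range.mp hj
      have h1 : β^j * β'^k = β'^(k-j) := by
        calc β^j * β'^k = β^j * (β'^j * β'^(k-j)) := by rw [← pow_add]; congr 2; omega
          _ = (β*β')^j * β'^(k-j) := by rw [mul_pow]; ring
          _ = β'^(k-j) := by rw [hββ', one_pow, one_mul]
      have h2 : β'^j * β^k = β^(k-j) := by
        calc β'^j * β^k = β'^j * (β^j * β^(k-j)) := by rw [← pow_add]; congr 2; omega
          _ = (β*β')^j * β^(k-j) := by rw [mul_pow]; ring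
          _ = β^(k-j) := by rw [hββ', one_pow, one_mul]
      rw [h1, h2]
      have : β'^(k-j) < β^(k-j) :=
        pow_lt_pow_left₀ (by linarith) (le_of_lt hβ'pos) (by omega)
      linarith
    have hTpos : ∀ j ∈ Finset.Ico k (M+1), 0 ≤ β^j * β'^k - β'^j * β^k := by
      intro j hj
      have hkj : k ≤ j := (Finset.mem_Ico.mp hj).1
      have h1 : β^j * β'^k = β^(j-k) := by
        calc β^j * β'^k = β^(j-k) * β^k * β'^k := by rw [← pow_add]; congr 2; omega
          _ = β^(j-k) * (β*β')^k := by rw [mul_pow]; ring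
          _ = β^(j-k) := by rw [hββ', one_pow, mul_one]
      have h2 : β'^j * β^k = β'^(j-k) := by
        calc β'^j * β^k = β'^(j-k) * β'^k * β^k := by rw [← pow_add]; congr 2; omega
          _ = β'^(j-k) * (β*β')^k := by rw [mul_pow]; ring
          _ = β'^(j-k) := by rw [hββ', one_pow, mul_one]
      rw [h1, h2]
      have : β'^(j-k) ≤ β^(j-k) := pow_le_pow_left₀ (le_of_lt hβ'pos) (by linarith) _
      linarith
    rw [hsplit (fun j => (ct j:ℝ) * (β^j * β'^k - β'^j * β^k))] at hsub2
    have hP : ∑ j ∈ Finset.range k, ((m:ℝ) - ct j) * (β^j*β'^k - β'^j*β^k)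
        = ∑ j ∈ Finset.Ico k (M+1), (ct j:ℝ) * (β^j*β'^k - β'^j*β^k) := by
      have h3 : ∑ j ∈ Finset.range k, ((m:ℝ) - ct j) * (β^j*β'^k - β'^j*β^k)
          = (m:ℝ) * ∑ i ∈ Finset.range k, (β^i*β'^k - β'^i*β^k)
            - ∑ j ∈ Finset.range k, (ct j:ℝ)*(β^j*β'^k - β'^j*β^k) := by
        rw [Finset.mul_sum, ← Finset.sum_sub_distrib]
        exact Finset.sum_congr rfl fun j _ => by ring
      rw [h3, hsub2]
      ring
    have hPle : ∑ j ∈ Finset.range k, ((m:ℝ) - ct j) * (β^j*β'^k - β'^j*β^k) ≤ 0 :=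
      Finset.sum_nonpos fun j hj => by
        have := hctm j
        nlinarith [hTneg j hj]
    have hQge : 0 ≤ ∑ j ∈ Finset.Ico k (M+1), (ct j:ℝ) * (β^j*β'^k - β'^j*β^k) :=
      Finset.sum_nonneg fun j hj => mul_nonneg (Nat.cast_nonneg _) (hTpos j hj)
    have hP0 : ∑ j ∈ Finset.range k, ((m:ℝ) - ct j) * (β^j*β'^k - β'^j*β^k) = 0 := by
      have h0 : (0:ℝ) ≤ ∑ j ∈ Finset.range k, ((m:ℝ) - ct j) * (β^j*β'^k - β'^j*β^k) := by
        rw [hP]; exact hQge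
      linarith
    have hall : ∀ j ∈ Finset.range k, ((m:ℝ) - ct j) * (β^j*β'^k - β'^j*β^k) = 0 := by
      have hneg : ∑ j ∈ Finset.range k, -(((m:ℝ) - ct j) * (β^j*β'^k - β'^j*β^k)) = 0 := by
        rw [Finset.sum_neg_distrib, hP0, neg_zero]
      intro j hj
      have h := (Finset.sum_eq_zero_iff_of_nonneg (fun j hj => by
          have := hctm j
          nlinarith [hTneg j hj])).mp hneg j hj
      linarith
    have hctval : ∀ j ∈ Finset.range k, (ct j : ℝ) = (m:ℝ) := by
      intro j hj
      have h0 := hall j hj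
      rcases mul_eq_zero.mp h0 with h | h
      · linarith
      · exact absurd h (ne_of_lt (hTneg j hj))
    rw [hsplit (fun j => (ct j:ℝ) * β^j)] at hEq'
    have h1 : ∑ j ∈ Finset.range k, (ct j:ℝ) * β^j = (m:ℝ) * ∑ i ∈ Finset.range k, β^i := by
      rw [Finset.mul_sum]
      exact Finset.sum_congr rfl fun j hj => by rw [hctval j hj]
    rw [h1] at hEq'
    have h2 : 0 ≤ ∑ j ∈ Finset.Ico k (M+1), (ct j:ℝ) * β^j :=
      Finset.sum_nonneg fun j _ => by positivity
    have h3 : 0 < β^k := pow_pos hβ0 k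
    linarith
end

section
/- Let β > 1 be the root of x² − px − 1 with integer p ≥ 1, and let m ∈ ℕ with m ≥ ⌊β⌋ = p. Then every y ∈ X^m(β) can be written as y = ∑_{k=0}^{n−1} r_k β^k with digits r_k ∈ {0,1,…,m} such that the digit string r_{n−1} ⋯ r₁ r₀ (most significant digit first) decomposes as a concatenation u w v where: v is a (possibly empty) prefix of the infinite periodic word m 0 m 0 m 0 ⋯; w is either empty or a two-letter word c d with c, d ∈ {0,1,…,m−1} and, if d ≥ 1, then c ≤ p − 1; and u is a (possibly empty) word over the alphabet {0,1,…,p}. -/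
set_option maxHeartbeats 1000000

private lemma sum_range_eq_add_of_eq_off {R : Type*} [CommRing R] {N : ℕ} (f g : ℕ → R)
    (S : Finset ℕ) (hS : S ⊆ Finset.range N)
    (h : ∀ j ∈ Finset.range N, j ∉ S → f j = g j) :
    ∑ j ∈ Finset.range N, f j = (∑ j ∈ Finset.range N, g j) + ∑ j ∈ S, (f j - g j) := by
  have h1 : ∑ j ∈ S, (f j - g j) = ∑ j ∈ Finset.range N, (f j - g j) :=
    Finset.sum_subset hS (fun j hj hj' => by rw [h j hj hj']; ring)
  rw [h1, ← Finset.sum_add_distrib]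
  exact Finset.sum_congr rfl fun j _ => by ring

private lemma exists_min_rank {α : Type*} (S : Set α) (hS : S.Nonempty) (f : α → ℕ) :
    ∃ a ∈ S, ∀ b ∈ S, f a ≤ f b := by
  have hne : (f '' S).Nonempty := hS.image f
  obtain ⟨a, ha, hfa⟩ := Nat.sInf_mem hne
  exact ⟨a, ha, fun b hb => hfa ▸ Nat.sInf_le ⟨b, hb, rfl⟩⟩

private lemma nat_geom_sum (m : ℕ) : ∀ M : ℕ,
    ∑ j ∈ Finset.range M, m * (m+1)^j = (m+1)^M - 1 := by
  intro M
  induction M with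
  | zero => simp
  | succ M ih =>
    rw [Finset.sum_range_succ, ih, pow_succ]
    have h1 : 1 ≤ (m+1)^M := Nat.one_le_pow _ _ (by omega)
    have h2 : (m+1)^M * (m+1) = (m+1)^M + m * (m+1)^M := by ring
    rw [h2]
    omega

/-- Lemma (case `β² = pβ + 1`, `p ≥ 1`, `m ≥ ⌊β⌋ = p`): every `y ∈ X^m(β)` has a
representation whose digit string (most significant first) is `u w v`, where `v` is a
prefix of `(m 0)^ω`, `w` is empty or `c d` with `c, d ≤ m - 1` and (`d ≥ 1 → c ≤ p - 1`),
and `u` has digits in `{0,…,p}`. The digits are `r_k`, `r_0` least significant; `v`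
occupies positions `k < lv`, `w` positions `lv ≤ k < lv + lw`, `u` positions
`lv + lw ≤ k < n`. -/
theorem spectrum_representation_plus_case (β : ℝ) (p : ℤ)
    (hβ : 1 < β) (hp : 1 ≤ p) (heq : β ^ 2 = p * β + 1)
    (m : ℕ) (hm : ⌊β⌋ ≤ (m : ℤ)) :
    ∀ y ∈ Xspec β m, ∃ (n : ℕ) (r : ℕ → ℤ),
      y = ∑ k ∈ Finset.range n, (r k : ℝ) * β ^ k ∧
      (∀ k < n, 0 ≤ r k ∧ r k ≤ (m : ℤ)) ∧
      ∃ lv lw : ℕ, (lw = 0 ∨ lw = 2) ∧ lv + lw ≤ n ∧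
        (∀ s < lv, r (lv - 1 - s) = if s % 2 = 0 then (m : ℤ) else 0) ∧
        (lw = 2 →
          0 ≤ r (lv + 1) ∧ r (lv + 1) ≤ (m : ℤ) - 1 ∧
          0 ≤ r lv ∧ r lv ≤ (m : ℤ) - 1 ∧
          (1 ≤ r lv → r (lv + 1) ≤ p - 1)) ∧
        (∀ k, lv + lw ≤ k → k < n → 0 ≤ r k ∧ r k ≤ p) := by
  intro y hy
  obtain ⟨n, c, hc, hyval⟩ := hy
  have hβ0 : (0:ℝ) < β := by linarith
  have hpβ : (p : ℝ) < β := by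
    by_contra hcon
    push_neg at hcon
    nlinarith [mul_le_mul_of_nonneg_right hcon hβ0.le]
  have hpm : p ≤ (m : ℤ) := le_trans (Int.le_floor.mpr hpβ.le) hm
  -- natural number version of p
  set P : ℕ := p.toNat with hPdef
  have hPz : (P : ℤ) = p := Int.toNat_of_nonneg (by linarith)
  have hPr : (P : ℝ) = (p : ℝ) := by exact_mod_cast congrArg (Int.cast : ℤ → ℝ) hPz
  have hP1 : 1 ≤ P := by
    have : (1:ℤ) ≤ (P:ℤ) := by rw [hPz]; exact hp
    exact_mod_cast this
  have hPm : P ≤ m := by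
    have : (P:ℤ) ≤ (m:ℤ) := by rw [hPz]; exact hpm
    exact_mod_cast this
  have heqP : β ^ 2 = (P:ℝ) * β + 1 := by rw [hPr]; exact heq
  -- choose N
  obtain ⟨K, hK⟩ := pow_unbounded_of_one_lt y hβ
  set N : ℕ := max (n+1) K + 2 with hNdef
  have hNn : n + 1 ≤ N := by omega
  have hyN : y < β ^ (N - 2) := by
    have h2 : N - 2 = max (n+1) K := by omega
    rw [h2]
    exact lt_of_lt_of_le hK (pow_le_pow_right₀ hβ.le (le_max_right _ _))
  classical
  -- the set of valid representations
  obtain ⟨r, hrV, hrmin⟩ := exists_min_rank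
    {r : ℕ → ℕ | (∀ j, r j ≤ m) ∧ (∀ j, N ≤ j → r j = 0) ∧
      (∑ j ∈ Finset.range N, (r j : ℝ) * β ^ j) = y}
    ⟨fun j => if j ≤ n then c j else 0, by
      refine ⟨fun j => ?_, fun j hj => ?_, ?_⟩
      · by_cases hjn : j ≤ n
        · simp only [if_pos hjn]; exact hc j hjn
        · simp [hjn]
      · have hjn : ¬ j ≤ n := by omega
        simp [hjn]
      · rw [hyval]
        rw [← Finset.sum_subset (Finset.range_subset_range.mpr hNn)
          (fun j _ hj => by
            have hjn : ¬ j ≤ n := by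
              simp only [Finset.mem_range, Nat.lt_succ_iff] at hj; exact hj
            simp [hjn])]
        refine Finset.sum_congr rfl fun j hj => ?_
        have hjn : j ≤ n := by simpa [Nat.lt_succ_iff] using hj
        simp [hjn]⟩
    (fun r => (∑ j ∈ Finset.range N, r j) * (m+1)^N
      + ((m+1)^N - 1 - ∑ j ∈ Finset.range N, r j * (m+1)^j))
  obtain ⟨hrm, hrN, hrv⟩ := hrV
  -- support bound
  have hsup : ∀ j, r j ≠ 0 → j + 3 ≤ N := by
    intro j hj
    have hjN : j < N := by
      by_contra hh; push_neg at hh; exact hj (hrN j hh)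
    have hterm : β ^ j ≤ y := by
      rw [← hrv]
      calc β ^ j ≤ (r j : ℝ) * β ^ j := by
            have h1 : (1:ℝ) ≤ (r j : ℝ) := by exact_mod_cast Nat.one_le_iff_ne_zero.mpr hj
            nlinarith [pow_pos hβ0 j]
        _ ≤ _ := Finset.single_le_sum
            (f := fun i => (r i : ℝ) * β ^ i)
            (fun i _ => mul_nonneg (Nat.cast_nonneg _) (pow_nonneg hβ0.le i))
            (Finset.mem_range.mpr hjN)
    have hlt : β ^ j < β ^ (N - 2) := lt_of_le_of_lt hterm hyN
    have := (pow_lt_pow_iff_right₀ hβ).mp hlt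
    omega
  have hC1 : 1 ≤ (m+1)^N := Nat.one_le_pow _ _ (by omega)
  have hΦle : ∀ r' : ℕ → ℕ, (∀ j, r' j ≤ m) →
      (∑ j ∈ Finset.range N, r' j * (m+1)^j) ≤ (m+1)^N - 1 := by
    intro r' h1
    calc ∑ j ∈ Finset.range N, r' j * (m+1)^j
        ≤ ∑ j ∈ Finset.range N, m * (m+1)^j :=
          Finset.sum_le_sum fun j _ => Nat.mul_le_mul_right _ (h1 j)
      _ = (m+1)^N - 1 := nat_geom_sum m N
  -- Key property 1 : no smaller digit sum
  have hL1 : ∀ k, P ≤ r (k+1) → 1 ≤ r k → r (k+2) = m := by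
    intro k hk1 hk0
    by_contra hne
    have hklt : r (k+2) < m := lt_of_le_of_ne (hrm (k+2)) hne
    have hkN : k + 1 + 3 ≤ N := hsup (k+1) (by omega)
    set q : ℕ → ℕ := fun j => if j = k+2 then r (k+2) + 1 else if j = k+1 then r (k+1) - P
      else if j = k then r k - 1 else r j with hq
    have hqk : q k = r k - 1 := by simp [hq]
    have hqk1 : q (k+1) = r (k+1) - P := by simp [hq]
    have hqk2 : q (k+2) = r (k+2) + 1 := by simp [hq]
    have hqoff : ∀ i, i ∉ ({k, k+1, k+2} : Finset ℕ) → q i = r i := by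
      intro i hi
      simp only [Finset.mem_insert, Finset.mem_singleton] at hi
      push_neg at hi
      obtain ⟨e0, e1, e2⟩ := hi
      simp [hq, e0, e1, e2]
    have hSsub : ({k, k+1, k+2} : Finset ℕ) ⊆ Finset.range N := by
      intro x hx
      simp only [Finset.mem_insert, Finset.mem_singleton] at hx
      rcases hx with rfl|rfl|rfl <;> exact Finset.mem_range.mpr (by omega)
    have hmem1 : k ∉ (insert (k+1) ({k+2} : Finset ℕ)) := by
      simp only [Finset.mem_insert, Finset.mem_singleton]; omega
    have hmem2 : k+1 ∉ ({k+2} : Finset ℕ) := by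
      simp only [Finset.mem_singleton]; omega
    have hqm : ∀ j, q j ≤ m := by
      intro j
      have hA := hrm (k+1); have hB := hrm k; have hC := hrm j
      simp only [hq]
      split_ifs <;> omega
    have hqN : ∀ j, N ≤ j → q j = 0 := by
      intro j hj
      have h1 := hrN j hj
      simp only [hq]
      rw [if_neg (by omega), if_neg (by omega), if_neg (by omega)]
      exact h1
    have hqv : ∑ j ∈ Finset.range N, (q j : ℝ) * β ^ j = y := by
      have hzR := sum_range_eq_add_of_eq_off (fun j => (q j:ℝ)*β^j) (fun j => (r j:ℝ)*β^j) _ hSsub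
        (fun j _ hj2 => by simp only [hqoff j hj2])
      rw [Finset.sum_insert hmem1, Finset.sum_insert hmem2, Finset.sum_singleton] at hzR
      rw [hqk, hqk1, hqk2] at hzR
      rw [Nat.cast_sub hk0, Nat.cast_sub hk1] at hzR
      rw [hzR, hrv]
      push_cast
      linear_combination (β^k) * heqP
    have hqs : (∑ j ∈ Finset.range N, q j) + P = ∑ j ∈ Finset.range N, r j := by
      have hz := sum_range_eq_add_of_eq_off (fun j => (q j:ℤ)) (fun j => (r j:ℤ)) _ hSsub
        (fun j _ hj2 => by simp only [hqoff j hj2])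
      rw [Finset.sum_insert hmem1, Finset.sum_insert hmem2, Finset.sum_singleton] at hz
      rw [hqk, hqk1, hqk2] at hz
      rw [Nat.cast_sub hk0, Nat.cast_sub hk1] at hz
      have h3 : (((∑ j ∈ Finset.range N, q j) + P : ℕ) : ℤ)
          = ((∑ j ∈ Finset.range N, r j : ℕ) : ℤ) := by
        push_cast
        push_cast at hz
        linarith
      exact_mod_cast h3
    have hΘ := hrmin q ⟨hqm, hqN, hqv⟩
    have hcontra : (∑ j ∈ Finset.range N, q j) * (m+1)^N
        + ((m+1)^N - 1 - ∑ j ∈ Finset.range N, q j * (m+1)^j)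
        < (∑ j ∈ Finset.range N, r j) * (m+1)^N
        + ((m+1)^N - 1 - ∑ j ∈ Finset.range N, r j * (m+1)^j) := by
      calc (∑ j ∈ Finset.range N, q j) * (m+1)^N
            + ((m+1)^N - 1 - ∑ j ∈ Finset.range N, q j * (m+1)^j)
          ≤ (∑ j ∈ Finset.range N, q j) * (m+1)^N + ((m+1)^N - 1) :=
            Nat.add_le_add_left (Nat.sub_le _ _) _
        _ < (∑ j ∈ Finset.range N, q j) * (m+1)^N + (m+1)^N :=
            Nat.add_lt_add_left (Nat.sub_lt (by omega) one_pos) _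
        _ ≤ (∑ j ∈ Finset.range N, q j) * (m+1)^N + P * (m+1)^N :=
            Nat.add_le_add_left (Nat.le_mul_of_pos_left _ (by omega)) _
        _ = ((∑ j ∈ Finset.range N, q j) + P) * (m+1)^N := by ring
        _ = (∑ j ∈ Finset.range N, r j) * (m+1)^N := by rw [hqs]
        _ ≤ _ := Nat.le_add_right _ _
    exact absurd hΘ (not_le.mpr hcontra)
  -- Key property 2 : every digit ≥ P is followed below by 0
  have hL2 : ∀ k, P ≤ r (k+1) → r k = 0 := by
    intro k hk
    by_contra h0
    have h1 : 1 ≤ r k := Nat.one_le_iff_ne_zero.mpr h0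
    have hall : ∀ i, r (k+2+i) = m ∧ 1 ≤ r (k+1+i) := by
      intro i
      induction i with
      | zero => exact ⟨hL1 k hk h1, le_trans hP1 hk⟩
      | succ i ih =>
        obtain ⟨h2, h3⟩ := ih
        have h4 : r (k+1+i+2) = m := by
          apply hL1 (k+1+i) _ h3
          rw [show k+1+i+1 = k+2+i by omega, h2]; exact hPm
        constructor
        · rw [show k+2+(i+1) = k+1+i+2 by omega]; exact h4
        · rw [show k+1+(i+1) = k+2+i by omega, h2]; omega
    have h5 := (hall N).1
    have h6 : r (k+2+N) = 0 := hrN _ (by omega)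
    omega
  -- Key property 3 : a digit ≥ P+1 at position j+2 forces m at position j
  have hL3 : ∀ j, P + 1 ≤ r (j+2) → r j = m := by
    intro j hj2
    by_contra hne
    have hjm : r j < m := lt_of_le_of_ne (hrm j) hne
    have hz1 : r (j+1) = 0 := hL2 (j+1) (by show P ≤ r (j+2); omega)
    have hj3 : r (j+3) < m := by
      rcases Nat.lt_or_ge (r (j+3)) m with h | h
      · exact h
      · exfalso
        have hm3 : r (j+3) = m := le_antisymm (hrm _) h
        have := hL2 (j+2) (by rw [show j+2+1 = j+3 by omega, hm3]; exact hPm)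
        omega
    have hjN : j + 2 + 3 ≤ N := hsup (j+2) (by omega)
    have hmP : P + 1 ≤ m := le_trans hj2 (hrm _)
    set q : ℕ → ℕ := fun i => if i = j+3 then r (j+3) + 1 else if i = j+2 then r (j+2) - (P+1)
      else if i = j+1 then P - 1 else if i = j then r j + 1 else r i with hq
    have hq0 : q j = r j + 1 := by simp [hq]
    have hq1 : q (j+1) = P - 1 := by simp [hq]
    have hq2 : q (j+2) = r (j+2) - (P+1) := by simp [hq]
    have hq3 : q (j+3) = r (j+3) + 1 := by simp [hq]
    have hqoff : ∀ i, i ∉ ({j, j+1, j+2, j+3} : Finset ℕ) → q i = r i := by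
      intro i hi
      simp only [Finset.mem_insert, Finset.mem_singleton] at hi
      push_neg at hi
      obtain ⟨e0, e1, e2, e3⟩ := hi
      simp [hq, e0, e1, e2, e3]
    have hSsub : ({j, j+1, j+2, j+3} : Finset ℕ) ⊆ Finset.range N := by
      intro x hx
      simp only [Finset.mem_insert, Finset.mem_singleton] at hx
      rcases hx with rfl|rfl|rfl|rfl <;> exact Finset.mem_range.mpr (by omega)
    have hmem1 : j ∉ ({j+1, j+2, j+3} : Finset ℕ) := by
      simp only [Finset.mem_insert, Finset.mem_singleton]; omega
    have hmem2 : j+1 ∉ ({j+2, j+3} : Finset ℕ) := by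
      simp only [Finset.mem_insert, Finset.mem_singleton]; omega
    have hmem3 : j+2 ∉ ({j+3} : Finset ℕ) := by
      simp only [Finset.mem_singleton]; omega
    have hqm : ∀ i, q i ≤ m := by
      intro i
      have hA := hrm (j+2); have hB := hrm i
      simp only [hq]
      split_ifs <;> omega
    have hqN : ∀ i, N ≤ i → q i = 0 := by
      intro i hi
      have h1 := hrN i hi
      simp only [hq]
      rw [if_neg (by omega), if_neg (by omega), if_neg (by omega), if_neg (by omega)]
      exact h1
    have hqv : ∑ i ∈ Finset.range N, (q i : ℝ) * β ^ i = y := by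
      have hzR := sum_range_eq_add_of_eq_off (fun i => (q i:ℝ)*β^i) (fun i => (r i:ℝ)*β^i) _ hSsub
        (fun i _ hi2 => by simp only [hqoff i hi2])
      rw [Finset.sum_insert hmem1, Finset.sum_insert hmem2, Finset.sum_insert hmem3,
        Finset.sum_singleton] at hzR
      rw [hq0, hq1, hq2, hq3, hz1] at hzR
      rw [Nat.cast_sub hj2, Nat.cast_sub hP1] at hzR
      rw [hzR, hrv]
      push_cast
      linear_combination (β^(j+1) - β^j) * heqP
    have hqs : (∑ i ∈ Finset.range N, q i) = ∑ i ∈ Finset.range N, r i := by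
      have hz := sum_range_eq_add_of_eq_off (fun i => (q i:ℤ)) (fun i => (r i:ℤ)) _ hSsub
        (fun i _ hi2 => by simp only [hqoff i hi2])
      rw [Finset.sum_insert hmem1, Finset.sum_insert hmem2, Finset.sum_insert hmem3,
        Finset.sum_singleton] at hz
      rw [hq0, hq1, hq2, hq3, hz1] at hz
      rw [Nat.cast_sub hj2, Nat.cast_sub hP1] at hz
      have h3 : ((∑ i ∈ Finset.range N, q i : ℕ) : ℤ)
          = ((∑ i ∈ Finset.range N, r i : ℕ) : ℤ) := by
        push_cast
        push_cast at hz
        linarith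
      exact_mod_cast h3
    have hqΦ : (∑ i ∈ Finset.range N, r i * (m+1)^i) < ∑ i ∈ Finset.range N, q i * (m+1)^i := by
      have hz := sum_range_eq_add_of_eq_off (fun i => ((q i : ℤ)) * ((m:ℤ)+1)^i)
        (fun i => ((r i : ℤ)) * ((m:ℤ)+1)^i) _ hSsub
        (fun i _ hi2 => by simp only [hqoff i hi2])
      rw [Finset.sum_insert hmem1, Finset.sum_insert hmem2, Finset.sum_insert hmem3,
        Finset.sum_singleton] at hz
      rw [hq0, hq1, hq2, hq3, hz1] at hz
      rw [Nat.cast_sub hj2, Nat.cast_sub hP1] at hz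
      -- the difference is positive
      have hP' : (1:ℤ) ≤ (P:ℤ) := by exact_mod_cast hP1
      have hMP : (P:ℤ) + 2 ≤ (m:ℤ) + 1 := by
        have : (P:ℤ) + 1 ≤ (m:ℤ) := by exact_mod_cast hmP
        linarith
      have hx1 : (1:ℤ) ≤ ((m:ℤ)+1)^j := one_le_pow₀ (by linarith)
      have hbr : (1:ℤ) ≤ ((m:ℤ)+1)^3 - ((P:ℤ)+1)*((m:ℤ)+1)^2 + ((P:ℤ)-1)*((m:ℤ)+1) + 1 := by
        nlinarith [mul_le_mul_of_nonneg_left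
            (show (1:ℤ) ≤ (m:ℤ)+1 - (P:ℤ) - 1 by linarith)
            (sq_nonneg ((m:ℤ)+1)),
          mul_nonneg (show (0:ℤ) ≤ (P:ℤ)-1 by linarith) (show (0:ℤ) ≤ (m:ℤ)+1 by linarith)]
      have hD : (1:ℤ) ≤ ((m:ℤ)+1)^(j+3) - ((P:ℤ)+1)*((m:ℤ)+1)^(j+2)
          + ((P:ℤ)-1)*((m:ℤ)+1)^(j+1) + ((m:ℤ)+1)^j := by
        have e := mul_le_mul_of_nonneg_left hbr (show (0:ℤ) ≤ ((m:ℤ)+1)^j by positivity)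
        calc (1:ℤ) ≤ ((m:ℤ)+1)^j * 1 := by linarith
          _ ≤ ((m:ℤ)+1)^j * (((m:ℤ)+1)^3 - ((P:ℤ)+1)*((m:ℤ)+1)^2 + ((P:ℤ)-1)*((m:ℤ)+1) + 1) := e
          _ = ((m:ℤ)+1)^(j+3) - ((P:ℤ)+1)*((m:ℤ)+1)^(j+2)
              + ((P:ℤ)-1)*((m:ℤ)+1)^(j+1) + ((m:ℤ)+1)^j := by ring
      have hfin : ((∑ i ∈ Finset.range N, r i * (m+1)^i : ℕ) : ℤ)
          < ((∑ i ∈ Finset.range N, q i * (m+1)^i : ℕ) : ℤ) := by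
        push_cast
        push_cast at hz
        linarith
      exact_mod_cast hfin
    -- now derive the contradiction with minimality
    have hΘ := hrmin q ⟨hqm, hqN, hqv⟩
    rw [hqs] at hΘ
    have hle := le_of_add_le_add_left hΘ
    have h1 : (∑ i ∈ Finset.range N, q i * (m+1)^i) ≤ (m+1)^N - 1 := hΦle q hqm
    have h2 : (∑ i ∈ Finset.range N, r i * (m+1)^i) ≤ (m+1)^N - 1 := hΦle r hrm
    omega
  -- final construction
  refine ⟨N, fun k => (r k : ℤ), ?_, ?_, ?_⟩
  all_goals beta_reduce
  · rw [← hrv]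
    refine Finset.sum_congr rfl fun k _ => ?_
    push_cast
    ring
  · intro k _
    exact ⟨Int.natCast_nonneg _, by exact_mod_cast hrm k⟩
  · by_cases hH : ∀ j, r j ≤ P
    · refine ⟨0, 0, Or.inl rfl, by omega, ?_, ?_, ?_⟩
      · intro s hs; omega
      · intro h02; exact absurd h02 (by omega)
      · intro k _ _
        refine ⟨Int.natCast_nonneg _, ?_⟩
        rw [← hPz]
        exact_mod_cast hH k
    · push_neg at hH
      obtain ⟨j₀, hj₀⟩ := hH
      set h := Nat.findGreatest (fun j => P + 1 ≤ r j) N with hhdef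
      have hj₀N : j₀ + 3 ≤ N := hsup j₀ (by omega)
      have hh1 : P + 1 ≤ r h :=
        Nat.findGreatest_spec (P := fun j => P + 1 ≤ r j) (show j₀ ≤ N by omega)
          (show P + 1 ≤ r j₀ by omega)
      have hhmax : ∀ k, h < k → r k ≤ P := by
        intro k hk
        by_cases hkN : k ≤ N
        · have := Nat.findGreatest_is_greatest hk hkN
          omega
        · rw [hrN k (by omega)]
          omega
      have hhN : h + 3 ≤ N := hsup h (by omega)
      have hmg : P + 1 ≤ m := le_trans hh1 (hrm h)
      -- the pattern lemma
      have hpat : ∀ s b, r b = m → s ≤ b → r (b - s) = if s % 2 = 0 then m else 0 := by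
        intro s
        induction s using Nat.strong_induction_on with
        | _ s ih =>
          intro b hb hsb
          rcases s with _ | s
          · simpa using hb
          rcases s with _ | t
          · have h0 : r (b-1) = 0 := hL2 (b-1) (by rw [show b-1+1 = b by omega, hb]; exact hPm)
            simpa using h0
          · by_cases hpar : t % 2 = 0
            · have hup : r (b - t) = m := by
                have := ih t (by omega) b hb (by omega)
                rwa [if_pos hpar] at this
              have hgoal : r (b - (t+2)) = m := by
                apply hL3 (b - (t+2))
                rw [show b - (t+2) + 2 = b - t by omega, hup]
                omega
              rw [hgoal, if_pos (by omega)]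
            · have hup : r (b - (t+1)) = m := by
                have := ih (t+1) (by omega) b hb (by omega)
                rwa [if_pos (by omega)] at this
              have hgoal : r (b - (t+2)) = 0 := by
                apply hL2 (b - (t+2))
                rw [show b - (t+2) + 1 = b - (t+1) by omega, hup]
                exact hPm
              rw [hgoal, if_neg (by omega)]
      have hcast1 : (1:ℤ) ≤ (P:ℤ) := by exact_mod_cast hP1
      have hcastm : (P:ℤ) + 1 ≤ (m:ℤ) := by exact_mod_cast hmg
      by_cases hhm : r h = m
      · -- lv = h+1, lw = 2
        refine ⟨h+1, 2, Or.inr rfl, by omega, ?_, ?_, ?_⟩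
        · intro s hs
          have he : h + 1 - 1 - s = h - s := by omega
          rw [he]
          have := hpat s h hhm (by omega)
          rw [this]
          split_ifs <;> simp
        · intro _
          have hc1 : r (h+1+1) ≤ P := hhmax _ (by omega)
          have hc2 : r (h+1) ≤ P := hhmax _ (by omega)
          have hc1' : (r (h+1+1) : ℤ) ≤ (P:ℤ) := by exact_mod_cast hc1
          have hc2' : (r (h+1) : ℤ) ≤ (P:ℤ) := by exact_mod_cast hc2
          refine ⟨Int.natCast_nonneg _, by linarith, Int.natCast_nonneg _, by linarith, ?_⟩
          · intro hd1
            have hd1' : 1 ≤ r (h+1) := by exact_mod_cast hd1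
            have hnot : ¬ P ≤ r (h+1+1) := fun hcon => by
              have := hL2 (h+1) hcon
              omega
            have h' : r (h+1+1) + 1 ≤ P := by omega
            have h'' : ((r (h+1+1) : ℕ):ℤ) + 1 ≤ (P:ℤ) := by exact_mod_cast h'
            rw [← hPz]
            linarith
        · intro k hk1 hk2
          refine ⟨Int.natCast_nonneg _, ?_⟩
          rw [← hPz]
          exact_mod_cast hhmax k (by omega)
      · have hhm' : r h < m := lt_of_le_of_ne (hrm h) hhm
        rcases Nat.lt_or_ge h 2 with hh2 | hh2
        · -- h ≤ 1 : lv = 0, lw = 2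
          have hr1m : r 1 ≤ m - 1 := by
            rcases Nat.lt_or_ge h 1 with h0 | h1
            · have := hhmax 1 (by omega)
              omega
            · have hh1' : h = 1 := by omega
              rw [hh1'] at hhm'
              omega
          have hr0m : r 0 ≤ m - 1 := by
            rcases Nat.lt_or_ge h 1 with h0 | h1
            · have hh0 : h = 0 := by omega
              rw [hh0] at hhm'
              omega
            · have hh1' : h = 1 := by omega
              have : r 0 = 0 := hL2 0 (by rw [show (0:ℕ)+1 = h by omega]; omega)
              omega
          have hrcon : 1 ≤ r 0 → r 1 + 1 ≤ P := by
            intro h1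
            by_contra hcon
            push_neg at hcon
            have := hL2 0 (by show P ≤ r 1; omega)
            omega
          refine ⟨0, 2, Or.inr rfl, by omega, ?_, ?_, ?_⟩
          · intro s hs; omega
          · intro _
            simp only [zero_add]
            have e1 : ((r 1 : ℕ):ℤ) ≤ (m:ℤ) - 1 := by
              have : ((r 1 : ℕ):ℤ) ≤ ((m - 1 : ℕ):ℤ) := by exact_mod_cast hr1m
              rw [Nat.cast_sub (by omega)] at this
              exact_mod_cast this
            have e0 : ((r 0 : ℕ):ℤ) ≤ (m:ℤ) - 1 := by
              have : ((r 0 : ℕ):ℤ) ≤ ((m - 1 : ℕ):ℤ) := by exact_mod_cast hr0m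
              rw [Nat.cast_sub (by omega)] at this
              exact_mod_cast this
            refine ⟨Int.natCast_nonneg _, e1, Int.natCast_nonneg _, e0, ?_⟩
            intro hd1
            have hd1' : 1 ≤ r 0 := by exact_mod_cast hd1
            have := hrcon hd1'
            have h'' : ((r 1 : ℕ):ℤ) + 1 ≤ (P:ℤ) := by exact_mod_cast this
            rw [← hPz]
            linarith
          · intro k hk1 hk2
            refine ⟨Int.natCast_nonneg _, ?_⟩
            rw [← hPz]
            exact_mod_cast hhmax k (by omega)
        · -- h ≥ 2 : lv = h−1, lw = 2
          have hm2 : r (h-2) = m := by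
            apply hL3 (h-2)
            rw [show h-2+2 = h by omega]
            exact hh1
          have hd0 : r (h-1) = 0 := by
            apply hL2 (h-1)
            rw [show h-1+1 = h by omega]
            omega
          refine ⟨h-1, 2, Or.inr rfl, by omega, ?_, ?_, ?_⟩
          · intro s hs
            have he : h - 1 - 1 - s = h - 2 - s := by omega
            rw [he]
            have := hpat s (h-2) hm2 (by omega)
            rw [this]
            split_ifs <;> simp
          · intro _
            have he1 : h - 1 + 1 = h := by omega
            rw [he1, hd0]
            have hrh : ((r h : ℕ):ℤ) + 1 ≤ (m:ℤ) := by exact_mod_cast hhm'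
            refine ⟨Int.natCast_nonneg _, by linarith, by simp, by simp; linarith, ?_⟩
            intro habs
            norm_num at habs
          · intro k hk1 hk2
            refine ⟨Int.natCast_nonneg _, ?_⟩
            rw [← hPz]
            exact_mod_cast hhmax k (by omega)
end

section
/- Let β > 1 be the root of x² − px − 1 with integer p ≥ 1, let m ∈ ℕ with m > ⌊β⌋ = p, and for k ∈ ℕ set y_k = −β^{2k} + m ∑_{i=0}^{k−1} β^{2i}. Then y_k ∈ Σ_β(Ω) with Ω = ( −mβ/(β² − 1), mβ²/(β² − 1) ), but y_k ∉ X^m(β). -/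
namespace CutProjAux

/-- coordinates of `β^j` in the basis `(1, β)`. -/
def pairPow (p : ℤ) : ℕ → ℤ × ℤ
  | 0 => (1, 0)
  | j + 1 => ((pairPow p j).2, (pairPow p j).1 + p * (pairPow p j).2)

lemma pairPow_eval (p : ℤ) (x : ℝ) (hx : x ^ 2 = p * x + 1) :
    ∀ j : ℕ, x ^ j = ((pairPow p j).1 : ℝ) + ((pairPow p j).2 : ℝ) * x
  | 0 => by simp [pairPow]
  | (j + 1) => by
      have ih := pairPow_eval p x hx j
      have hxj : x ^ (j + 1) = x ^ j * x := by ring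
      rw [hxj, ih]
      simp only [pairPow]
      push_cast
      linear_combination ((pairPow p j).2 : ℝ) * hx

lemma pairPow_nonneg (p : ℤ) (hp : 1 ≤ p) :
    ∀ j : ℕ, 0 ≤ (pairPow p j).1 ∧ 0 ≤ (pairPow p j).2
  | 0 => by simp [pairPow]
  | (j + 1) => by
      obtain ⟨h1, h2⟩ := pairPow_nonneg p hp j
      simp only [pairPow]
      exact ⟨h2, by nlinarith⟩

lemma pairPow_B_pos (p : ℤ) (hp : 1 ≤ p) :
    ∀ j : ℕ, 1 ≤ (pairPow p (j + 1)).2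
  | 0 => by simp [pairPow]
  | (j + 1) => by
      have h1 := pairPow_B_pos p hp j
      have h2 := (pairPow_nonneg p hp j).2
      simp only [pairPow] at h1 ⊢
      nlinarith [mul_le_mul hp h1 (by norm_num : (0:ℤ) ≤ 1) (by omega : (0:ℤ) ≤ p)]

/-- coordinates of `y_k` in the basis `(1, β)`. -/
def yPair (p m : ℤ) : ℕ → ℤ × ℤ
  | 0 => (-1, 0)
  | k + 1 => ((yPair p m k).1 + p * (yPair p m k).2 + m,
      p * (yPair p m k).1 + (p ^ 2 + 1) * (yPair p m k).2)

lemma yPair_eval (p m : ℤ) (x : ℝ) (hx : x ^ 2 = p * x + 1) :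
    ∀ k : ℕ, -x ^ (2 * k) + (m : ℝ) * ∑ i ∈ Finset.range k, x ^ (2 * i)
      = ((yPair p m k).1 : ℝ) + ((yPair p m k).2 : ℝ) * x
  | 0 => by simp [yPair]
  | (k + 1) => by
      have ih := yPair_eval p m x hx k
      have hsplit : ∑ i ∈ Finset.range (k + 1), x ^ (2 * i)
          = x ^ 2 * ∑ i ∈ Finset.range k, x ^ (2 * i) + 1 := by
        rw [Finset.sum_range_succ']
        have h1 : ∀ i ∈ Finset.range k, x ^ (2 * (i + 1)) = x ^ 2 * x ^ (2 * i) :=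
          fun i _ => by rw [show 2 * (i + 1) = 2 + 2 * i from by ring, pow_add]
        rw [Finset.sum_congr rfl h1, ← Finset.mul_sum, Nat.mul_zero, pow_zero]
      have h2k : x ^ (2 * (k + 1)) = x ^ 2 * x ^ (2 * k) := by
        rw [show 2 * (k + 1) = 2 + 2 * k from by ring, pow_add]
      rw [hsplit, h2k]
      have hrw : -(x ^ 2 * x ^ (2 * k))
            + (m : ℝ) * (x ^ 2 * ∑ i ∈ Finset.range k, x ^ (2 * i) + 1)
          = x ^ 2 * (-x ^ (2 * k) + (m : ℝ) * ∑ i ∈ Finset.range k, x ^ (2 * i)) + m := by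
        ring
      rw [hrw, ih]
      simp only [yPair]
      push_cast
      linear_combination (((yPair p m k).1 : ℝ) + p * ((yPair p m k).2 : ℝ)
        + ((yPair p m k).2 : ℝ) * x) * hx

lemma beta_irrational (β : ℝ) (p : ℤ) (hβ : 1 < β) (hp : 1 ≤ p)
    (heq : β ^ 2 = p * β + 1) : Irrational β := by
  have hpβ : (p : ℝ) < β := by nlinarith
  have hsq : (2 * β - p) ^ 2 = ((p ^ 2 + 4 : ℤ) : ℝ) := by
    push_cast
    linear_combination 4 * heq
  have hx : Irrational (2 * β - p) := by
    apply irrational_nrt_of_notint_nrt 2 (p ^ 2 + 4) hsq ?_ (by norm_num)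
    rintro ⟨y, hy⟩
    have hy2 : y ^ 2 = p ^ 2 + 4 := by
      have h : ((y : ℝ)) ^ 2 = ((p ^ 2 + 4 : ℤ) : ℝ) := by rw [← hy]; exact hsq
      exact_mod_cast h
    have hyp : (p : ℤ) < y := by
      have h : (p : ℝ) < (y : ℝ) := by rw [← hy]; nlinarith
      exact_mod_cast h
    have hyub : y < p + 2 := by nlinarith
    have hy3 : y = p + 1 := by omega
    rw [hy3] at hy2
    have h2 : 2 * p = 3 := by linear_combination hy2
    omega
  intro hrat
  obtain ⟨q, hq⟩ := hrat
  exact hx ⟨2 * q - p, by push_cast [hq]; ring⟩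

lemma indep (β : ℝ) (hirr : Irrational β) (a b : ℤ)
    (h : (a : ℝ) + (b : ℝ) * β = 0) : a = 0 ∧ b = 0 := by
  rcases eq_or_ne b 0 with hb | hb
  · subst hb
    simp only [Int.cast_zero, zero_mul, add_zero] at h
    exact ⟨by exact_mod_cast h, rfl⟩
  · exfalso
    have hbR : (b : ℝ) ≠ 0 := Int.cast_ne_zero.mpr hb
    apply hirr
    refine ⟨(-a : ℚ) / (b : ℚ), ?_⟩
    have hβval : β = (-(a : ℝ)) / (b : ℝ) := by
      field_simp
      linarith
    rw [hβval]
    push_cast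
    ring

lemma unique_pair (β : ℝ) (hirr : Irrational β) (a b a' b' : ℤ)
    (h : (a : ℝ) + (b : ℝ) * β = (a' : ℝ) + (b' : ℝ) * β) : a = a' ∧ b = b' := by
  have h2 := indep β hirr (a - a') (b - b') (by push_cast; linarith)
  constructor <;> omega

/-- the carry sequence of polynomial division by `x² - px - 1`. -/
def tInt (p : ℤ) (g : ℕ → ℤ) : ℕ → ℤ
  | 0 => -g 0
  | 1 => p * g 0 - g 1
  | (j + 2) => tInt p g j - p * tInt p g (j + 1) - g (j + 2)

lemma tInt_zero (p : ℤ) (g : ℕ → ℤ) : tInt p g 0 = -g 0 := rfl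

lemma tInt_one (p : ℤ) (g : ℕ → ℤ) : tInt p g 1 = p * g 0 - g 1 := rfl

lemma tInt_two (p : ℤ) (g : ℕ → ℤ) (j : ℕ) :
    tInt p g (j + 2) = tInt p g j - p * tInt p g (j + 1) - g (j + 2) := rfl

lemma tInt_telescope (β : ℝ) (p : ℤ) (heq : β ^ 2 = p * β + 1) (g : ℕ → ℤ) :
    ∀ M : ℕ, ∑ i ∈ Finset.range (M + 2), (g i : ℝ) * β ^ i
      = -(tInt p g (M + 1) : ℝ) * β ^ (M + 1) - (tInt p g M : ℝ) * β ^ (M + 2)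
  | 0 => by
      rw [Finset.sum_range_succ, Finset.sum_range_one]
      simp only [tInt]
      push_cast
      linear_combination (-(g 0 : ℝ)) * heq
  | (M + 1) => by
      have ih := tInt_telescope β p heq g M
      rw [Finset.sum_range_succ, ih, tInt_two]
      push_cast
      linear_combination ((tInt p g (M + 1) : ℝ)) * β ^ (M + 1) * heq

lemma mpart_sum (β γ : ℝ) (h1 : γ ^ 2 * β ^ 2 = 1) (mR : ℝ) (n : ℕ) :
    ∀ K : ℕ, ∑ i ∈ Finset.range (2 * n + 2 * K + 3),
        (if Even i ∧ 2 * n + 3 ≤ i then mR else 0) * β ^ i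
      = (∑ i' ∈ Finset.range K, γ ^ (2 * i')) * mR * β ^ (2 * n + 2 * K + 2)
  | 0 => by
      rw [Finset.sum_eq_zero, Finset.range_zero, Finset.sum_empty, zero_mul, zero_mul]
      intro i hi
      rw [if_neg, zero_mul]
      rintro ⟨-, h⟩
      have := Finset.mem_range.mp hi
      omega
  | (K + 1) => by
      have ih := mpart_sum β γ h1 mR n K
      have e1 : 2 * n + 2 * (K + 1) + 3 = (2 * n + 2 * K + 3) + 1 + 1 := by ring
      rw [e1, Finset.sum_range_succ, Finset.sum_range_succ, ih]
      have hf1 : (if Even (2 * n + 2 * K + 3) ∧ 2 * n + 3 ≤ 2 * n + 2 * K + 3 then mR else 0)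
          = 0 := by
        rw [if_neg]
        rintro ⟨he, -⟩
        rw [Nat.even_iff] at he
        omega
      have hf2 : (if Even (2 * n + 2 * K + 3 + 1) ∧ 2 * n + 3 ≤ 2 * n + 2 * K + 3 + 1 then mR
          else 0) = mR := by
        rw [if_pos]
        exact ⟨by rw [Nat.even_iff]; omega, by omega⟩
      rw [hf1, hf2, zero_mul, add_zero, Finset.sum_range_succ']
      have hγs : ∑ i' ∈ Finset.range K, γ ^ (2 * (i' + 1))
          = γ ^ 2 * ∑ i' ∈ Finset.range K, γ ^ (2 * i') := by
        rw [Finset.mul_sum]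
        exact Finset.sum_congr rfl fun i _ => by
          rw [show 2 * (i + 1) = 2 + 2 * i from by ring, pow_add]
      rw [hγs]
      have e2 : (2 * n + 2 * (K + 1) + 2) = (2 * n + 2 * K + 2) + 2 := by ring
      have e3 : (2 * n + 2 * K + 3 + 1) = (2 * n + 2 * K + 2) + 2 := by ring
      rw [e2, e3, pow_add, pow_add, Nat.mul_zero, pow_zero]
      linear_combination (-(∑ i' ∈ Finset.range K, γ ^ (2 * i'))) * mR
        * β ^ (2 * n + 2 * K + 2) * h1

end CutProjAux

set_option maxHeartbeats 2000000 in
open CutProjAux Finset in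
/-- Corollary (case `β² = pβ + 1`, `p ≥ 1`, `m > ⌊β⌋`): for `k ∈ ℕ`, the numbers
`y_k = -β^{2k} + m ∑_{i<k} β^{2i}` lie in `Σ_β((-mβ/(β²-1), mβ²/(β²-1)))` but not
in `X^m(β)`. -/
theorem cutProject_point_not_in_spectrum_plus (β : ℝ) (p : ℤ)
    (hβ : 1 < β) (hp : 1 ≤ p) (heq : β ^ 2 = p * β + 1)
    (m : ℕ) (hm : ⌊β⌋ < (m : ℤ)) (k : ℕ) :
    (-β ^ (2 * k) + (m : ℝ) * ∑ i ∈ Finset.range k, β ^ (2 * i)) ∈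
        sigmaCP β ((p : ℝ) - β)
          (Set.Ioo (-((m : ℝ) * β) / (β ^ 2 - 1)) ((m : ℝ) * β ^ 2 / (β ^ 2 - 1))) ∧
    (-β ^ (2 * k) + (m : ℝ) * ∑ i ∈ Finset.range k, β ^ (2 * i)) ∉ Xspec β m := by
  have hβ0 : (0 : ℝ) < β := by linarith
  set γ : ℝ := (p : ℝ) - β with hγdef
  have hγsq : γ ^ 2 = (p : ℝ) * γ + 1 := by
    rw [hγdef]; linear_combination heq
  have hβγ : β * γ = -1 := by
    rw [hγdef]; linear_combination -heq
  have hpβ : (p : ℝ) < β := by nlinarith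
  have hβp1 : β < (p : ℝ) + 1 := by nlinarith
  have hγneg : γ < 0 := by rw [hγdef]; linarith
  have hγgt : -1 < γ := by rw [hγdef]; linarith
  have hγne : γ ≠ 0 := ne_of_lt hγneg
  have hγ2pos : 0 < γ ^ 2 := by positivity
  have hγ2lt : γ ^ 2 < 1 := by nlinarith
  have hβ21 : (0 : ℝ) < β ^ 2 - 1 := by nlinarith
  have hfloor : ⌊β⌋ = p := by
    rw [Int.floor_eq_iff]
    constructor
    · linarith
    · linarith
  have hpm : p < (m : ℤ) := by rw [← hfloor]; exact hm
  have hm1 : 1 ≤ (m : ℤ) := by omega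
  have hmR : (p : ℝ) + 1 ≤ (m : ℝ) := by exact_mod_cast (by omega : p + 1 ≤ (m : ℤ))
  have hm0R : (0 : ℝ) < (m : ℝ) := by
    have : (1 : ℝ) ≤ (m : ℝ) := by exact_mod_cast hm1
    linarith
  have hirr : Irrational β := beta_irrational β p hβ hp heq
  have hγ2β2 : γ ^ 2 * β ^ 2 = 1 := by nlinarith [hβγ]
  constructor
  · -- membership in the cut and project set
    refine ⟨(yPair p m k).1, (yPair p m k).2, yPair_eval p m β heq k, ?_⟩
    have hval : ((yPair p m k).1 : ℝ) + ((yPair p m k).2 : ℝ) * γ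
        = -γ ^ (2 * k) + (m : ℝ) * ∑ i ∈ Finset.range k, γ ^ (2 * i) :=
      (yPair_eval p m γ hγsq k).symm
    rw [hval]
    have hpow2k : γ ^ (2 * k) = (γ ^ 2) ^ k := by rw [← pow_mul]
    have hsum_rw : ∑ i ∈ Finset.range k, γ ^ (2 * i)
        = ∑ i ∈ Finset.range k, (γ ^ 2) ^ i :=
      Finset.sum_congr rfl fun i _ => by rw [← pow_mul]
    rw [hpow2k, hsum_rw]
    have hS_nonneg : 0 ≤ ∑ i ∈ Finset.range k, (γ ^ 2) ^ i :=
      Finset.sum_nonneg fun i _ => by positivity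
    have hpk_pos : 0 < (γ ^ 2) ^ k := by positivity
    have hpk_le : (γ ^ 2) ^ k ≤ 1 := pow_le_one₀ (le_of_lt hγ2pos) (le_of_lt hγ2lt)
    have hgeom : (∑ i ∈ Finset.range k, (γ ^ 2) ^ i) * (γ ^ 2 - 1) = (γ ^ 2) ^ k - 1 :=
      geom_sum_mul (γ ^ 2) k
    constructor
    · -- lower bound
      have hlow : -((m : ℝ) * β) / (β ^ 2 - 1) < -1 := by
        rw [div_lt_iff₀ hβ21]
        nlinarith
      have hge : -1 ≤ -(γ ^ 2) ^ k + (m : ℝ) * ∑ i ∈ Finset.range k, (γ ^ 2) ^ i := by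
        have : 0 ≤ (m : ℝ) * ∑ i ∈ Finset.range k, (γ ^ 2) ^ i :=
          mul_nonneg (le_of_lt hm0R) hS_nonneg
        linarith
      linarith
    · -- upper bound
      rw [lt_div_iff₀ hβ21]
      have expand : (-(γ ^ 2) ^ k + (m : ℝ) * ∑ i ∈ Finset.range k, (γ ^ 2) ^ i)
            * (β ^ 2 - 1)
          = (m : ℝ) * β ^ 2 - ((m : ℝ) * (γ ^ 2) ^ k * β ^ 2
            + (γ ^ 2) ^ k * (β ^ 2 - 1)) := by
        linear_combination (-(m : ℝ) * β ^ 2) * hgeom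
          + ((m : ℝ) * ∑ i ∈ Finset.range k, (γ ^ 2) ^ i) * hγ2β2
      rw [expand]
      nlinarith [mul_pos hpk_pos hβ21, mul_pos (mul_pos hm0R hpk_pos) (by positivity : (0:ℝ) < β ^ 2)]
  · -- not in the spectrum
    rintro ⟨n, c, hc, hrep⟩
    obtain ⟨c', hc'def⟩ : ∃ c' : ℕ → ℕ, c' = fun j => if j ≤ n then c j else 0 := ⟨_, rfl⟩
    have hc'le : ∀ j, c' j ≤ m := by
      intro j
      rw [hc'def]
      dsimp only
      split
      · exact hc _ ‹_›
      · exact Nat.zero_le m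
    obtain ⟨g, hgdef⟩ : ∃ g : ℕ → ℤ, g = fun i => (-1) ^ (i + 1) * (c' (2 * n + 2 * k + 2 - i) : ℤ)
        + (if Even i ∧ 2 * n + 3 ≤ i then (m : ℤ) else 0)
        - (if i = 2 * n + 2 then 1 else 0) := ⟨_, rfl⟩
    -- the digit sum over the large range
    have hβsum : ∑ j ∈ Finset.range (2 * n + 2 * k + 3), (c' j : ℝ) * β ^ j
        = ∑ j ∈ Finset.range (n + 1), (c j : ℝ) * β ^ j := by
      rw [← Finset.sum_subset (Finset.range_subset_range.mpr (by omega : n + 1 ≤ 2 * n + 2 * k + 3))]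
      · refine Finset.sum_congr rfl fun j hj => ?_
        have hjn : j ≤ n := by have := Finset.mem_range.mp hj; omega
        rw [hc'def]
        dsimp only
        rw [if_pos hjn]
      · intro x hx hnx
        rw [hc'def]
        dsimp only
        rw [if_neg, Nat.cast_zero, zero_mul]
        have := Finset.mem_range.mp hx
        intro hxn
        exact hnx (Finset.mem_range.mpr (by omega))
    -- coordinates of the digit sums
    obtain ⟨SA, hSAdef⟩ : ∃ SA : ℤ,
        SA = ∑ j ∈ Finset.range (2 * n + 2 * k + 3), (c' j : ℤ) * (pairPow p j).1 := ⟨_, rfl⟩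
    obtain ⟨SB, hSBdef⟩ : ∃ SB : ℤ,
        SB = ∑ j ∈ Finset.range (2 * n + 2 * k + 3), (c' j : ℤ) * (pairPow p j).2 := ⟨_, rfl⟩
    have hpair : ∀ (x : ℝ), x ^ 2 = p * x + 1 →
        ∑ j ∈ Finset.range (2 * n + 2 * k + 3), (c' j : ℝ) * x ^ j
          = (SA : ℝ) + (SB : ℝ) * x := by
      intro x hx
      have h1 : ∀ j ∈ Finset.range (2 * n + 2 * k + 3), (c' j : ℝ) * x ^ j
          = (c' j : ℝ) * ((pairPow p j).1 : ℝ)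
            + ((c' j : ℝ) * ((pairPow p j).2 : ℝ)) * x := by
        intro j _
        rw [pairPow_eval p x hx j]
        ring
      rw [Finset.sum_congr rfl h1, Finset.sum_add_distrib, ← Finset.sum_mul,
        hSAdef, hSBdef]
      push_cast
      ring
    have hEqβ : (SA : ℝ) + (SB : ℝ) * β
        = ((yPair p m k).1 : ℝ) + ((yPair p m k).2 : ℝ) * β := by
      rw [← hpair β heq, hβsum, ← hrep]
      exact yPair_eval p m β heq k
    obtain ⟨hSA1, hSB1⟩ := unique_pair β hirr _ _ _ _ hEqβ
    have hγeq : ∑ j ∈ Finset.range (2 * n + 2 * k + 3), (c' j : ℝ) * γ ^ j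
        = -γ ^ (2 * k) + (m : ℝ) * ∑ i ∈ Finset.range k, γ ^ (2 * i) := by
      rw [hpair γ hγsq, hSA1, hSB1]
      exact (yPair_eval p m γ hγsq k).symm
    -- the reflected-conjugate equation: sum of g i * β^i vanishes
    have hpowA : β ^ (2 * n + 2 * k + 2) * γ ^ (2 * k) = β ^ (2 * n + 2) := by
      rw [show 2 * n + 2 * k + 2 = (2 * n + 2) + 2 * k from by omega, pow_add, mul_assoc,
        ← mul_pow, hβγ]
      rw [show (2 : ℕ) * k = k + k from by omega]
      rw [Even.neg_one_pow ⟨k, rfl⟩, mul_one]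
    have hs1 : ∑ i ∈ Finset.range (2 * n + 2 * k + 3),
          (-1 : ℝ) ^ (i + 1) * (c' (2 * n + 2 * k + 2 - i) : ℝ) * β ^ i
        = -(β ^ (2 * n + 2 * k + 2)
            * ∑ j ∈ Finset.range (2 * n + 2 * k + 3), (c' j : ℝ) * γ ^ j) := by
      rw [← Finset.sum_range_reflect
        (fun i => (-1 : ℝ) ^ (i + 1) * (c' (2 * n + 2 * k + 2 - i) : ℝ) * β ^ i)
        (2 * n + 2 * k + 3)]
      rw [Finset.mul_sum, ← Finset.sum_neg_distrib]
      apply Finset.sum_congr rfl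
      intro j hj
      have hj' : j ≤ 2 * n + 2 * k + 2 := by
        have := Finset.mem_range.mp hj; omega
      have e0 : 2 * n + 2 * k + 3 - 1 - j = 2 * n + 2 * k + 2 - j := by omega
      rw [e0, Nat.sub_sub_self hj']
      have h1 : β ^ (2 * n + 2 * k + 2) = β ^ (2 * n + 2 * k + 2 - j) * β ^ j := by
        rw [← pow_add]
        congr 1
        omega
      have h2 : β ^ j * γ ^ j = (-1 : ℝ) ^ j := by rw [← mul_pow, hβγ]
      have h3 : (-1 : ℝ) ^ (2 * n + 2 * k + 2 - j) * (-1 : ℝ) ^ j = 1 := by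
        rw [← pow_add, show 2 * n + 2 * k + 2 - j + j = 2 * n + 2 * k + 2 from by omega]
        exact Even.neg_one_pow ⟨n + k + 1, by ring⟩
      have h4 : (-1 : ℝ) ^ j * (-1 : ℝ) ^ j = 1 := by
        rw [← pow_add]
        exact Even.neg_one_pow ⟨j, rfl⟩
      have h5 : (-1 : ℝ) ^ (2 * n + 2 * k + 2 - j) = (-1 : ℝ) ^ j := by
        linear_combination (-1 : ℝ) ^ j * h3 - (-1 : ℝ) ^ (2 * n + 2 * k + 2 - j) * h4
      rw [pow_succ, h5, h1]
      linear_combination (c' j : ℝ) * β ^ (2 * n + 2 * k + 2 - j) * h2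
    have hs2 := mpart_sum β γ hγ2β2 (m : ℝ) n k
    have hs3 : ∑ i ∈ Finset.range (2 * n + 2 * k + 3),
          (if i = 2 * n + 2 then (1 : ℝ) else 0) * β ^ i = β ^ (2 * n + 2) := by
      have h1 : ∀ i ∈ Finset.range (2 * n + 2 * k + 3),
          (if i = 2 * n + 2 then (1 : ℝ) else 0) * β ^ i
            = if i = 2 * n + 2 then β ^ i else 0 := by
        intro i _
        split <;> simp
      rw [Finset.sum_congr rfl h1, Finset.sum_ite_eq' (Finset.range (2 * n + 2 * k + 3))
        (2 * n + 2) (fun i => β ^ i)]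
      rw [if_pos (Finset.mem_range.mpr (by omega))]
    have hgexpand : ∀ i, ((g i : ℝ)) * β ^ i
        = (-1 : ℝ) ^ (i + 1) * (c' (2 * n + 2 * k + 2 - i) : ℝ) * β ^ i
          + (if Even i ∧ 2 * n + 3 ≤ i then (m : ℝ) else 0) * β ^ i
          - (if i = 2 * n + 2 then (1 : ℝ) else 0) * β ^ i := by
      intro i
      rw [hgdef]
      dsimp only
      push_cast [apply_ite (fun z : ℤ => (z : ℝ))]
      ring
    have hsum0 : ∑ i ∈ Finset.range (2 * n + 2 * k + 3), (g i : ℝ) * β ^ i = 0 := by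
      rw [Finset.sum_congr rfl fun i _ => hgexpand i, Finset.sum_sub_distrib,
        Finset.sum_add_distrib, hs1, hs2, hs3, hγeq]
      linear_combination hpowA
    -- conclude that the top two carries vanish
    have hdiv0 : (tInt p g (2 * n + 2 * k + 2) : ℝ) + (tInt p g (2 * n + 2 * k + 1) : ℝ) * β
        = 0 := by
      have ht := tInt_telescope β p heq g (2 * n + 2 * k + 1)
      rw [show 2 * n + 2 * k + 1 + 2 = 2 * n + 2 * k + 3 from by omega, hsum0] at ht
      have hfac : ((tInt p g (2 * n + 2 * k + 2) : ℝ)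
            + (tInt p g (2 * n + 2 * k + 1) : ℝ) * β) * β ^ (2 * n + 2 * k + 2) = 0 := by
        rw [show 2 * n + 2 * k + 1 + 1 = 2 * n + 2 * k + 2 from by omega] at ht
        rw [show 2 * n + 2 * k + 1 + 2 = 2 * n + 2 * k + 3 from by omega] at ht
        have e : β ^ (2 * n + 2 * k + 3) = β ^ (2 * n + 2 * k + 2) * β := by
          rw [← pow_succ]
        rw [e] at ht
        linear_combination ht
      rcases mul_eq_zero.mp hfac with h | h
      · exact h
      · exact absurd h (by positivity)
    obtain ⟨htN1, htN⟩ := indep β hirr (tInt p g (2 * n + 2 * k + 2))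
      (tInt p g (2 * n + 2 * k + 1)) (by exact_mod_cast hdiv0)
    -- sign facts for g below the marked position
    have hgeven : ∀ j, j ≤ n → g (2 * j) ≤ 0 := by
      intro j hj
      rw [hgdef]
      dsimp only
      have h1 : ((-1 : ℤ)) ^ (2 * j + 1) = -1 := by
        rw [pow_succ, pow_mul]
        norm_num
      rw [h1, if_neg, if_neg]
      · linarith [Int.natCast_nonneg (c' (2 * n + 2 * k + 2 - 2 * j))]
      · omega
      · rintro ⟨-, h⟩; omega
    have hgodd : ∀ j, j ≤ n → 0 ≤ g (2 * j + 1) := by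
      intro j hj
      rw [hgdef]
      dsimp only
      have h1 : ((-1 : ℤ)) ^ (2 * j + 1 + 1) = 1 := by
        rw [show 2 * j + 1 + 1 = 2 * (j + 1) from by ring, pow_mul]
        norm_num
      rw [h1, if_neg, if_neg]
      · linarith [Int.natCast_nonneg (c' (2 * n + 2 * k + 2 - (2 * j + 1)))]
      · omega
      · rintro ⟨he, -⟩
        rw [Nat.even_iff] at he
        omega
    -- sign induction for the carries
    have hsign : ∀ j, j ≤ n → 0 ≤ tInt p g (2 * j) ∧ tInt p g (2 * j + 1) ≤ 0 := by
      intro j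
      induction j with
      | zero =>
        intro _
        have hg0 : g 0 ≤ 0 := by simpa using hgeven 0 (Nat.zero_le n)
        have hg1 : 0 ≤ g 1 := by simpa using hgodd 0 (Nat.zero_le n)
        constructor
        · rw [show 2 * 0 = 0 from rfl, tInt_zero]
          omega
        · rw [show 2 * 0 + 1 = 1 from rfl, tInt_one]
          nlinarith
      | succ j ih =>
        intro hj1
        have hj : j ≤ n := by omega
        obtain ⟨h2j, h2j1⟩ := ih hj
        have hge : g (2 * j + 2) ≤ 0 := by
          have := hgeven (j + 1) hj1
          rwa [show 2 * (j + 1) = 2 * j + 2 from by ring] at this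
        have hgo : 0 ≤ g (2 * j + 3) := by
          have := hgodd (j + 1) hj1
          rwa [show 2 * (j + 1) + 1 = 2 * j + 3 from by ring] at this
        have hA : 0 ≤ tInt p g (2 * j + 2) := by
          rw [tInt_two]
          nlinarith
        have hB : tInt p g (2 * j + 3) ≤ 0 := by
          rw [show 2 * j + 3 = (2 * j + 1) + 2 from by ring, tInt_two]
          rw [show 2 * j + 1 + 1 = 2 * j + 2 from by ring,
            show 2 * j + 1 + 2 = 2 * j + 3 from by ring]
          nlinarith
        constructor
        · rwa [show 2 * (j + 1) = 2 * j + 2 from by ring]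
        · rwa [show 2 * (j + 1) + 1 = 2 * j + 3 from by ring]
    -- the carry at the marked position is at least 1
    have htr : 1 ≤ tInt p g (2 * n + 2) := by
      have hgr : g (2 * n + 2) ≤ -1 := by
        rw [hgdef]
        dsimp only
        have h1 : ((-1 : ℤ)) ^ (2 * n + 2 + 1) = -1 := by
          rw [pow_succ, show 2 * n + 2 = 2 * (n + 1) from by ring, pow_mul]
          norm_num
        rw [h1, if_neg, if_pos rfl]
        · linarith [Int.natCast_nonneg (c' (2 * n + 2 * k + 2 - (2 * n + 2)))]
        · rintro ⟨-, h⟩; omega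
      obtain ⟨hA, hB⟩ := hsign n le_rfl
      rw [tInt_two p g (2 * n)]
      nlinarith
    -- the tail identity
    have htail : ∑ s ∈ Finset.range (2 * k), (g (2 * n + 3 + s) : ℝ) * β ^ (2 * n + 3 + s)
        = (tInt p g (2 * n + 2) : ℝ) * β ^ (2 * n + 2)
          + (tInt p g (2 * n + 1) : ℝ) * β ^ (2 * n + 3) := by
      have h1 : ∑ i ∈ Finset.Ico (2 * n + 3) (2 * n + 2 * k + 3), (g i : ℝ) * β ^ i
          = ∑ i ∈ Finset.range (2 * n + 2 * k + 3), (g i : ℝ) * β ^ i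
            - ∑ i ∈ Finset.range (2 * n + 3), (g i : ℝ) * β ^ i :=
        Finset.sum_Ico_eq_sub _ (by omega)
      have h2 := tInt_telescope β p heq g (2 * n + 1)
      rw [show 2 * n + 1 + 2 = 2 * n + 3 from by omega,
        show 2 * n + 1 + 1 = 2 * n + 2 from by omega] at h2
      rw [hsum0, h2] at h1
      have h3 : ∑ i ∈ Finset.Ico (2 * n + 3) (2 * n + 2 * k + 3), (g i : ℝ) * β ^ i
          = ∑ s ∈ Finset.range (2 * k), (g (2 * n + 3 + s) : ℝ) * β ^ (2 * n + 3 + s) := by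
        rw [Finset.sum_Ico_eq_sum_range,
          show 2 * n + 2 * k + 3 - (2 * n + 3) = 2 * k from by omega]
      rw [h3] at h1
      rw [h1]
      ring
    have htail2 : ∑ s ∈ Finset.range (2 * k), (g (2 * n + 3 + s) : ℝ) * β ^ (s + 1)
        = (tInt p g (2 * n + 2) : ℝ) + (tInt p g (2 * n + 1) : ℝ) * β := by
      have hpow : ∀ s : ℕ, β ^ (2 * n + 3 + s) = β ^ (s + 1) * β ^ (2 * n + 2) := by
        intro s
        rw [← pow_add]
        congr 1
        omega
      have h1 : (∑ s ∈ Finset.range (2 * k), (g (2 * n + 3 + s) : ℝ) * β ^ (s + 1))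
            * β ^ (2 * n + 2)
          = ((tInt p g (2 * n + 2) : ℝ) + (tInt p g (2 * n + 1) : ℝ) * β)
            * β ^ (2 * n + 2) := by
        rw [Finset.sum_mul]
        have h2 : ∀ s ∈ Finset.range (2 * k),
            (g (2 * n + 3 + s) : ℝ) * β ^ (s + 1) * β ^ (2 * n + 2)
              = (g (2 * n + 3 + s) : ℝ) * β ^ (2 * n + 3 + s) := by
          intro s _
          rw [hpow s]
          ring
        rw [Finset.sum_congr rfl h2, htail,
          show 2 * n + 3 = (2 * n + 2) + 1 from by omega, pow_succ]
        ring
      exact mul_right_cancel₀ (by positivity) h1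
    -- coordinates of the tail
    obtain ⟨TA, hTAdef⟩ : ∃ TA : ℤ,
        TA = ∑ s ∈ Finset.range (2 * k), g (2 * n + 3 + s) * (pairPow p (s + 1)).1 := ⟨_, rfl⟩
    obtain ⟨TB, hTBdef⟩ : ∃ TB : ℤ,
        TB = ∑ s ∈ Finset.range (2 * k), g (2 * n + 3 + s) * (pairPow p (s + 1)).2 := ⟨_, rfl⟩
    have hTpair : ∑ s ∈ Finset.range (2 * k), (g (2 * n + 3 + s) : ℝ) * β ^ (s + 1)
        = (TA : ℝ) + (TB : ℝ) * β := by
      have h1 : ∀ s ∈ Finset.range (2 * k), (g (2 * n + 3 + s) : ℝ) * β ^ (s + 1)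
          = (g (2 * n + 3 + s) : ℝ) * ((pairPow p (s + 1)).1 : ℝ)
            + ((g (2 * n + 3 + s) : ℝ) * ((pairPow p (s + 1)).2 : ℝ)) * β := by
        intro s _
        rw [pairPow_eval p β heq (s + 1)]
        ring
      rw [Finset.sum_congr rfl h1, Finset.sum_add_distrib, ← Finset.sum_mul,
        hTAdef, hTBdef]
      push_cast
      ring
    have hTeq : (TA : ℝ) + (TB : ℝ) * β
        = (tInt p g (2 * n + 2) : ℝ) + (tInt p g (2 * n + 1) : ℝ) * β := by
      rw [← hTpair, htail2]
    obtain ⟨hTA1, hTB1⟩ := unique_pair β hirr _ _ _ _ hTeq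
    -- nonnegativity of the tail coefficients
    have hgtail : ∀ s, s < 2 * k → 0 ≤ g (2 * n + 3 + s) := by
      intro s hs
      rw [hgdef]
      dsimp only
      rw [if_neg (by omega : ¬(2 * n + 3 + s = 2 * n + 2))]
      rcases Nat.even_or_odd s with he | ho
      · -- s even, so the position is odd
        obtain ⟨r, hr⟩ := he
        have h1 : ((-1 : ℤ)) ^ (2 * n + 3 + s + 1) = 1 := by
          rw [show 2 * n + 3 + s + 1 = 2 * (n + r + 2) from by omega, pow_mul]
          norm_num
        rw [h1, if_neg]
        · linarith [Int.natCast_nonneg (c' (2 * n + 2 * k + 2 - (2 * n + 3 + s)))]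
        · rintro ⟨hev, -⟩
          rw [Nat.even_iff] at hev
          omega
      · -- s odd, so the position is even and past the mark
        obtain ⟨r, hr⟩ := ho
        have h1 : ((-1 : ℤ)) ^ (2 * n + 3 + s + 1) = -1 := by
          rw [show 2 * n + 3 + s + 1 = 2 * (n + r + 2) + 1 from by omega, pow_succ, pow_mul]
          norm_num
        rw [h1, if_pos ⟨⟨n + r + 2, by omega⟩, by omega⟩]
        have hle : (c' (2 * n + 2 * k + 2 - (2 * n + 3 + s)) : ℤ) ≤ (m : ℤ) := by
          exact_mod_cast Nat.cast_le.mpr (hc'le _)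
        linarith
    -- final contradiction
    have hTBnn : 0 ≤ TB := by
      rw [hTBdef]
      apply Finset.sum_nonneg
      intro s hs
      exact mul_nonneg (hgtail s (Finset.mem_range.mp hs))
        (by linarith [pairPow_B_pos p hp s])
    have hTB0 : TB = 0 := by
      have : TB ≤ 0 := by rw [hTB1]; exact (hsign n le_rfl).2
      omega
    have hTB0' : ∑ s ∈ Finset.range (2 * k), g (2 * n + 3 + s) * (pairPow p (s + 1)).2
        = 0 := by
      rw [hTBdef] at hTB0
      exact hTB0
    have hterms : ∀ s ∈ Finset.range (2 * k),
        g (2 * n + 3 + s) * (pairPow p (s + 1)).2 = 0 :=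
      (Finset.sum_eq_zero_iff_of_nonneg fun s hs =>
        mul_nonneg (hgtail s (Finset.mem_range.mp hs))
          (by linarith [pairPow_B_pos p hp s])).mp hTB0'
    have hgz : ∀ s ∈ Finset.range (2 * k), g (2 * n + 3 + s) = 0 := by
      intro s hs
      have h := hterms s hs
      have hB := pairPow_B_pos p hp s
      rcases mul_eq_zero.mp h with h' | h'
      · exact h'
      · omega
    have hTA0 : TA = 0 := by
      rw [hTAdef]
      exact Finset.sum_eq_zero fun s hs => by rw [hgz s hs, zero_mul]
    rw [hTA1] at hTA0
    omega
end
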